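/- arXiv:1912.07168 — 9 statements merged into one kernel-verified Lean document; each statement's English description precedes it below -/
import Mathlib

section
/- Let c > 0, θ ∈ (0,1), x0 ∈ Ω and v0 ∈ ℝ^d. Then there exists t0 > 0 such that there is exactly one continuous function x : [0, t0] → ℝ^d with x(s) ∈ Ω for all s ∈ [0, t0] satisfying, for all t ∈ [0, t0], the integral equation x(t) = x0 + ∫₀ᵗ F(s) ds, where F(s) = −[√(Λ_θ(x(s))) / (∫₀ˢ √(Λ_θ(x(w))) dw + c)]·(2x(s) + ∫₀ˢ √(Λ_θ(x(w)))·(∫₀ʷ √(Λ_θ(x(u))) du + c)·∇Φ(x(w)) dw − v0) − Λ_θ(x(s))·∇Φ(x(s)). In particular this x is continuously differentiable on [0, t0] with x′(t) = F(t) and x(0) = x0. -/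
/-- `Λ_θ(x) = θ^{1/p} ‖∇Φ(x)‖^{-(p-1)/p}`. -/
noncomputable def LamTheta (d p : ℕ) (θ : ℝ) (Φ : EuclideanSpace ℝ (Fin d) → ℝ)
    (x : EuclideanSpace ℝ (Fin d)) : ℝ :=
  θ ^ (1 / (p : ℝ)) * ‖gradient Φ x‖ ^ (-(((p : ℝ) - 1) / (p : ℝ)))

/-- The vector field of the autonomous reformulation of the closed-loop control system. -/
noncomputable def Fvec (d p : ℕ) (θ c : ℝ) (Φ : EuclideanSpace ℝ (Fin d) → ℝ)
    (v0 : EuclideanSpace ℝ (Fin d)) (x : ℝ → EuclideanSpace ℝ (Fin d)) (s : ℝ) :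
    EuclideanSpace ℝ (Fin d) :=
  -((Real.sqrt (LamTheta d p θ Φ (x s)) /
        ((∫ w in (0:ℝ)..s, Real.sqrt (LamTheta d p θ Φ (x w))) + c)) •
      ((2 : ℝ) • x s +
        (∫ w in (0:ℝ)..s,
          (Real.sqrt (LamTheta d p θ Φ (x w)) *
            ((∫ u in (0:ℝ)..w, Real.sqrt (LamTheta d p θ Φ (x u))) + c)) •
            gradient Φ (x w)) - v0))
    - LamTheta d p θ Φ (x s) • gradient Φ (x s)


open Set intervalIntegral Topology Filter Metric

variable {d p : ℕ} {θ c : ℝ} {Φ : EuclideanSpace ℝ (Fin d) → ℝ}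
  {v0 : EuclideanSpace ℝ (Fin d)}

/-- accumulated integral of `√Λ` along a curve. -/
noncomputable def Avec (d p : ℕ) (θ : ℝ) (Φ : EuclideanSpace ℝ (Fin d) → ℝ)
    (y : ℝ → EuclideanSpace ℝ (Fin d)) (s : ℝ) : ℝ :=
  ∫ w in (0:ℝ)..s, Real.sqrt (LamTheta d p θ Φ (y w))

noncomputable def Bvec (d p : ℕ) (θ c : ℝ) (Φ : EuclideanSpace ℝ (Fin d) → ℝ)
    (y : ℝ → EuclideanSpace ℝ (Fin d)) (s : ℝ) : EuclideanSpace ℝ (Fin d) :=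
  ∫ w in (0:ℝ)..s,
    (Real.sqrt (LamTheta d p θ Φ (y w)) * (Avec d p θ Φ y w + c)) • gradient Φ (y w)

/-- The augmented autonomous vector field. -/
noncomputable def Gvec (d p : ℕ) (θ c : ℝ) (Φ : EuclideanSpace ℝ (Fin d) → ℝ)
    (v0 : EuclideanSpace ℝ (Fin d))
    (z : EuclideanSpace ℝ (Fin d) × ℝ × EuclideanSpace ℝ (Fin d)) :
    EuclideanSpace ℝ (Fin d) × ℝ × EuclideanSpace ℝ (Fin d) :=
  (-((Real.sqrt (LamTheta d p θ Φ z.1) / (z.2.1 + c)) •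
      ((2 : ℝ) • z.1 + z.2.2 - v0)) - LamTheta d p θ Φ z.1 • gradient Φ z.1,
   Real.sqrt (LamTheta d p θ Φ z.1),
   (Real.sqrt (LamTheta d p θ Φ z.1) * (z.2.1 + c)) • gradient Φ z.1)

theorem Fvec_eq (y : ℝ → EuclideanSpace ℝ (Fin d)) (s : ℝ) :
    Fvec d p θ c Φ v0 y s
      = (Gvec d p θ c Φ v0 (y s, Avec d p θ Φ y s, Bvec d p θ c Φ y s)).1 := rfl

theorem contDiff_gradient (hsmooth : ContDiff ℝ 2 Φ) : ContDiff ℝ 1 (gradient Φ) := by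
  have h1 : ContDiff ℝ 1 (fderiv ℝ Φ) := hsmooth.fderiv_right (by norm_num)
  exact ((InnerProductSpace.toDual ℝ _).symm : _ ≃ₗᵢ[ℝ] _).contDiff.comp h1

theorem contDiffAt_lam (hsmooth : ContDiff ℝ 2 Φ) {x : EuclideanSpace ℝ (Fin d)}
    (hx : gradient Φ x ≠ 0) : ContDiffAt ℝ 1 (LamTheta d p θ Φ) x := by
  have hn : ContDiffAt ℝ 1 (fun y => ‖gradient Φ y‖) x :=
    ContDiffAt.norm ℝ (contDiff_gradient hsmooth).contDiffAt hx
  exact contDiffAt_const.mul (hn.rpow_const_of_ne (norm_ne_zero_iff.mpr hx))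

theorem lam_pos (hθ : 0 < θ) {x : EuclideanSpace ℝ (Fin d)} (hx : gradient Φ x ≠ 0) :
    0 < LamTheta d p θ Φ x :=
  mul_pos (Real.rpow_pos_of_pos hθ _)
    (Real.rpow_pos_of_pos (norm_pos_iff.mpr hx) _)

theorem contDiffAt_sqrt_lam (hθ : 0 < θ) (hsmooth : ContDiff ℝ 2 Φ)
    {x : EuclideanSpace ℝ (Fin d)} (hx : gradient Φ x ≠ 0) :
    ContDiffAt ℝ 1 (fun y => Real.sqrt (LamTheta d p θ Φ y)) x :=
  (contDiffAt_lam hsmooth hx).sqrt (ne_of_gt (lam_pos hθ hx))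

theorem contDiffAt_Gvec (hθ : 0 < θ) (hsmooth : ContDiff ℝ 2 Φ)
    {z : EuclideanSpace ℝ (Fin d) × ℝ × EuclideanSpace ℝ (Fin d)}
    (hz1 : gradient Φ z.1 ≠ 0) (hz2 : z.2.1 + c ≠ 0) :
    ContDiffAt ℝ 1 (Gvec d p θ c Φ v0) z := by
  have hfst : ContDiffAt ℝ 1 (fun w : EuclideanSpace ℝ (Fin d) × ℝ ×
      EuclideanSpace ℝ (Fin d) => w.1) z := contDiffAt_fst
  have hσ : ContDiffAt ℝ 1
      (fun w : EuclideanSpace ℝ (Fin d) × ℝ × EuclideanSpace ℝ (Fin d) =>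
        Real.sqrt (LamTheta d p θ Φ w.1)) z :=
    (contDiffAt_sqrt_lam hθ hsmooth hz1).comp z hfst
  have hlam : ContDiffAt ℝ 1
      (fun w : EuclideanSpace ℝ (Fin d) × ℝ × EuclideanSpace ℝ (Fin d) =>
        LamTheta d p θ Φ w.1) z :=
    (contDiffAt_lam hsmooth hz1).comp z hfst
  have hg : ContDiffAt ℝ 1
      (fun w : EuclideanSpace ℝ (Fin d) × ℝ × EuclideanSpace ℝ (Fin d) =>
        gradient Φ w.1) z :=
    ((contDiff_gradient hsmooth).contDiffAt).comp z hfst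
  have ha : ContDiffAt ℝ 1
      (fun w : EuclideanSpace ℝ (Fin d) × ℝ × EuclideanSpace ℝ (Fin d) =>
        w.2.1 + c) z := (contDiffAt_snd.fst).add contDiffAt_const
  have hb : ContDiffAt ℝ 1
      (fun w : EuclideanSpace ℝ (Fin d) × ℝ × EuclideanSpace ℝ (Fin d) =>
        w.2.2) z := contDiffAt_snd.snd
  refine ContDiffAt.prodMk ?_ (ContDiffAt.prodMk hσ ?_)
  · exact ((hσ.div ha hz2).smul ((((contDiffAt_const (c := (2:ℝ))).smul hfst).add hb).sub
      (contDiffAt_const (c := v0)))).neg.sub (hlam.smul hg)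
  · exact (hσ.mul ha).smul hg
theorem hasDerivWithinAt_primitive0 {V : Type*} [NormedAddCommGroup V] [NormedSpace ℝ V]
    [CompleteSpace V] {T : ℝ} {h : ℝ → V} (hcont : ContinuousOn h (Icc 0 T))
    {t : ℝ} (ht : t ∈ Icc 0 T) :
    HasDerivWithinAt (fun u => ∫ s in (0:ℝ)..u, h s) (h t) (Icc 0 T) t := by
  haveI : Fact (t ∈ Icc (0:ℝ) T) := ⟨ht⟩
  refine intervalIntegral.integral_hasDerivWithinAt_right
    ((hcont.mono ?_).intervalIntegrable)
    (hcont.stronglyMeasurableAtFilter_nhdsWithin measurableSet_Icc t)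
    (hcont t ht)
  rw [uIcc_of_le ht.1]
  exact Icc_subset_Icc le_rfl ht.2

theorem sol_facts (hθ : 0 < θ) (hsmooth : ContDiff ℝ 2 Φ) (hc : 0 < c)
    {t0 : ℝ} (ht0 : 0 ≤ t0) {x0 : EuclideanSpace ℝ (Fin d)}
    {y : ℝ → EuclideanSpace ℝ (Fin d)}
    (hy : ContinuousOn y (Icc 0 t0))
    (hΩ : ∀ s ∈ Icc (0:ℝ) t0, gradient Φ (y s) ≠ 0)
    (hie : ∀ t ∈ Icc (0:ℝ) t0, y t = x0 + ∫ s in (0:ℝ)..t, Fvec d p θ c Φ v0 y s) :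
    (∀ s ∈ Icc (0:ℝ) t0, 0 ≤ Avec d p θ Φ y s) ∧
    ContinuousOn (fun s => (y s, Avec d p θ Φ y s, Bvec d p θ c Φ y s)) (Icc 0 t0) ∧
    (∀ t ∈ Icc (0:ℝ) t0,
      HasDerivWithinAt (fun s => (y s, Avec d p θ Φ y s, Bvec d p θ c Φ y s))
        (Gvec d p θ c Φ v0 (y t, Avec d p θ Φ y t, Bvec d p θ c Φ y t)) (Icc 0 t0) t) ∧
    (∀ t ∈ Icc (0:ℝ) t0, HasDerivWithinAt y (Fvec d p θ c Φ v0 y t) (Icc 0 t0) t) ∧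
    ContinuousOn (fun s => Fvec d p θ c Φ v0 y s) (Icc 0 t0) ∧
    y 0 = x0 := by
  have hσc : ContinuousOn (fun s => Real.sqrt (LamTheta d p θ Φ (y s))) (Icc 0 t0) :=
    fun s hs => ((contDiffAt_sqrt_lam hθ hsmooth (hΩ s hs)).continuousAt).comp_continuousWithinAt
      (hy s hs)
  have hA_deriv : ∀ t ∈ Icc (0:ℝ) t0,
      HasDerivWithinAt (Avec d p θ Φ y) (Real.sqrt (LamTheta d p θ Φ (y t))) (Icc 0 t0) t :=
    fun t ht => hasDerivWithinAt_primitive0 hσc ht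
  have hAcont : ContinuousOn (Avec d p θ Φ y) (Icc 0 t0) :=
    fun t ht => (hA_deriv t ht).continuousWithinAt
  have hA_nonneg : ∀ s ∈ Icc (0:ℝ) t0, 0 ≤ Avec d p θ Φ y s := fun s hs =>
    intervalIntegral.integral_nonneg hs.1 (fun u _ => Real.sqrt_nonneg _)
  have hApos : ∀ s ∈ Icc (0:ℝ) t0, 0 < Avec d p θ Φ y s + c := fun s hs =>
    add_pos_of_nonneg_of_pos (hA_nonneg s hs) hc
  have hgc : ContinuousOn (fun s => gradient Φ (y s)) (Icc 0 t0) :=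
    (contDiff_gradient hsmooth).continuous.comp_continuousOn hy
  have hBintc : ContinuousOn
      (fun w => (Real.sqrt (LamTheta d p θ Φ (y w)) * (Avec d p θ Φ y w + c)) •
        gradient Φ (y w)) (Icc 0 t0) :=
    (hσc.mul (hAcont.add continuousOn_const)).smul hgc
  have hB_deriv : ∀ t ∈ Icc (0:ℝ) t0,
      HasDerivWithinAt (Bvec d p θ c Φ y)
        ((Real.sqrt (LamTheta d p θ Φ (y t)) * (Avec d p θ Φ y t + c)) • gradient Φ (y t))
        (Icc 0 t0) t :=
    fun t ht => hasDerivWithinAt_primitive0 hBintc ht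
  have hBcont : ContinuousOn (Bvec d p θ c Φ y) (Icc 0 t0) :=
    fun t ht => (hB_deriv t ht).continuousWithinAt
  have hzcont : ContinuousOn
      (fun s => (y s, Avec d p θ Φ y s, Bvec d p θ c Φ y s)) (Icc 0 t0) :=
    hy.prodMk (hAcont.prodMk hBcont)
  have hGzc : ContinuousOn
      (fun s => Gvec d p θ c Φ v0 (y s, Avec d p θ Φ y s, Bvec d p θ c Φ y s)) (Icc 0 t0) :=
    fun s hs => ((contDiffAt_Gvec hθ hsmooth (hΩ s hs)
      (ne_of_gt (hApos s hs))).continuousAt).comp_continuousWithinAt (hzcont s hs)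
  have hFc : ContinuousOn (fun s => Fvec d p θ c Φ v0 y s) (Icc 0 t0) := by
    have := continuous_fst.comp_continuousOn hGzc
    exact this
  have hy_deriv : ∀ t ∈ Icc (0:ℝ) t0,
      HasDerivWithinAt y (Fvec d p θ c Φ v0 y t) (Icc 0 t0) t := by
    intro t ht
    have hH : HasDerivWithinAt (fun u => x0 + ∫ s in (0:ℝ)..u, Fvec d p θ c Φ v0 y s)
        (Fvec d p θ c Φ v0 y t) (Icc 0 t0) t :=
      (hasDerivWithinAt_primitive0 hFc ht).const_add x0
    exact hH.congr (fun u hu => hie u hu) (hie t ht)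
  have hz_deriv : ∀ t ∈ Icc (0:ℝ) t0,
      HasDerivWithinAt (fun s => (y s, Avec d p θ Φ y s, Bvec d p θ c Φ y s))
        (Gvec d p θ c Φ v0 (y t, Avec d p θ Φ y t, Bvec d p θ c Φ y t)) (Icc 0 t0) t := by
    intro t ht
    exact (hy_deriv t ht).prodMk ((hA_deriv t ht).prodMk (hB_deriv t ht))
  have hy0 : y 0 = x0 := by
    have := hie 0 ⟨le_rfl, ht0⟩
    simpa using this
  exact ⟨hA_nonneg, hzcont, hz_deriv, hy_deriv, hFc, hy0⟩
theorem sol_unique (hθ : 0 < θ) (hsmooth : ContDiff ℝ 2 Φ) (hc : 0 < c)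
    {t0 : ℝ} (ht0 : 0 ≤ t0) {x0 : EuclideanSpace ℝ (Fin d)}
    {y₁ y₂ : ℝ → EuclideanSpace ℝ (Fin d)}
    (hy₁ : ContinuousOn y₁ (Icc 0 t0))
    (hΩ₁ : ∀ s ∈ Icc (0:ℝ) t0, gradient Φ (y₁ s) ≠ 0)
    (hie₁ : ∀ t ∈ Icc (0:ℝ) t0, y₁ t = x0 + ∫ s in (0:ℝ)..t, Fvec d p θ c Φ v0 y₁ s)
    (hy₂ : ContinuousOn y₂ (Icc 0 t0))
    (hΩ₂ : ∀ s ∈ Icc (0:ℝ) t0, gradient Φ (y₂ s) ≠ 0)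
    (hie₂ : ∀ t ∈ Icc (0:ℝ) t0, y₂ t = x0 + ∫ s in (0:ℝ)..t, Fvec d p θ c Φ v0 y₂ s) :
    EqOn y₁ y₂ (Icc 0 t0) := by
  obtain ⟨hA1, hz1c, hz1d, -, -, hy10⟩ := sol_facts hθ hsmooth hc ht0 hy₁ hΩ₁ hie₁
  obtain ⟨hA2, hz2c, hz2d, -, -, hy20⟩ := sol_facts hθ hsmooth hc ht0 hy₂ hΩ₂ hie₂
  set z₁ := fun s => (y₁ s, Avec d p θ Φ y₁ s, Bvec d p θ c Φ y₁ s) with hz₁def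
  set z₂ := fun s => (y₂ s, Avec d p θ Φ y₂ s, Bvec d p θ c Φ y₂ s) with hz₂def
  have hz0eq : z₁ 0 = z₂ 0 := by
    simp only [hz₁def, hz₂def, Avec, Bvec, intervalIntegral.integral_same, hy10, hy20]
  set S := {T | T ∈ Icc (0:ℝ) t0 ∧ EqOn z₁ z₂ (Icc 0 T)} with hSdef
  have h0S : (0:ℝ) ∈ S := by
    refine ⟨⟨le_rfl, ht0⟩, fun s hs => ?_⟩
    have : s = 0 := le_antisymm hs.2 hs.1
    rw [this]; exact hz0eq
  have hbdd : BddAbove S := ⟨t0, fun T hT => hT.1.2⟩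
  set T := sSup S with hTdef
  have hT0 : 0 ≤ T := le_csSup hbdd h0S
  have hTt0 : T ≤ t0 := csSup_le ⟨0, h0S⟩ (fun T hT => hT.1.2)
  have hTmem : T ∈ Icc (0:ℝ) t0 := ⟨hT0, hTt0⟩
  have hlt : ∀ u ∈ Ico (0:ℝ) T, z₁ u = z₂ u := by
    intro u hu
    obtain ⟨T', hT'S, hT'⟩ := exists_lt_of_lt_csSup ⟨0, h0S⟩ hu.2
    exact hT'S.2 ⟨hu.1, le_of_lt hT'⟩
  have hEqT : EqOn z₁ z₂ (Icc 0 T) := by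
    intro s hs
    rcases lt_or_eq_of_le hs.2 with h | h
    · exact hlt s ⟨hs.1, h⟩
    · subst h
      rcases eq_or_lt_of_le hT0 with h0 | h0
      · rw [← h0]; exact hz0eq
      · haveI : (𝓝[Ico (0:ℝ) T] T).NeBot := right_nhdsWithin_Ico_neBot h0
        have hsub : Ico (0:ℝ) T ⊆ Icc 0 t0 :=
          fun u hu => ⟨hu.1, le_trans (le_of_lt hu.2) hTt0⟩
        have h1 : Filter.Tendsto z₁ (𝓝[Ico (0:ℝ) T] T) (𝓝 (z₁ T)) :=
          (hz1c T hTmem).mono_left (nhdsWithin_mono _ hsub)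
        have h2 : Filter.Tendsto z₂ (𝓝[Ico (0:ℝ) T] T) (𝓝 (z₂ T)) :=
          (hz2c T hTmem).mono_left (nhdsWithin_mono _ hsub)
        have h2' : Filter.Tendsto z₁ (𝓝[Ico (0:ℝ) T] T) (𝓝 (z₂ T)) := by
          refine h2.congr' ?_
          filter_upwards [self_mem_nhdsWithin] with u hu using (hlt u hu).symm
        exact tendsto_nhds_unique h1 h2'
  have hTfin : T = t0 := by
    by_contra hne
    have hTlt : T < t0 := lt_of_le_of_ne hTt0 hne
    have hgT : gradient Φ (y₁ T) ≠ 0 := hΩ₁ T hTmem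
    have haT : Avec d p θ Φ y₁ T + c ≠ 0 :=
      ne_of_gt (add_pos_of_nonneg_of_pos (hA1 T hTmem) hc)
    obtain ⟨K, sn, hsn, hlip⟩ :=
      (contDiffAt_Gvec (v0 := v0) (z := z₁ T) hθ hsmooth hgT haT).exists_lipschitzOnWith
    obtain ⟨r, hr, hball⟩ := Metric.mem_nhds_iff.mp hsn
    have hlip' : LipschitzOnWith K (Gvec d p θ c Φ v0) (Metric.ball (z₁ T) r) :=
      hlip.mono hball
    have hz2T : z₂ T = z₁ T := (hEqT ⟨hT0, le_rfl⟩).symm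
    have hmem1 : z₁ ⁻¹' (Metric.ball (z₁ T) r) ∈ 𝓝[Icc (0:ℝ) t0] T :=
      (hz1c T hTmem) (Metric.ball_mem_nhds _ hr)
    have hmem2 : z₂ ⁻¹' (Metric.ball (z₁ T) r) ∈ 𝓝[Icc (0:ℝ) t0] T := by
      apply (hz2c T hTmem)
      rw [hz2T]
      exact Metric.ball_mem_nhds _ hr
    obtain ⟨U, hUopen, hTU, hUsub⟩ := mem_nhdsWithin.mp (Filter.inter_mem hmem1 hmem2)
    obtain ⟨δ, hδ, hballδ⟩ := Metric.isOpen_iff.mp hUopen T hTU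
    set δ' := min (δ / 2) (t0 - T) with hδ'def
    have hδ' : 0 < δ' := lt_min (by linarith) (by linarith)
    have hIccsub : Icc T (T + δ') ⊆ Icc (0:ℝ) t0 := by
      intro u hu
      constructor
      · linarith [hu.1]
      · have : T + δ' ≤ t0 := by
          have := min_le_right (δ / 2) (t0 - T); linarith
        linarith [hu.2]
    have hsubV : ∀ u ∈ Icc T (T + δ'),
        z₁ u ∈ Metric.ball (z₁ T) r ∧ z₂ u ∈ Metric.ball (z₁ T) r := by
      intro u hu
      have huU : u ∈ U := by
        apply hballδ
        rw [Metric.mem_ball, Real.dist_eq, abs_sub_lt_iff]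
        have h1 := hu.1; have h2 := hu.2
        have : δ' ≤ δ / 2 := min_le_left _ _
        constructor <;> linarith
      exact hUsub ⟨huU, hIccsub hu⟩
    have hICI : ∀ t ∈ Ico T (T + δ'), Icc (0:ℝ) t0 ∈ 𝓝[Ici t] t := by
      intro t ht
      refine mem_nhdsWithin.mpr ⟨Iio t0, isOpen_Iio, ?_, ?_⟩
      · have : T + δ' ≤ t0 := by
          have := min_le_right (δ / 2) (t0 - T); linarith
        exact lt_of_lt_of_le ht.2 this
      · intro u hu
        exact ⟨le_trans hT0 (le_trans ht.1 hu.2), le_of_lt hu.1⟩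
    have huniq : EqOn z₁ z₂ (Icc T (T + δ')) := by
      refine ODE_solution_unique_of_mem_Icc_right
        (v := fun _ => Gvec d p θ c Φ v0)
        (s := fun _ => Metric.ball (z₁ T) r) (K := K)
        (fun _ _ => hlip') (hz1c.mono hIccsub)
        (fun t ht => (hz1d t (hIccsub (Ico_subset_Icc_self ht))).mono_of_mem_nhdsWithin
          (hICI t ht))
        (fun t ht => (hsubV t (Ico_subset_Icc_self ht)).1)
        (hz2c.mono hIccsub)
        (fun t ht => (hz2d t (hIccsub (Ico_subset_Icc_self ht))).mono_of_mem_nhdsWithin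
          (hICI t ht))
        (fun t ht => (hsubV t (Ico_subset_Icc_self ht)).2)
        hz2T.symm
    have hTS : T + δ' ∈ S := by
      refine ⟨hIccsub ⟨le_add_of_nonneg_right hδ'.le, le_rfl⟩, ?_⟩
      intro u hu
      rcases le_total u T with h | h
      · exact hEqT ⟨hu.1, h⟩
      · exact huniq ⟨h, hu.2⟩
    have : T + δ' ≤ T := le_csSup hbdd hTS
    linarith
  have key : EqOn z₁ z₂ (Icc 0 t0) := hTfin ▸ hEqT
  exact fun s hs => congrArg Prod.fst (key hs)

/-- existence and uniqueness of a local solution of the integral equation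
`x(t) = x0 + ∫₀ᵗ F(s) ds`; in particular the solution is `C¹` with `x' = F` and
`x(0) = x0`. -/
theorem stmt_3 (d p : ℕ) (hd : 1 ≤ d) (hp : 1 ≤ p) (θ c : ℝ)
    (hθ : θ ∈ Set.Ioo (0:ℝ) 1) (hc : 0 < c)
    (Φ : EuclideanSpace ℝ (Fin d) → ℝ)
    (hconv : ConvexOn ℝ Set.univ Φ) (hsmooth : ContDiff ℝ 2 Φ)
    (hmin : ∃ z, ∀ y, Φ z ≤ Φ y)
    (x0 v0 : EuclideanSpace ℝ (Fin d)) (hx0 : gradient Φ x0 ≠ 0) :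
    ∃ t0 > (0:ℝ), ∃ x : ℝ → EuclideanSpace ℝ (Fin d),
      -- the solution: continuous, stays in Ω, satisfies the integral equation
      (ContinuousOn x (Set.Icc 0 t0) ∧
        (∀ s ∈ Set.Icc (0:ℝ) t0, gradient Φ (x s) ≠ 0) ∧
        (∀ t ∈ Set.Icc (0:ℝ) t0, x t = x0 + ∫ s in (0:ℝ)..t, Fvec d p θ c Φ v0 x s)) ∧
      -- in particular: x(0) = x0 and x is continuously differentiable with x' = F
      x 0 = x0 ∧
      (∀ t ∈ Set.Icc (0:ℝ) t0,
        HasDerivWithinAt x (Fvec d p θ c Φ v0 x t) (Set.Icc 0 t0) t) ∧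
      ContinuousOn (fun t => Fvec d p θ c Φ v0 x t) (Set.Icc 0 t0) ∧
      -- uniqueness among continuous Ω-valued solutions of the integral equation
      ∀ y : ℝ → EuclideanSpace ℝ (Fin d),
        (ContinuousOn y (Set.Icc 0 t0) ∧
          (∀ s ∈ Set.Icc (0:ℝ) t0, gradient Φ (y s) ≠ 0) ∧
          (∀ t ∈ Set.Icc (0:ℝ) t0, y t = x0 + ∫ s in (0:ℝ)..t, Fvec d p θ c Φ v0 y s)) →
        Set.EqOn y x (Set.Icc 0 t0) := by

  obtain ⟨hθ0, -⟩ := hθ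
  set G := Gvec d p θ c Φ v0 with hGdef
  have hG : ContDiffAt ℝ 1 G ((x0, (0:ℝ), (0:EuclideanSpace ℝ (Fin d)))) :=
    contDiffAt_Gvec (z := (x0, 0, 0)) hθ0 hsmooth hx0 (by simpa using hc.ne')
  obtain ⟨f, hf0, ε, hε, hfd⟩ := hG.exists_forall_mem_closedBall_exists_eq_forall_mem_Ioo_hasDerivAt₀ (0:ℝ)
  have h0mem : (0:ℝ) ∈ Ioo (0 - ε) (0 + ε) := by constructor <;> simp [hε]
  have hfc0 : ContinuousAt f 0 := (hfd 0 h0mem).continuousAt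
  have hgc : ContinuousAt (fun t => gradient Φ (f t).1) 0 :=
    ((contDiff_gradient hsmooth).continuous.continuousAt).comp
      (continuous_fst.continuousAt.comp hfc0)
  have hev : ∀ᶠ t in 𝓝 (0:ℝ), gradient Φ (f t).1 ≠ 0 :=
    hgc.eventually_ne (by rw [hf0]; exact hx0)
  obtain ⟨δ, hδpos, hδ⟩ := Metric.eventually_nhds_iff_ball.mp hev
  set t0 := min (ε / 2) (δ / 2) with ht0def
  have ht0pos : 0 < t0 := lt_min (by linarith) (by linarith)
  have hsubIoo : Icc (0:ℝ) t0 ⊆ Ioo (0 - ε) (0 + ε) := by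
    intro u hu
    have h1 : t0 ≤ ε / 2 := min_le_left _ _
    constructor <;> [skip; skip] <;> simp only [zero_sub, zero_add] <;>
      [linarith [hu.1]; linarith [hu.2]]
  set x := fun t => (f t).1 with hxdef
  set a := fun t => (f t).2.1 with hadef
  set b := fun t => (f t).2.2 with hbdef
  have hΩx : ∀ s ∈ Icc (0:ℝ) t0, gradient Φ (x s) ≠ 0 := by
    intro s hs
    apply hδ
    rw [Metric.mem_ball, Real.dist_eq, sub_zero, abs_of_nonneg hs.1]
    have h2 : t0 ≤ δ / 2 := min_le_right _ _
    linarith [hs.2]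
  have hderiv : ∀ t ∈ Icc (0:ℝ) t0, HasDerivAt f (G (f t)) t :=
    fun t ht => hfd t (hsubIoo ht)
  have hxd : ∀ t ∈ Icc (0:ℝ) t0, HasDerivAt x ((G (f t)).1) t := by
    intro t ht
    exact ((ContinuousLinearMap.fst ℝ (EuclideanSpace ℝ (Fin d))
      (ℝ × EuclideanSpace ℝ (Fin d))).hasFDerivAt).comp_hasDerivAt t (hderiv t ht)
  have had : ∀ t ∈ Icc (0:ℝ) t0, HasDerivAt a ((G (f t)).2.1) t := by
    intro t ht
    exact (((ContinuousLinearMap.fst ℝ ℝ (EuclideanSpace ℝ (Fin d))).comp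
      (ContinuousLinearMap.snd ℝ (EuclideanSpace ℝ (Fin d))
        (ℝ × EuclideanSpace ℝ (Fin d)))).hasFDerivAt).comp_hasDerivAt t (hderiv t ht)
  have hbd : ∀ t ∈ Icc (0:ℝ) t0, HasDerivAt b ((G (f t)).2.2) t := by
    intro t ht
    exact (((ContinuousLinearMap.snd ℝ ℝ (EuclideanSpace ℝ (Fin d))).comp
      (ContinuousLinearMap.snd ℝ (EuclideanSpace ℝ (Fin d))
        (ℝ × EuclideanSpace ℝ (Fin d)))).hasFDerivAt).comp_hasDerivAt t (hderiv t ht)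
  have hxc : ContinuousOn x (Icc 0 t0) :=
    fun s hs => ((hxd s hs).continuousAt).continuousWithinAt
  have hsub' : ∀ t ∈ Icc (0:ℝ) t0, Icc (0:ℝ) t ⊆ Icc (0:ℝ) t0 :=
    fun t ht => Icc_subset_Icc le_rfl ht.2
  have hσxc : ContinuousOn (fun s => Real.sqrt (LamTheta d p θ Φ (x s))) (Icc 0 t0) :=
    fun s hs => ((contDiffAt_sqrt_lam hθ0 hsmooth (hΩx s hs)).continuousAt.comp
      ((hxd s hs).continuousAt)).continuousWithinAt
  have ha0 : a 0 = 0 := by show (f 0).2.1 = 0; rw [hf0]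
  have hb0 : b 0 = 0 := by show (f 0).2.2 = 0; rw [hf0]
  have hx00 : x 0 = x0 := by show (f 0).1 = x0; rw [hf0]
  have ha_eq : ∀ t ∈ Icc (0:ℝ) t0, a t = Avec d p θ Φ x t := by
    intro t ht
    have huIcc : uIcc (0:ℝ) t = Icc 0 t := uIcc_of_le ht.1
    have hint : IntervalIntegrable (fun s => Real.sqrt (LamTheta d p θ Φ (x s)))
        MeasureTheory.volume 0 t := by
      apply ContinuousOn.intervalIntegrable
      rw [huIcc]; exact hσxc.mono (hsub' t ht)
    have := intervalIntegral.integral_eq_sub_of_hasDerivAt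
      (f := a) (f' := fun s => Real.sqrt (LamTheta d p θ Φ (x s)))
      (fun s hs => had s (hsub' t ht (huIcc ▸ hs))) hint
    rw [ha0, sub_zero] at this
    exact this.symm
  have haA : ∀ s ∈ Icc (0:ℝ) t0, 0 ≤ a s := by
    intro s hs
    rw [ha_eq s hs]
    exact intervalIntegral.integral_nonneg hs.1 (fun u _ => Real.sqrt_nonneg _)
  have hacne : ∀ s ∈ Icc (0:ℝ) t0, a s + c ≠ 0 :=
    fun s hs => ne_of_gt (add_pos_of_nonneg_of_pos (haA s hs) hc)
  have hac : ContinuousOn a (Icc 0 t0) :=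
    fun s hs => ((had s hs).continuousAt).continuousWithinAt
  have hgxc : ContinuousOn (fun s => gradient Φ (x s)) (Icc 0 t0) :=
    (contDiff_gradient hsmooth).continuous.comp_continuousOn hxc
  have hb_eq : ∀ t ∈ Icc (0:ℝ) t0, b t = Bvec d p θ c Φ x t := by
    intro t ht
    have huIcc : uIcc (0:ℝ) t = Icc 0 t := uIcc_of_le ht.1
    have hintc : ContinuousOn
        (fun s => (Real.sqrt (LamTheta d p θ Φ (x s)) * (a s + c)) • gradient Φ (x s))
        (Icc 0 t0) := (hσxc.mul (hac.add continuousOn_const)).smul hgxc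
    have hint : IntervalIntegrable
        (fun s => (Real.sqrt (LamTheta d p θ Φ (x s)) * (a s + c)) • gradient Φ (x s))
        MeasureTheory.volume 0 t := by
      apply ContinuousOn.intervalIntegrable
      rw [huIcc]; exact hintc.mono (hsub' t ht)
    have hkey := intervalIntegral.integral_eq_sub_of_hasDerivAt
      (f := b) (f' := fun s =>
        (Real.sqrt (LamTheta d p θ Φ (x s)) * (a s + c)) • gradient Φ (x s))
      (fun s hs => hbd s (hsub' t ht (huIcc ▸ hs))) hint
    rw [hb0, sub_zero] at hkey
    rw [Bvec, ← hkey]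
    apply intervalIntegral.integral_congr
    intro s hs
    rw [huIcc] at hs
    simp only
    rw [ha_eq s (hsub' t ht hs)]
  have hFvec_eq : ∀ s ∈ Icc (0:ℝ) t0, Fvec d p θ c Φ v0 x s = (G (f s)).1 := by
    intro s hs
    rw [Fvec_eq, hGdef]
    show _ = (Gvec d p θ c Φ v0 (x s, a s, b s)).1
    rw [ha_eq s hs, hb_eq s hs]
  have hie : ∀ t ∈ Icc (0:ℝ) t0, x t = x0 + ∫ s in (0:ℝ)..t, Fvec d p θ c Φ v0 x s := by
    intro t ht
    have huIcc : uIcc (0:ℝ) t = Icc 0 t := uIcc_of_le ht.1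
    have hGc : ContinuousOn (fun s => (G (f s)).1) (Icc 0 t0) := by
      intro s hs
      refine ContinuousAt.continuousWithinAt ?_
      exact continuous_fst.continuousAt.comp
        (((contDiffAt_Gvec (z := f s) hθ0 hsmooth (hΩx s hs) (hacne s hs)).continuousAt).comp
          ((hderiv s hs).continuousAt))
    have hint : IntervalIntegrable (fun s => (G (f s)).1) MeasureTheory.volume 0 t := by
      apply ContinuousOn.intervalIntegrable
      rw [huIcc]; exact hGc.mono (hsub' t ht)
    have hkey := intervalIntegral.integral_eq_sub_of_hasDerivAt
      (f := x) (f' := fun s => (G (f s)).1)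
      (fun s hs => hxd s (hsub' t ht (huIcc ▸ hs))) hint
    rw [hx00] at hkey
    have hcongr : (∫ s in (0:ℝ)..t, Fvec d p θ c Φ v0 x s) = ∫ s in (0:ℝ)..t, (G (f s)).1 := by
      apply intervalIntegral.integral_congr
      intro s hs
      rw [huIcc] at hs
      exact hFvec_eq s (hsub' t ht hs)
    rw [hcongr, hkey]
    abel
  obtain ⟨-, -, -, hxd', hFc, -⟩ := sol_facts hθ0 hsmooth hc ht0pos.le hxc hΩx hie
  refine ⟨t0, ht0pos, x, ⟨hxc, hΩx, hie⟩, hx00, hxd', hFc, ?_⟩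
  intro y hy
  exact sol_unique hθ0 hsmooth hc ht0pos.le hy.1 hy.2.1 hy.2.2 hxc hΩx hie
end

section
/- Let t0 > 0 and suppose (x, v, λ) with a(t) = (1/4)(∫₀ᵗ √(λ(s)) ds + c)² is a solution of the first-order system (FO) on [0, t0]. Then for every t ∈ [0, t0], the Lyapunov function E is differentiable at t and E′(t) ≤ −a(t)·θ^{1/p}·‖∇Φ(x(t))‖^{(p+1)/p}. -/
open Set Filter Topology MeasureTheory

section helpers

theorem grad_convex_ineq {E : Type*} [NormedAddCommGroup E] [InnerProductSpace ℝ E]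
    [CompleteSpace E] {Φ : E → ℝ} (hconv : ConvexOn ℝ Set.univ Φ)
    (hdiff : ∀ z, DifferentiableAt ℝ Φ z) (z y : E) :
    Φ z + inner ℝ (gradient Φ z) (y - z) ≤ Φ y := by
  rcases eq_or_ne y z with rfl | hyz
  · simp
  · set φ : ℝ → ℝ := fun s => Φ (AffineMap.lineMap z y s) with hφ
    have hφconv : ConvexOn ℝ Set.univ φ := by
      have := hconv.comp_affineMap (AffineMap.lineMap z y : ℝ →ᵃ[ℝ] E)
      simpa [hφ, Function.comp_def] using this.subset (by simp) convex_univ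
    have hline : ∀ s : ℝ, HasDerivAt (fun u : ℝ => AffineMap.lineMap z y u) (y - z) s := by
      intro s
      have : HasDerivAt (fun u : ℝ => z + u • (y - z)) (y - z) s := by
        simpa using ((hasDerivAt_id s).smul_const (y - z)).const_add z
      simpa [AffineMap.lineMap_apply, add_comm, vsub_eq_sub, vadd_eq_add] using this
    have hφd : HasDerivAt φ (inner ℝ (gradient Φ z) (y - z)) 0 := by
      have hz0 : (AffineMap.lineMap z y : ℝ →ᵃ[ℝ] E) (0:ℝ) = z := by simp
      have hF : HasFDerivAt Φ ((InnerProductSpace.toDual ℝ E) (gradient Φ z))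
          ((AffineMap.lineMap z y : ℝ →ᵃ[ℝ] E) (0:ℝ)) := by
        rw [hz0]; exact (hdiff z).hasGradientAt.hasFDerivAt
      have h1 := hF.comp_hasDerivAt 0 (hline 0)
      simpa [InnerProductSpace.toDual_apply_apply, Function.comp_def] using h1
    have := hφconv.le_slope_of_hasDerivAt (Set.mem_univ (0:ℝ)) (Set.mem_univ (1:ℝ))
      one_pos hφd
    rw [slope_def_field] at this
    have hφ1 : φ 1 = Φ y := by simp [hφ]
    have hφ0 : φ 0 = Φ z := by simp [hφ]
    rw [hφ1, hφ0] at this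
    linarith [this]

theorem no_flat_right (f : ℝ → ℝ) (τ δ K : ℝ) (hδ : 0 < δ) (hK : 0 < K)
    (hfd : HasDerivAt f 0 τ)
    (hcont : ContinuousOn f (Set.Icc τ (τ + δ)))
    (hderiv : ∀ t ∈ Set.Ioo τ (τ + δ), DifferentiableAt ℝ f t ∧ deriv f t ≤ -K) :
    False := by
  have hlt : τ < τ + δ := by linarith
  set g : ℝ → ℝ := fun t => f t + (K/2) * t with hg
  have hganti : StrictAntiOn g (Set.Icc τ (τ + δ)) := by
    apply strictAntiOn_of_deriv_neg (convex_Icc _ _)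
    · exact hcont.add (continuous_const.mul continuous_id).continuousOn
    · intro t ht
      rw [interior_Icc] at ht
      have hd := hderiv t ht
      have : deriv g t = deriv f t + K/2 := by
        rw [hg]
        rw [deriv_fun_add hd.1 (by fun_prop)]
        have : deriv (fun t : ℝ => K/2 * t) t = K/2 := by
          simpa using (((hasDerivAt_id t).const_mul (K/2)).deriv)
        rw [this]
      rw [this]
      linarith [hd.2]
  -- slope of f at τ from the right tends to 0
  have hslope : Filter.Tendsto (slope f τ) (nhdsWithin τ (Set.Ioo τ (τ+δ))) (nhds 0) := by
    have := (hasDerivWithinAt_iff_tendsto_slope' (s := Set.Ioo τ (τ+δ)) (f := f) (f' := (0:ℝ))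
      (x := τ) (by simp)).mp (hfd.hasDerivWithinAt)
    exact this
  have hev1 : ∀ᶠ t in nhdsWithin τ (Set.Ioo τ (τ+δ)), -(K/2) < slope f τ t :=
    hslope.eventually (eventually_gt_nhds (by linarith))
  have hev2 : ∀ᶠ t in nhdsWithin τ (Set.Ioo τ (τ+δ)), slope f τ t < -(K/2) := by
    filter_upwards [self_mem_nhdsWithin] with t ht
    have h1 : g t < g τ := hganti (Set.left_mem_Icc.2 hlt.le)
      (Set.mem_Icc.2 ⟨ht.1.le, ht.2.le⟩) ht.1
    have h2 : f t - f τ < -(K/2) * (t - τ) := by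
      simp only [hg] at h1; nlinarith [h1]
    rw [slope_def_field]
    rw [div_lt_iff₀ (by linarith [ht.1])]
    linarith
  have hne : (nhdsWithin τ (Set.Ioo τ (τ+δ))).NeBot := by
    rw [nhdsWithin_Ioo_eq_nhdsGT hlt]
    infer_instance
  obtain ⟨t, h1, h2⟩ := (hev1.and hev2).exists
  linarith

/-- Mirror version: derivative `≤ -K` just to the left of `τ`. -/

theorem no_flat_left (f : ℝ → ℝ) (τ δ K : ℝ) (hδ : 0 < δ) (hK : 0 < K)
    (hfd : HasDerivAt f 0 τ)
    (hcont : ContinuousOn f (Set.Icc (τ - δ) τ))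
    (hderiv : ∀ t ∈ Set.Ioo (τ - δ) τ, DifferentiableAt ℝ f t ∧ deriv f t ≤ -K) :
    False := by
  apply no_flat_right (fun s => -f (-s)) (-τ) δ K hδ hK
  · have h1 : HasDerivAt (fun s : ℝ => f (-s)) (0 * (-1)) (-τ) := by
      exact HasDerivAt.comp (-τ) (by simpa using hfd) (by simpa using hasDerivAt_neg (-τ))
    simpa using h1.fun_neg
  · have : ContinuousOn (fun s : ℝ => f (-s)) (Set.Icc (-τ) (-τ + δ)) := by
      apply hcont.comp continuous_neg.continuousOn
      intro s hs
      simp only [Set.mem_Icc] at hs ⊢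
      constructor <;> linarith [hs.1, hs.2]
    exact this.neg
  · intro t ht
    simp only [Set.mem_Ioo] at ht
    have hmem : -t ∈ Set.Ioo (τ - δ) τ := by
      simp only [Set.mem_Ioo]; constructor <;> linarith [ht.1, ht.2]
    have hd := hderiv (-t) hmem
    have hder : HasDerivAt (fun s : ℝ => -f (-s)) (deriv f (-t)) t := by
      have h1 : HasDerivAt (fun s : ℝ => f (-s)) (deriv f (-t) * (-1)) t :=
        HasDerivAt.comp t (hd.1.hasDerivAt) (by simpa using hasDerivAt_neg t)
      simpa using h1.fun_neg
    exact ⟨hder.differentiableAt, by rw [hder.deriv]; exact hd.2⟩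

theorem int_bdd_right (f : ℝ → ℝ) (hf : ∀ s, 0 ≤ f s) (τ : ℝ) (hτ : 0 ≤ τ) :
    ∃ δ > 0, ∃ M, ∀ t ∈ Set.Ico τ (τ + δ), |∫ s in (0:ℝ)..t, f s| ≤ M := by
  by_cases hcase : ∃ w ∈ Set.Ioc τ (τ + 1), IntegrableOn f (Set.Ioc 0 w) volume
  · obtain ⟨w, hw, hint⟩ := hcase
    refine ⟨w - τ, by linarith [hw.1], ∫ s in Set.Ioc (0:ℝ) w, f s, ?_⟩
    intro t ht
    have h0t : (0:ℝ) ≤ t := le_trans hτ ht.1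
    have htw : t ≤ w := by linarith [ht.2]
    have hsub : Set.Ioc (0:ℝ) t ⊆ Set.Ioc (0:ℝ) w := Set.Ioc_subset_Ioc le_rfl htw
    have hintt : IntegrableOn f (Set.Ioc 0 t) volume := hint.mono_set hsub
    rw [intervalIntegral.integral_of_le h0t]
    have hnn : 0 ≤ ∫ s in Set.Ioc (0:ℝ) t, f s :=
      setIntegral_nonneg measurableSet_Ioc fun s _ => hf s
    rw [abs_of_nonneg hnn]
    exact setIntegral_mono_set hint (Filter.Eventually.of_forall hf)
      (HasSubset.Subset.eventuallyLE hsub)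
  · push_neg at hcase
    refine ⟨1, one_pos, |∫ s in (0:ℝ)..τ, f s|, ?_⟩
    intro t ht
    rcases eq_or_lt_of_le ht.1 with rfl | hlt
    · exact le_refl _
    · have h0t : (0:ℝ) ≤ t := le_trans hτ ht.1
      have : ¬ IntegrableOn f (Set.Ioc 0 t) volume := hcase t ⟨hlt, ht.2.le⟩
      rw [intervalIntegral.integral_of_le h0t, integral_undef this]
      simp [abs_nonneg]

theorem alg_ineq (p : ℕ) (hp : 1 ≤ p) (θ lamt r : ℝ) (hθ : 0 < θ) (hlam : 0 < lamt)
    (hr : 0 ≤ r) (h : lamt ^ p * r ^ (p - 1) = θ) :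
    lamt * r ^ 2 = θ ^ (1/(p:ℝ)) * r ^ (((p:ℝ) + 1)/(p:ℝ)) := by
  have hp0 : (0:ℝ) < (p:ℝ) := by exact_mod_cast Nat.pos_of_ne_zero (by omega)
  rcases eq_or_lt_of_le hr with rfl | hrpos
  · -- r = 0
    have hp1 : p = 1 := by
      by_contra hne
      have h2 : 2 ≤ p := by omega
      have : (0:ℝ) ^ (p - 1) = 0 := by
        apply zero_pow; omega
      rw [this, mul_zero] at h
      exact absurd h.symm (ne_of_gt hθ)
    subst hp1
    norm_num
  · -- r > 0
    have key : θ ^ (1/(p:ℝ)) = lamt * r ^ (((p:ℝ) - 1)/(p:ℝ)) := by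
      rw [← h]
      rw [Real.mul_rpow (by positivity) (by positivity)]
      rw [← Real.rpow_natCast lamt p, ← Real.rpow_natCast r (p-1)]
      rw [← Real.rpow_mul hlam.le, ← Real.rpow_mul hrpos.le]
      rw [mul_one_div, div_self (ne_of_gt hp0), Real.rpow_one]
      congr 2
      rw [Nat.cast_sub hp, Nat.cast_one, mul_one_div]
    rw [key, mul_assoc, ← Real.rpow_add hrpos]
    have : ((p:ℝ) - 1)/(p:ℝ) + ((p:ℝ) + 1)/(p:ℝ) = 2 := by
      field_simp; ring
    rw [this]
    rw [Real.rpow_two]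

end helpers

set_option maxHeartbeats 2000000 in
/-- along a solution of the first-order system (FO) on `[0, t0]`, the
Lyapunov function `E(t) = a(t)(Φ(x(t)) − Φ(x*)) + ½‖v(t) − x*‖²` is differentiable and
satisfies `E'(t) ≤ −a(t) θ^{1/p} ‖∇Φ(x(t))‖^{(p+1)/p}`. -/
theorem stmt_4 (d p : ℕ) (hd : 1 ≤ d) (hp : 1 ≤ p)
    (Φ : EuclideanSpace ℝ (Fin d) → ℝ)
    (hconv : ConvexOn ℝ Set.univ Φ) (hsmooth : ContDiff ℝ 2 Φ)
    (θ c t0 : ℝ) (hθ : θ ∈ Set.Ioo (0:ℝ) 1) (hc : 0 < c) (ht0 : 0 < t0)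
    (x0 v0 xstar : EuclideanSpace ℝ (Fin d)) (hx0 : gradient Φ x0 ≠ 0)
    (hstar : ∀ y, Φ xstar ≤ Φ y)
    (x v : ℝ → EuclideanSpace ℝ (Fin d)) (lam : ℝ → ℝ) (a : ℝ → ℝ)
    (hlamcont : ContinuousOn lam (Set.Icc 0 t0))
    (hlampos : ∀ t ∈ Set.Icc (0:ℝ) t0, 0 < lam t)
    (ha : ∀ t, a t = (1/4) * ((∫ s in (0:ℝ)..t, Real.sqrt (lam s)) + c) ^ 2)
    (hxdiff : ∀ t ∈ Set.Icc (0:ℝ) t0, DifferentiableAt ℝ x t)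
    (hvdiff : ∀ t ∈ Set.Icc (0:ℝ) t0, DifferentiableAt ℝ v t)
    (heqv : ∀ t ∈ Set.Icc (0:ℝ) t0, deriv v t + deriv a t • gradient Φ (x t) = 0)
    (heqx : ∀ t ∈ Set.Icc (0:ℝ) t0,
      deriv x t + (deriv a t / a t) • (x t - v t)
        + ((deriv a t) ^ 2 / a t) • gradient Φ (x t) = 0)
    (halg : ∀ t ∈ Set.Icc (0:ℝ) t0, (lam t) ^ p * ‖gradient Φ (x t)‖ ^ (p - 1) = θ)
    (hx0' : x 0 = x0) (hv0' : v 0 = v0)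
    (E : ℝ → ℝ)
    (hE : ∀ t, E t = a t * (Φ (x t) - Φ xstar) + (1/2) * ‖v t - xstar‖ ^ 2) :
    ∀ t ∈ Set.Icc (0:ℝ) t0,
      DifferentiableAt ℝ E t ∧
      deriv E t ≤ -(a t * θ ^ (1/(p:ℝ)) * ‖gradient Φ (x t)‖ ^ (((p:ℝ)+1)/(p:ℝ))) := by
  have hIcc : (0:ℝ) ∈ Set.Icc (0:ℝ) t0 := Set.left_mem_Icc.2 ht0.le
  have ht0Icc : t0 ∈ Set.Icc (0:ℝ) t0 := Set.right_mem_Icc.2 ht0.le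
  -- differentiability of Φ
  have hΦd : ∀ z, DifferentiableAt ℝ Φ z := fun z =>
    (hsmooth.differentiable (by norm_num)).differentiableAt
  -- continuity of the gradient
  have hGc : Continuous (fun z => gradient Φ z) := by
    have h1 : Continuous (fun z => fderiv ℝ Φ z) := hsmooth.continuous_fderiv (by norm_num)
    exact ((InnerProductSpace.toDual ℝ _).symm.continuous.comp h1 : _)
  -- the integral function
  set I : ℝ → ℝ := fun t => ∫ s in (0:ℝ)..t, Real.sqrt (lam s) with hIdef
  have hsqcont : ContinuousOn (fun s => Real.sqrt (lam s)) (Set.Icc 0 t0) :=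
    Real.continuous_sqrt.comp_continuousOn hlamcont
  have hintble : ∀ t ∈ Set.Icc (0:ℝ) t0,
      IntervalIntegrable (fun s => Real.sqrt (lam s)) volume 0 t := by
    intro t ht
    apply ContinuousOn.intervalIntegrable
    apply hsqcont.mono
    rw [Set.uIcc_of_le ht.1]
    exact Set.Icc_subset_Icc le_rfl ht.2
  -- FTC: derivative of I within Icc
  have hIW : ∀ τ ∈ Set.Icc (0:ℝ) t0,
      HasDerivWithinAt I (Real.sqrt (lam τ)) (Set.Icc 0 t0) τ := by
    intro τ hτ
    rcases eq_or_lt_of_le hτ.1 with h0 | hlt0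
    · -- τ = 0
      subst h0
      have hmeas : StronglyMeasurableAtFilter (fun s => Real.sqrt (lam s)) (𝓝[Set.Ioi (0:ℝ)] 0)
          volume := by
        refine ⟨Set.Ioc 0 t0, ?_, (hsqcont.mono Set.Ioc_subset_Icc_self).aestronglyMeasurable
          measurableSet_Ioc⟩
        rw [← nhdsWithin_Ioc_eq_nhdsGT ht0]
        exact self_mem_nhdsWithin
      have hcw : ContinuousWithinAt (fun s => Real.sqrt (lam s)) (Set.Ioi (0:ℝ)) 0 := by
        have h1 : ContinuousWithinAt (fun s => Real.sqrt (lam s)) (Set.Ioc 0 t0) 0 :=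
          (hsqcont 0 hIcc).mono Set.Ioc_subset_Icc_self
        rwa [ContinuousWithinAt, nhdsWithin_Ioc_eq_nhdsGT ht0] at h1
      have h := intervalIntegral.integral_hasDerivWithinAt_right
        (hintble 0 hIcc) hmeas hcw (s := Set.Ici (0:ℝ))
      exact h.mono (Set.Icc_subset_Ici_self)
    rcases eq_or_lt_of_le hτ.2 with h1 | hlt1
    · -- τ = t0
      subst h1
      have hmeas : StronglyMeasurableAtFilter (fun s => Real.sqrt (lam s)) (𝓝[Set.Iic τ] τ)
          volume := by
        refine ⟨Set.Icc 0 τ, ?_, hsqcont.aestronglyMeasurable measurableSet_Icc⟩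
        rw [← nhdsWithin_Icc_eq_nhdsLE hlt0]
        exact self_mem_nhdsWithin
      have hcw : ContinuousWithinAt (fun s => Real.sqrt (lam s)) (Set.Iic τ) τ := by
        have h1 := hsqcont τ hτ
        rwa [ContinuousWithinAt, nhdsWithin_Icc_eq_nhdsLE hlt0] at h1
      have h := intervalIntegral.integral_hasDerivWithinAt_right
        (hintble τ hτ) hmeas hcw (s := Set.Iic τ)
      exact h.mono (Set.Icc_subset_Iic_self)
    · -- interior
      have hnhds : Set.Icc (0:ℝ) t0 ∈ 𝓝 τ := Icc_mem_nhds hlt0 hlt1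
      have hca : ContinuousAt (fun s => Real.sqrt (lam s)) τ :=
        (hsqcont.continuousAt hnhds)
      have hmeas : StronglyMeasurableAtFilter (fun s => Real.sqrt (lam s)) (𝓝 τ) volume :=
        ⟨Set.Icc 0 t0, hnhds, hsqcont.aestronglyMeasurable measurableSet_Icc⟩
      have h := intervalIntegral.integral_hasDerivAt_right (hintble τ hτ) hmeas hca
      exact h.hasDerivWithinAt
  -- I is nonnegative on [0, t0]
  have hIpos : ∀ t ∈ Set.Icc (0:ℝ) t0, 0 ≤ I t := by
    intro t ht
    exact intervalIntegral.integral_nonneg ht.1 (fun s _ => Real.sqrt_nonneg _)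
  -- a is positive on [0, t0]
  have hapos : ∀ t ∈ Set.Icc (0:ℝ) t0, 0 < a t := by
    intro t ht
    rw [ha t]
    have := hIpos t ht
    have : 0 < I t + c := by simp only [hIdef] at *; linarith
    positivity
  -- the candidate derivative of a
  set A : ℝ → ℝ := fun t => Real.sqrt (lam t) * (I t + c) / 2 with hAdef
  have hAnn : ∀ t ∈ Set.Icc (0:ℝ) t0, 0 ≤ A t := by
    intro t ht
    have h1 := hIpos t ht
    have : 0 ≤ I t + c := by linarith
    positivity
  have hA2 : ∀ t ∈ Set.Icc (0:ℝ) t0, A t ^ 2 = lam t * a t := by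
    intro t ht
    rw [hAdef, ha t]
    simp only
    rw [div_pow, mul_pow, Real.sq_sqrt (hlampos t ht).le]
    ring
  -- derivative of a within Icc
  have haW : ∀ τ ∈ Set.Icc (0:ℝ) t0, HasDerivWithinAt a (A τ) (Set.Icc 0 t0) τ := by
    intro τ hτ
    have haEq : a = fun t => (1/4) * (I t + c) ^ 2 := funext ha
    rw [haEq]
    have h1 : HasDerivWithinAt (fun t => I t + c) (Real.sqrt (lam τ)) (Set.Icc 0 t0) τ :=
      (hIW τ hτ).add_const c
    have h2 := (h1.pow 2)
    have h3 := h2.const_mul (1/4 : ℝ)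
    refine h3.congr_deriv ?_
    rw [hAdef]
    simp only
    push_cast
    ring
  have haInt : ∀ τ ∈ Set.Ioo (0:ℝ) t0, HasDerivAt a (A τ) τ := by
    intro τ hτ
    exact (haW τ (Set.Ioo_subset_Icc_self hτ)).hasDerivAt (Icc_mem_nhds hτ.1 hτ.2)
  -- continuity of t ↦ gradient Φ (x t) at points of Icc
  have hGxc : ∀ t ∈ Set.Icc (0:ℝ) t0, ContinuousAt (fun s => gradient Φ (x s)) t := by
    intro t ht
    exact (hGc.continuousAt).comp (hxdiff t ht).continuousAt
  -- MAIN COMPUTATION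
  have hmain : ∀ τ ∈ Set.Icc (0:ℝ) t0, HasDerivAt a (A τ) τ →
      DifferentiableAt ℝ E τ ∧
      deriv E τ ≤ -(a τ * θ ^ (1/(p:ℝ)) * ‖gradient Φ (x τ)‖ ^ (((p:ℝ)+1)/(p:ℝ))) := by
    intro τ hτ hAτ
    set G : EuclideanSpace ℝ (Fin d) := gradient Φ (x τ) with hGdef
    have hx' : HasDerivAt x (deriv x τ) τ := (hxdiff τ hτ).hasDerivAt
    have hv'd : HasDerivAt v (deriv v τ) τ := (hvdiff τ hτ).hasDerivAt
    have hΦx : HasDerivAt (fun t => Φ (x t)) ((inner ℝ G (deriv x τ) : ℝ)) τ := by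
      have hF : HasFDerivAt Φ ((InnerProductSpace.toDual ℝ _) G) (x τ) :=
        (hΦd (x τ)).hasGradientAt.hasFDerivAt
      have h1 := hF.comp_hasDerivAt τ hx'
      simpa [InnerProductSpace.toDual_apply_apply, Function.comp_def] using h1
    have hvs : HasDerivAt (fun t => v t - xstar) (deriv v τ) τ := hv'd.sub_const xstar
    have hN : HasDerivAt (fun t => (inner ℝ (v t - xstar) (v t - xstar) : ℝ))
        ((inner ℝ (v τ - xstar) (deriv v τ) : ℝ) + (inner ℝ (deriv v τ) (v τ - xstar) : ℝ)) τ :=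
      HasDerivAt.inner ℝ hvs hvs
    set D : ℝ := A τ * (Φ (x τ) - Φ xstar) + a τ * (inner ℝ G (deriv x τ) : ℝ)
      + (1/2) * ((inner ℝ (v τ - xstar) (deriv v τ) : ℝ)
        + (inner ℝ (deriv v τ) (v τ - xstar) : ℝ)) with hDdef
    have hEd : HasDerivAt E D τ := by
      have h1 : HasDerivAt (fun t => a t * (Φ (x t) - Φ xstar))
          (A τ * (Φ (x τ) - Φ xstar) + a τ * (inner ℝ G (deriv x τ) : ℝ)) τ :=
        hAτ.mul (hΦx.sub_const _)
      have h2 := h1.fun_add (hN.const_mul (1/2 : ℝ))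
      have hEeq : E = fun t => a t * (Φ (x t) - Φ xstar)
          + (1/2) * (inner ℝ (v t - xstar) (v t - xstar) : ℝ) := by
        funext t
        rw [hE t, real_inner_self_eq_norm_sq]
      rw [hEeq]
      convert h2 using 1
    refine ⟨hEd.differentiableAt, ?_⟩
    rw [hEd.deriv]
    have hane : a τ ≠ 0 := (hapos τ hτ).ne'
    have hda : deriv a τ = A τ := hAτ.deriv
    have hdv : deriv v τ = -(A τ • G) := by
      have h := heqv τ hτ
      rw [hda] at h
      rwa [add_eq_zero_iff_eq_neg] at h
    have hdx : deriv x τ = -((A τ / a τ) • (x τ - v τ) + ((A τ)^2 / a τ) • G) := by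
      have h := heqx τ hτ
      rw [hda] at h
      rwa [add_assoc, add_eq_zero_iff_eq_neg] at h
    have hinner_x : (inner ℝ G (deriv x τ) : ℝ)
        = -((A τ / a τ) * (inner ℝ G (x τ - v τ) : ℝ) + ((A τ)^2 / a τ) * (inner ℝ G G : ℝ)) := by
      rw [hdx]
      rw [inner_neg_right, inner_add_right, inner_smul_right, inner_smul_right]
    have hinner_v : (inner ℝ (v τ - xstar) (deriv v τ) : ℝ)
        = -(A τ * (inner ℝ G (v τ - xstar) : ℝ)) := by
      rw [hdv, inner_neg_right, inner_smul_right, real_inner_comm]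
    have hinner_v' : (inner ℝ (deriv v τ) (v τ - xstar) : ℝ)
        = -(A τ * (inner ℝ G (v τ - xstar) : ℝ)) := by
      rw [hdv, inner_neg_left, real_inner_smul_left]
    have hsplit : (inner ℝ G (x τ - xstar) : ℝ)
        = (inner ℝ G (x τ - v τ) : ℝ) + (inner ℝ G (v τ - xstar) : ℝ) := by
      rw [← inner_add_right]
      congr 1
      abel
    have hDeq : D = A τ * (Φ (x τ) - Φ xstar) - A τ * (inner ℝ G (x τ - xstar) : ℝ)
        - (A τ)^2 * (inner ℝ G G : ℝ) := by
      rw [hDdef, hinner_x, hinner_v, hinner_v', hsplit]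
      field_simp
      ring
    have hconvineq : Φ (x τ) - Φ xstar ≤ (inner ℝ G (x τ - xstar) : ℝ) := by
      have h := grad_convex_ineq hconv hΦd (x τ) xstar
      have h2 : (inner ℝ G (xstar - x τ) : ℝ) = -(inner ℝ G (x τ - xstar) : ℝ) := by
        rw [← inner_neg_right]
        congr 1
        abel
      rw [← hGdef] at h
      rw [h2] at h
      linarith
    have hineq1 : D ≤ -((A τ)^2 * (inner ℝ G G : ℝ)) := by
      rw [hDeq]
      have hA := hAnn τ hτ
      have h1 : 0 ≤ A τ * ((inner ℝ G (x τ - xstar) : ℝ) - (Φ (x τ) - Φ xstar)) :=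
        mul_nonneg hA (by linarith)
      nlinarith [h1]
    have hGG : (inner ℝ G G : ℝ) = ‖G‖^2 := real_inner_self_eq_norm_sq G
    have halgτ := alg_ineq p hp θ (lam τ) ‖G‖ hθ.1 (hlampos τ hτ) (norm_nonneg G)
      (halg τ hτ)
    calc D ≤ -((A τ)^2 * (inner ℝ G G : ℝ)) := hineq1
      _ = -(a τ * (lam τ * ‖G‖^2)) := by rw [hGG, hA2 τ hτ]; ring
      _ = -(a τ * θ ^ (1/(p:ℝ)) * ‖G‖ ^ (((p:ℝ)+1)/(p:ℝ))) := by rw [halgτ]; ring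
  -- ENDPOINT: a differentiable when gradient nonzero
  have hend : ∀ τ ∈ Set.Icc (0:ℝ) t0, (τ = 0 ∨ τ = t0) → gradient Φ (x τ) ≠ 0 →
      DifferentiableAt ℝ a τ := by
    intro τ hτ hep hGz
    by_contra hnd
    have hda0 : deriv a τ = 0 := deriv_zero_of_not_differentiableAt hnd
    set u : EuclideanSpace ℝ (Fin d) := gradient Φ (x τ) with hu
    set f : ℝ → ℝ := fun t => (inner ℝ (v t) u : ℝ) with hfdef
    have hfd : ∀ t ∈ Set.Icc (0:ℝ) t0, HasDerivAt f ((inner ℝ (deriv v t) u : ℝ)) t := by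
      intro t ht
      have h := HasDerivAt.inner ℝ ((hvdiff t ht).hasDerivAt) (hasDerivAt_const t u)
      simpa using h
    have hf0 : HasDerivAt f 0 τ := by
      have h := hfd τ hτ
      have hdv : deriv v τ = 0 := by
        have h2 := heqv τ hτ
        rw [hda0] at h2
        simpa using h2
      rwa [hdv, inner_zero_left] at h
    set β : ℝ := ‖u‖^2 with hβdef
    have hβ : 0 < β := by
      have : 0 < ‖u‖ := norm_pos_iff.2 hGz
      positivity
    set m : ℝ := Real.sqrt (lam τ / 2) * c / 2 with hmdef
    have hm : 0 < m := by
      have h1 : 0 < lam τ / 2 := by linarith [hlampos τ hτ]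
      have := Real.sqrt_pos.2 h1
      positivity
    set K : ℝ := m * (β / 2) with hKdef
    have hK : 0 < K := by positivity
    -- eventual bounds in 𝓝[Ioo 0 t0] τ
    have hFlam : Filter.Tendsto lam (𝓝[Set.Ioo 0 t0] τ) (𝓝 (lam τ)) :=
      (hlamcont τ hτ).tendsto.mono_left (nhdsWithin_mono _ Set.Ioo_subset_Icc_self)
    have hevlam : ∀ᶠ t in 𝓝[Set.Ioo 0 t0] τ, lam τ / 2 < lam t :=
      hFlam.eventually (eventually_gt_nhds (half_lt_self (hlampos τ hτ)))
    have hGt : Filter.Tendsto (fun t => (inner ℝ (gradient Φ (x t)) u : ℝ))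
        (𝓝[Set.Ioo 0 t0] τ) (𝓝 β) := by
      have hc : ContinuousAt (fun t => (inner ℝ (gradient Φ (x t)) u : ℝ)) τ :=
        (hGxc τ hτ).inner continuousAt_const
      have hval : (inner ℝ (gradient Φ (x τ)) u : ℝ) = β := by
        rw [← hu, hβdef, real_inner_self_eq_norm_sq]
      rw [← hval]
      exact hc.tendsto.mono_left nhdsWithin_le_nhds
    have hevG : ∀ᶠ t in 𝓝[Set.Ioo 0 t0] τ, β/2 < (inner ℝ (gradient Φ (x t)) u : ℝ) :=
      hGt.eventually (eventually_gt_nhds (by linarith))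
    have hevmem : ∀ᶠ t in 𝓝[Set.Ioo 0 t0] τ, t ∈ Set.Ioo (0:ℝ) t0 :=
      eventually_mem_nhdsWithin
    have hev : ∀ᶠ t in 𝓝[Set.Ioo 0 t0] τ,
        DifferentiableAt ℝ f t ∧ deriv f t ≤ -K := by
      filter_upwards [hevlam, hevG, hevmem] with t h1 h2 h3
      have htIcc : t ∈ Set.Icc (0:ℝ) t0 := Set.Ioo_subset_Icc_self h3
      have hft := hfd t htIcc
      refine ⟨hft.differentiableAt, ?_⟩
      rw [hft.deriv]
      have hdvt : deriv v t = -(A t • gradient Φ (x t)) := by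
        have h4 := heqv t htIcc
        rw [(haInt t h3).deriv] at h4
        rwa [add_eq_zero_iff_eq_neg] at h4
      have hAm : m ≤ A t := by
        rw [hAdef, hmdef]
        simp only
        have hs : Real.sqrt (lam τ / 2) ≤ Real.sqrt (lam t) := Real.sqrt_le_sqrt h1.le
        have hIc : c ≤ I t + c := by linarith [hIpos t htIcc]
        have h5 : Real.sqrt (lam τ / 2) * c ≤ Real.sqrt (lam t) * (I t + c) :=
          mul_le_mul hs hIc hc.le (Real.sqrt_nonneg _)
        linarith
      have hAn : 0 ≤ A t := le_trans hm.le hAm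
      have hprod : K ≤ A t * (inner ℝ (gradient Φ (x t)) u : ℝ) := by
        rw [hKdef]
        exact mul_le_mul hAm h2.le (by linarith) hAn
      have : (inner ℝ (deriv v t) u : ℝ) = -(A t * (inner ℝ (gradient Φ (x t)) u : ℝ)) := by
        rw [hdvt, inner_neg_left, real_inner_smul_left]
      rw [this]
      linarith
    rcases hep with h0 | h1
    · -- τ = 0 : use no_flat_right
      subst h0
      rw [nhdsWithin_Ioo_eq_nhdsGT ht0] at hev
      obtain ⟨w, hw, hsub⟩ := mem_nhdsGT_iff_exists_Ioc_subset.mp hev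
      set δ : ℝ := min w t0 with hδdef
      have hδ : 0 < δ := lt_min hw ht0
      apply no_flat_right f 0 δ K hδ hK hf0
      · intro t ht
        have htIcc : t ∈ Set.Icc (0:ℝ) t0 := by
          constructor
          · linarith [ht.1]
          · have := ht.2
            simp only [zero_add] at this
            exact le_trans this (min_le_right w t0)
        exact ((hfd t htIcc).continuousAt).continuousWithinAt
      · intro t ht
        have : t ∈ Set.Ioc (0:ℝ) w := by
          constructor
          · exact ht.1
          · have := ht.2
            simp only [zero_add] at this
            exact le_of_lt (lt_of_lt_of_le this (min_le_left w t0))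
        exact hsub this
    · -- τ = t0 : use no_flat_left
      subst h1
      rw [nhdsWithin_Ioo_eq_nhdsLT ht0] at hev
      obtain ⟨l, hl, hsub⟩ := mem_nhdsLT_iff_exists_Ico_subset.mp hev
      have hl' : l < τ := hl
      set δ : ℝ := min (τ - l) τ with hδdef
      have hδ : 0 < δ := lt_min (by linarith) ht0
      apply no_flat_left f τ δ K hδ hK hf0
      · intro t ht
        have htIcc : t ∈ Set.Icc (0:ℝ) τ := by
          constructor
          · have h2 := ht.1
            have h3 : δ ≤ τ := min_le_right (τ - l) τ
            linarith
          · exact ht.2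
        exact ((hfd t htIcc).continuousAt).continuousWithinAt
      · intro t ht
        have : t ∈ Set.Ico l τ := by
          constructor
          · have h2 := ht.1
            have h3 : δ ≤ τ - l := min_le_left (τ - l) τ
            linarith
          · exact ht.2
        exact hsub this
  -- conclusion
  intro τ hτ
  by_cases hint : τ ∈ Set.Ioo (0:ℝ) t0
  · exact hmain τ hτ (haInt τ hint)
  · have hep : τ = 0 ∨ τ = t0 := by
      rcases eq_or_lt_of_le hτ.1 with h | h
      · exact Or.inl h.symm
      rcases eq_or_lt_of_le hτ.2 with h' | h'
      · exact Or.inr h'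
      · exact absurd ⟨h, h'⟩ hint
    by_cases hGz : gradient Φ (x τ) = 0
    · -- special degenerate endpoint case
      have hτt0 : τ = t0 := by
        rcases hep with h | h
        · exfalso; rw [h, hx0'] at hGz; exact hx0 hGz
        · exact h
      subst hτt0
      have hdvτ : deriv v τ = 0 := by
        have h := heqv τ hτ
        rw [hGz] at h
        simpa using h
      have hgmin : Φ (x τ) = Φ xstar := by
        have h := grad_convex_ineq hconv hΦd (x τ) xstar
        rw [hGz] at h
        simp only [inner_zero_left, add_zero] at h
        exact le_antisymm h (hstar _)
      have hΦx : HasDerivAt (fun t => Φ (x t)) 0 τ := by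
        have hF : HasFDerivAt Φ ((InnerProductSpace.toDual ℝ _) (gradient Φ (x τ))) (x τ) :=
          (hΦd (x τ)).hasGradientAt.hasFDerivAt
        have h1 := hF.comp_hasDerivAt τ (hxdiff τ hτ).hasDerivAt
        rw [hGz] at h1
        simpa [Function.comp_def] using h1
      have hg : HasDerivAt (fun t => Φ (x t) - Φ xstar) 0 τ := hΦx.sub_const _
      obtain ⟨δ₁, hδ₁, M, hM⟩ := int_bdd_right (fun s => Real.sqrt (lam s))
        (fun s => Real.sqrt_nonneg _) τ ht0.le
      have hImono : ∀ t ∈ Set.Icc (0:ℝ) τ, |I t| ≤ |I τ| := by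
        intro t ht
        have hint2 : IntervalIntegrable (fun s => Real.sqrt (lam s)) volume t τ := by
          apply ContinuousOn.intervalIntegrable
          apply hsqcont.mono
          rw [Set.uIcc_of_le ht.2]
          exact Set.Icc_subset_Icc ht.1 le_rfl
        have h1 : I t + ∫ s in t..τ, Real.sqrt (lam s) = I τ :=
          intervalIntegral.integral_add_adjacent_intervals (hintble t ht) hint2
        have h2 : 0 ≤ ∫ s in t..τ, Real.sqrt (lam s) :=
          intervalIntegral.integral_nonneg ht.2 (fun s _ => Real.sqrt_nonneg _)
        rw [abs_of_nonneg (hIpos t ht), abs_of_nonneg (hIpos τ hτ)]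
        linarith
      set C : ℝ := (1/4) * (max M |I τ| + c)^2 with hCdef
      have haBound : ∀ t, |t - τ| < min δ₁ τ → |a t| ≤ C := by
        intro t htr
        have habs := abs_lt.mp htr
        have hIt : |I t| ≤ max M |I τ| := by
          rcases le_or_gt t τ with hle | hlt
          · refine le_trans (hImono t ⟨?_, hle⟩) (le_max_right _ _)
            have := habs.1
            have h3 : min δ₁ τ ≤ τ := min_le_right _ _
            linarith
          · refine le_trans (hM t ⟨hlt.le, ?_⟩) (le_max_left _ _)
            have := habs.2
            have h3 : min δ₁ τ ≤ δ₁ := min_le_left _ _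
            linarith
        have h1 : I t + c ≤ max M |I τ| + c := by
          have := le_abs_self (I t); linarith
        have h2 : -(max M |I τ| + c) ≤ I t + c := by
          have := neg_abs_le (I t)
          have h4 : 0 ≤ max M |I τ| := le_trans (abs_nonneg _) (le_max_right M |I τ|)
          linarith
        have hsq : (I t + c)^2 ≤ (max M |I τ| + c)^2 := sq_le_sq' h2 h1
        have haT : a t = (1/4) * (I t + c)^2 := ha t
        rw [haT, abs_of_nonneg (by positivity), hCdef]
        linarith
      have haO : (fun t => a t) =O[𝓝 τ] (fun _ => (1:ℝ)) := by
        rw [Asymptotics.isBigO_iff]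
        refine ⟨C, ?_⟩
        have hball : ∀ᶠ t in 𝓝 τ, |t - τ| < min δ₁ τ := by
          have hb := Metric.ball_mem_nhds τ (lt_min hδ₁ ht0)
          filter_upwards [hb] with t ht
          simpa [Real.dist_eq] using ht
        filter_upwards [hball] with t ht
        simpa using haBound t ht
      have hgo : (fun t => Φ (x t) - Φ xstar) =o[𝓝 τ] (fun t => t - τ) := by
        have h1 := hasDerivAt_iff_isLittleO.mp hg
        simpa [hgmin] using h1
      have hprodo : (fun t => a t * (Φ (x t) - Φ xstar)) =o[𝓝 τ] (fun t => t - τ) := by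
        have h1 := haO.mul_isLittleO hgo
        simpa using h1
      have hag : HasDerivAt (fun t => a t * (Φ (x t) - Φ xstar)) 0 τ := by
        rw [hasDerivAt_iff_isLittleO]
        have hzero : a τ * (Φ (x τ) - Φ xstar) = 0 := by rw [hgmin]; ring
        simpa [hzero] using hprodo
      have hvs : HasDerivAt (fun t => v t - xstar) (deriv v τ) τ :=
        (hvdiff τ hτ).hasDerivAt.sub_const xstar
      have hN := HasDerivAt.inner ℝ hvs hvs
      rw [hdvτ] at hN
      simp only [inner_zero_left, inner_zero_right, add_zero] at hN
      have hE0 : HasDerivAt E 0 τ := by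
        have hEeq : E = fun t => a t * (Φ (x t) - Φ xstar)
            + (1/2) * (inner ℝ (v t - xstar) (v t - xstar) : ℝ) := by
          funext t
          rw [hE t, real_inner_self_eq_norm_sq]
        rw [hEeq]
        have h2 := hag.fun_add (hN.const_mul (1/2 : ℝ))
        simpa using h2
      refine ⟨hE0.differentiableAt, ?_⟩
      rw [hE0.deriv, hGz]
      have hnz : ‖(0 : EuclideanSpace ℝ (Fin d))‖ = 0 := norm_zero
      have hppos : (0:ℝ) < (p:ℝ) := by exact_mod_cast Nat.pos_of_ne_zero (by omega)
      have hexp : ((p:ℝ)+1)/(p:ℝ) ≠ 0 := by positivity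
      rw [hnz, Real.zero_rpow hexp, mul_zero, neg_zero]
    · -- gradient nonzero: a is differentiable at τ with derivative A τ
      have hda := hend τ hτ hep hGz
      have hAτ : HasDerivAt a (A τ) τ := by
        have h1 := (hda.hasDerivAt.hasDerivWithinAt (s := Set.Icc 0 t0)).derivWithin
          (uniqueDiffOn_Icc ht0 τ hτ)
        have h2 := (haW τ hτ).derivWithin (uniqueDiffOn_Icc ht0 τ hτ)
        rw [h1] at h2
        rw [← h2]
        exact hda.hasDerivAt
      exact hmain τ hτ hAτ
end

section
/- Let t0 > 0 and suppose (x, v, λ) with a(t) = (1/4)(∫₀ᵗ √(λ(s)) ds + c)² is a solution of the first-order system (FO) on [0, t0]. Then for every t ∈ [0, t0]: ‖v(t) − x*‖ ≤ √(2E(0)) and ‖x(t) − x*‖ ≤ ‖x0 − x*‖ + 3√(E(0)); in particular (x(·), v(·)) is bounded on [0, t0] by a bound depending only on the initial condition. -/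
open Set Filter Topology

local notation "⟪" x ", " y "⟫" => @inner ℝ _ _ x y

/-- tangent line below for convex function on ℝ -/
lemma aux_tangent_1d {g : ℝ → ℝ} (hg : ConvexOn ℝ Set.univ g) {g' : ℝ}
    (hd : HasDerivAt g g' 0) : g' ≤ g 1 - g 0 := by
  have hmem : ∀ᶠ h in 𝓝[>] (0:ℝ), slope g 0 h ≤ slope g 0 1 := by
    filter_upwards [Ioc_mem_nhdsGT_of_mem (⟨le_refl (0:ℝ), zero_lt_one⟩ : (0:ℝ) ∈ Ico (0:ℝ) 1)]
      with h hh
    have := hg.secant_mono (mem_univ 0) (mem_univ h) (mem_univ 1) (ne_of_gt hh.1) one_ne_zero hh.2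
    simpa [slope_def_field] using this
  have htend : Tendsto (slope g 0) (𝓝[>] (0:ℝ)) (𝓝 g') := by
    refine (hasDerivAt_iff_tendsto_slope.1 hd).mono_left (nhdsWithin_mono _ ?_)
    intro y hy
    exact ne_of_gt hy
  have := le_of_tendsto htend hmem
  simpa [slope_def_field] using this

lemma aux_grad_ineq {n : ℕ} {Φ : EuclideanSpace ℝ (Fin n) → ℝ}
    (hconv : ConvexOn ℝ Set.univ Φ) (hdiff : Differentiable ℝ Φ)
    (y z : EuclideanSpace ℝ (Fin n)) :
    Φ y + ⟪gradient Φ y, z - y⟫ ≤ Φ z := by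
  set L : ℝ →ᵃ[ℝ] EuclideanSpace ℝ (Fin n) := AffineMap.lineMap y z with hL
  have hcomp : ConvexOn ℝ Set.univ (Φ ∘ L) := by
    simpa using hconv.comp_affineMap L
  have hline : HasDerivAt (fun s : ℝ => L s) (z - y) 0 := by
    have h1 : HasDerivAt (fun s : ℝ => s • (z - y) + y) ((1:ℝ) • (z - y)) 0 :=
      ((hasDerivAt_id (0:ℝ)).smul_const (z - y)).add_const y
    have heq : (fun s : ℝ => L s) = fun s : ℝ => s • (z - y) + y := by
      funext s
      simp [hL, AffineMap.lineMap_apply, vsub_eq_sub, vadd_eq_add]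
    rw [heq]
    simpa using h1
  have hg : HasDerivAt (Φ ∘ L) ⟪gradient Φ y, z - y⟫ 0 := by
    have hG := ((hdiff (L 0)).hasGradientAt).hasFDerivAt
    have hc := hG.comp_hasDerivAt 0 hline
    have hL0 : L 0 = y := by simp [hL]
    rw [hL0] at hc
    rw [InnerProductSpace.toDual_apply_apply] at hc
    exact hc
  have := aux_tangent_1d hcomp hg
  have hL1 : L 1 = z := by simp [hL]
  have hL0 : L 0 = y := by simp [hL]
  simp only [Function.comp, hL0, hL1] at this
  linarith

set_option maxHeartbeats 2000000 in
/-- along a solution of the first-order system (FO) on `[0, t0]`, the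
trajectory is bounded: `‖v(t) − x*‖ ≤ √(2E(0))` and
`‖x(t) − x*‖ ≤ ‖x0 − x*‖ + 3√(E(0))` for all `t ∈ [0, t0]`. -/
theorem stmt_5 (d p : ℕ) (hd : 1 ≤ d) (hp : 1 ≤ p)
    (Φ : EuclideanSpace ℝ (Fin d) → ℝ)
    (hconv : ConvexOn ℝ Set.univ Φ) (hsmooth : ContDiff ℝ 2 Φ)
    (θ c t0 : ℝ) (hθ : θ ∈ Set.Ioo (0:ℝ) 1) (hc : 0 < c) (ht0 : 0 < t0)
    (x0 v0 xstar : EuclideanSpace ℝ (Fin d)) (hx0 : gradient Φ x0 ≠ 0)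
    (hstar : ∀ y, Φ xstar ≤ Φ y)
    (x v : ℝ → EuclideanSpace ℝ (Fin d)) (lam : ℝ → ℝ) (a : ℝ → ℝ)
    (hlamcont : ContinuousOn lam (Set.Icc 0 t0))
    (hlampos : ∀ t ∈ Set.Icc (0:ℝ) t0, 0 < lam t)
    (ha : ∀ t, a t = (1/4) * ((∫ s in (0:ℝ)..t, Real.sqrt (lam s)) + c) ^ 2)
    (hxdiff : ∀ t ∈ Set.Icc (0:ℝ) t0, DifferentiableAt ℝ x t)
    (hvdiff : ∀ t ∈ Set.Icc (0:ℝ) t0, DifferentiableAt ℝ v t)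
    (heqv : ∀ t ∈ Set.Icc (0:ℝ) t0, deriv v t + deriv a t • gradient Φ (x t) = 0)
    (heqx : ∀ t ∈ Set.Icc (0:ℝ) t0,
      deriv x t + (deriv a t / a t) • (x t - v t)
        + ((deriv a t) ^ 2 / a t) • gradient Φ (x t) = 0)
    (halg : ∀ t ∈ Set.Icc (0:ℝ) t0, (lam t) ^ p * ‖gradient Φ (x t)‖ ^ (p - 1) = θ)
    (hx0' : x 0 = x0) (hv0' : v 0 = v0)
    (E : ℝ → ℝ)
    (hE : ∀ t, E t = a t * (Φ (x t) - Φ xstar) + (1/2) * ‖v t - xstar‖ ^ 2) :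
    ∀ t ∈ Set.Icc (0:ℝ) t0,
      ‖v t - xstar‖ ≤ Real.sqrt (2 * E 0) ∧
      ‖x t - xstar‖ ≤ ‖x0 - xstar‖ + 3 * Real.sqrt (E 0) := by
  have hIcc : Set.uIcc (0:ℝ) t0 = Set.Icc 0 t0 := Set.uIcc_of_le ht0.le
  have hsqcont : ContinuousOn (fun s => Real.sqrt (lam s)) (Set.Icc 0 t0) :=
    Real.continuous_sqrt.comp_continuousOn hlamcont
  have hIntt : ∀ t ∈ Set.Icc (0:ℝ) t0,
      IntervalIntegrable (fun s => Real.sqrt (lam s)) MeasureTheory.volume 0 t := by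
    intro t ht
    apply ContinuousOn.intervalIntegrable
    apply hsqcont.mono
    rw [Set.uIcc_of_le ht.1]
    exact Set.Icc_subset_Icc le_rfl ht.2
  have hInCont : ContinuousOn (fun r => ∫ s in (0:ℝ)..r, Real.sqrt (lam s)) (Set.Icc 0 t0) := by
    rw [← hIcc]
    exact intervalIntegral.continuousOn_primitive_interval'
      (hIntt t0 ⟨ht0.le, le_rfl⟩) Set.left_mem_uIcc
  have hInNonneg : ∀ t ∈ Set.Icc (0:ℝ) t0, 0 ≤ ∫ s in (0:ℝ)..t, Real.sqrt (lam s) := fun t ht =>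
    intervalIntegral.integral_nonneg ht.1 fun u _ => Real.sqrt_nonneg _
  have hFpos : ∀ t ∈ Set.Icc (0:ℝ) t0, 0 < (∫ s in (0:ℝ)..t, Real.sqrt (lam s)) + c :=
    fun t ht => add_pos_of_nonneg_of_pos (hInNonneg t ht) hc
  have hafun : a = fun r => (1/4) * ((∫ s in (0:ℝ)..r, Real.sqrt (lam s)) + c) ^ 2 := funext ha
  have haPos : ∀ t ∈ Set.Icc (0:ℝ) t0, 0 < a t := by
    intro t ht
    rw [ha t]
    have h1 := hFpos t ht
    positivity
  have haCont : ContinuousOn a (Set.Icc 0 t0) := by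
    rw [hafun]
    exact continuousOn_const.mul ((hInCont.add continuousOn_const).pow 2)
  have haDeriv : ∀ t ∈ Set.Ioo (0:ℝ) t0, HasDerivAt a
      ((1/2) * ((∫ s in (0:ℝ)..t, Real.sqrt (lam s)) + c) * Real.sqrt (lam t)) t := by
    intro t ht
    have htI : t ∈ Set.Icc (0:ℝ) t0 := Set.Ioo_subset_Icc_self ht
    have hca : ContinuousAt (fun s => Real.sqrt (lam s)) t :=
      hsqcont.continuousAt (Icc_mem_nhds ht.1 ht.2)
    have hmeas := ContinuousOn.stronglyMeasurableAtFilter (μ := MeasureTheory.volume) isOpen_Ioo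
      (hsqcont.mono Set.Ioo_subset_Icc_self) t ht
    have hI : HasDerivAt (fun r => ∫ s in (0:ℝ)..r, Real.sqrt (lam s)) (Real.sqrt (lam t)) t :=
      intervalIntegral.integral_hasDerivAt_right (hIntt t htI) hmeas hca
    have h2 := ((hI.add_const c).pow 2).const_mul ((1:ℝ)/4)
    rw [hafun]
    refine h2.congr_deriv ?_
    ring
  have hdApos : ∀ t ∈ Set.Ioo (0:ℝ) t0, 0 < deriv a t := by
    intro t ht
    have htI : t ∈ Set.Icc (0:ℝ) t0 := Set.Ioo_subset_Icc_self ht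
    rw [(haDeriv t ht).deriv]
    have h1 := hFpos t htI
    have hl := Real.sqrt_pos.2 (hlampos t htI)
    positivity
  have hΦdiff : Differentiable ℝ Φ := hsmooth.differentiable (by norm_num)
  have hgrad : ∀ (y z : EuclideanSpace ℝ (Fin d)),
      Φ y + ⟪gradient Φ y, z - y⟫ ≤ Φ z := fun y z => aux_grad_ineq hconv hΦdiff y z
  have hxCont : ContinuousOn x (Set.Icc 0 t0) := fun t ht =>
    ((hxdiff t ht).continuousAt).continuousWithinAt
  have hvCont : ContinuousOn v (Set.Icc 0 t0) := fun t ht =>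
    ((hvdiff t ht).continuousAt).continuousWithinAt
  have hΦmin : ∀ t, 0 ≤ Φ (x t) - Φ xstar := fun t => sub_nonneg.2 (hstar _)
  have hcomp : ∀ t ∈ Set.Icc (0:ℝ) t0,
      HasDerivAt (fun s => Φ (x s)) ⟪gradient Φ (x t), deriv x t⟫ t := by
    intro t ht
    have hx' := (hxdiff t ht).hasDerivAt
    have hG := ((hΦdiff (x t)).hasGradientAt).hasFDerivAt
    have hc := hG.comp_hasDerivAt t hx'
    rw [InnerProductSpace.toDual_apply_apply] at hc
    exact hc
  have hnormsq : ∀ (w : ℝ → EuclideanSpace ℝ (Fin d)) (t : ℝ), DifferentiableAt ℝ w t →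
      HasDerivAt (fun s => ‖w s - xstar‖ ^ 2) (2 * ⟪deriv w t, w t - xstar⟫) t := by
    intro w t hw
    have h1 : HasDerivAt (fun s => w s - xstar) (deriv w t) t := hw.hasDerivAt.sub_const xstar
    have h2 := h1.inner ℝ h1
    have heq : (fun s => ‖w s - xstar‖ ^ 2) = fun s => ⟪w s - xstar, w s - xstar⟫ := by
      funext s
      exact (real_inner_self_eq_norm_sq _).symm
    rw [heq]
    refine h2.congr_deriv ?_
    rw [real_inner_comm]
    ring
  have hEfun : E = fun t => a t * (Φ (x t) - Φ xstar) + (1/2) * ‖v t - xstar‖ ^ 2 := funext hE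
  have hEcont : ContinuousOn E (Set.Icc 0 t0) := by
    rw [hEfun]
    exact (haCont.mul ((hΦdiff.continuous.comp_continuousOn hxCont).sub continuousOn_const)).add
      (continuousOn_const.mul (((hvCont.sub continuousOn_const).norm).pow 2))
  have hEderiv : ∀ t ∈ Set.Ioo (0:ℝ) t0, HasDerivAt E
      (deriv a t * (Φ (x t) - Φ xstar) + a t * ⟪gradient Φ (x t), deriv x t⟫
        + (1/2) * (2 * ⟪deriv v t, v t - xstar⟫)) t := by
    intro t ht
    have htI : t ∈ Set.Icc (0:ℝ) t0 := Set.Ioo_subset_Icc_self ht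
    have hA : HasDerivAt a (deriv a t) t := (haDeriv t ht).differentiableAt.hasDerivAt
    have hmul := hA.mul ((hcomp t htI).sub_const (Φ xstar))
    have hsq := (hnormsq v t (hvdiff t htI)).const_mul ((1:ℝ)/2)
    rw [hEfun]
    exact hmul.add hsq
  have hE'le : ∀ t ∈ Set.Ioo (0:ℝ) t0, deriv E t ≤ 0 := by
    intro t ht
    have htI : t ∈ Set.Icc (0:ℝ) t0 := Set.Ioo_subset_Icc_self ht
    rw [(hEderiv t ht).deriv]
    have ha0 : (0:ℝ) < a t := haPos t htI
    have hA0 : 0 < deriv a t := hdApos t ht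
    have hveq : deriv v t = -(deriv a t • gradient Φ (x t)) :=
      eq_neg_of_add_eq_zero_left (heqv t htI)
    have hxeq : deriv x t = -((deriv a t / a t) • (x t - v t)
        + ((deriv a t)^2 / a t) • gradient Φ (x t)) := by
      have h := heqx t htI
      rw [add_assoc] at h
      exact eq_neg_of_add_eq_zero_left h
    have h1 : ⟪gradient Φ (x t), deriv x t⟫
        = -((deriv a t / a t) * ⟪gradient Φ (x t), x t - v t⟫
          + ((deriv a t)^2 / a t) * ⟪gradient Φ (x t), gradient Φ (x t)⟫) := by
      rw [hxeq, inner_neg_right, inner_add_right, real_inner_smul_right,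
        real_inner_smul_right]
    have h2 : ⟪deriv v t, v t - xstar⟫ = -(deriv a t * ⟪gradient Φ (x t), v t - xstar⟫) := by
      rw [hveq, inner_neg_left, real_inner_smul_left]
    rw [h1, h2]
    have hsum : deriv a t * ⟪gradient Φ (x t), x t - v t⟫
        + deriv a t * ⟪gradient Φ (x t), v t - xstar⟫
        = deriv a t * ⟪gradient Φ (x t), x t - xstar⟫ := by
      rw [← mul_add, ← inner_add_right, sub_add_sub_cancel]
    have hci : Φ (x t) - Φ xstar ≤ ⟪gradient Φ (x t), x t - xstar⟫ := by
      have h3 := hgrad (x t) xstar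
      have hneg : ⟪gradient Φ (x t), xstar - x t⟫ = -⟪gradient Φ (x t), x t - xstar⟫ := by
        rw [← inner_neg_right, neg_sub]
      rw [hneg] at h3
      linarith
    have hGG : 0 ≤ ⟪gradient Φ (x t), gradient Φ (x t)⟫ := real_inner_self_nonneg
    have hfrac1 : a t * ((deriv a t / a t) * ⟪gradient Φ (x t), x t - v t⟫)
        = deriv a t * ⟪gradient Φ (x t), x t - v t⟫ := by field_simp
    have hfrac2 : a t * (((deriv a t)^2 / a t) * ⟪gradient Φ (x t), gradient Φ (x t)⟫)
        = (deriv a t)^2 * ⟪gradient Φ (x t), gradient Φ (x t)⟫ := by field_simp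
    nlinarith [mul_nonneg hA0.le (sub_nonneg.2 hci), mul_nonneg (sq_nonneg (deriv a t)) hGG]
  have hEanti : AntitoneOn E (Set.Icc 0 t0) := by
    apply antitoneOn_of_deriv_nonpos (convex_Icc 0 t0) hEcont
    · intro t ht
      rw [interior_Icc] at ht
      exact ((hEderiv t ht).differentiableAt).differentiableWithinAt
    · intro t ht
      rw [interior_Icc] at ht
      exact hE'le t ht
  have h0I : (0:ℝ) ∈ Set.Icc (0:ℝ) t0 := ⟨le_rfl, ht0.le⟩
  have hEle : ∀ t ∈ Set.Icc (0:ℝ) t0, E t ≤ E 0 := fun t ht => hEanti h0I ht ht.1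
  have hvsq : ∀ t ∈ Set.Icc (0:ℝ) t0, ‖v t - xstar‖ ^ 2 ≤ 2 * E 0 := by
    intro t ht
    have h := hEle t ht
    rw [hE t] at h
    have hprod : 0 ≤ a t * (Φ (x t) - Φ xstar) := mul_nonneg (haPos t ht).le (hΦmin t)
    linarith
  have hvb : ∀ t ∈ Set.Icc (0:ℝ) t0, ‖v t - xstar‖ ≤ Real.sqrt (2 * E 0) :=
    fun t ht => Real.le_sqrt_of_sq_le (hvsq t ht)
  have hE0 : 0 ≤ E 0 := by
    have h := hE 0
    have h2 := mul_nonneg (haPos 0 h0I).le (hΦmin 0)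
    nlinarith [sq_nonneg ‖v 0 - xstar‖]
  set M := Real.sqrt (2 * E 0) with hM
  set K := max ‖x0 - xstar‖ M with hK
  have hM0 : 0 ≤ M := Real.sqrt_nonneg _
  have hK0 : 0 ≤ K := le_trans (norm_nonneg _) (le_max_left _ _)
  have hx00 : ‖x 0 - xstar‖ ≤ K := by rw [hx0']; exact le_max_left _ _
  have hbarrier : ∀ ε > (0:ℝ), ∀ t ∈ Set.Icc (0:ℝ) t0,
      ‖x t - xstar‖ ^ 2 ≤ K ^ 2 + ε * (1 + t) := by
    intro ε hε
    have hfc : ContinuousOn (fun s => ‖x s - xstar‖ ^ 2) (Set.Icc 0 t0) :=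
      ((hxCont.sub continuousOn_const).norm).pow 2
    have hBd : ∀ s : ℝ, HasDerivAt (fun r => K ^ 2 + ε * (1 + r)) ε s := by
      intro s
      have h1 : HasDerivAt (fun r : ℝ => 1 + r) 1 s := (hasDerivAt_id s).const_add 1
      have h2 := (h1.const_mul ε).const_add (K ^ 2)
      simpa using h2
    have hstart : ‖x 0 - xstar‖ ^ 2 ≤ K ^ 2 + ε * (1 + 0) := by
      have h2 : ‖x 0 - xstar‖ ^ 2 ≤ K ^ 2 := pow_le_pow_left₀ (norm_nonneg _) hx00 2
      nlinarith
    have hbound : ∀ s ∈ Set.Ico (0:ℝ) t0,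
        ‖x s - xstar‖ ^ 2 = K ^ 2 + ε * (1 + s) → 2 * ⟪deriv x s, x s - xstar⟫ < ε := by
      intro s hs hfB
      have hsIcc : s ∈ Set.Icc (0:ℝ) t0 := Set.Ico_subset_Icc_self hs
      have hspos : 0 < s := by
        rcases lt_or_eq_of_le hs.1 with h | h
        · exact h
        · exfalso
          rw [← h] at hfB
          have h2 : ‖x 0 - xstar‖ ^ 2 ≤ K ^ 2 := pow_le_pow_left₀ (norm_nonneg _) hx00 2
          nlinarith
      have hsIoo : s ∈ Set.Ioo (0:ℝ) t0 := ⟨hspos, hs.2⟩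
      have ha0 : (0:ℝ) < a s := haPos s hsIcc
      have hA0 : 0 < deriv a s := hdApos s hsIoo
      have hxeq : deriv x s = -((deriv a s / a s) • (x s - v s)
          + ((deriv a s)^2 / a s) • gradient Φ (x s)) := by
        have h := heqx s hsIcc
        rw [add_assoc] at h
        exact eq_neg_of_add_eq_zero_left h
      have hrM : M < ‖x s - xstar‖ := by
        by_contra hcon
        push_neg at hcon
        have h2 : ‖x s - xstar‖ ^ 2 ≤ M ^ 2 := pow_le_pow_left₀ (norm_nonneg _) hcon 2
        have h3 : M ^ 2 ≤ K ^ 2 := pow_le_pow_left₀ hM0 (le_max_right _ _) 2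
        nlinarith
      have hQ : 0 ≤ ⟪gradient Φ (x s), x s - xstar⟫ := by
        have h1 := hgrad (x s) xstar
        have hneg : ⟪gradient Φ (x s), xstar - x s⟫ = -⟪gradient Φ (x s), x s - xstar⟫ := by
          rw [← inner_neg_right, neg_sub]
        rw [hneg] at h1
        have h2 := hstar (x s)
        linarith
      have hXV : ‖x s - xstar‖ ^ 2 - M * ‖x s - xstar‖ ≤ ⟪x s - v s, x s - xstar⟫ := by
        have hid : x s - v s = (x s - xstar) - (v s - xstar) := by abel
        rw [hid, inner_sub_left]
        have hCS : ⟪v s - xstar, x s - xstar⟫ ≤ ‖v s - xstar‖ * ‖x s - xstar‖ :=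
          real_inner_le_norm _ _
        have hvM : ‖v s - xstar‖ ≤ M := hvb s hsIcc
        have hxx : ⟪x s - xstar, x s - xstar⟫ = ‖x s - xstar‖ ^ 2 :=
          real_inner_self_eq_norm_sq _
        have h4 : ‖v s - xstar‖ * ‖x s - xstar‖ ≤ M * ‖x s - xstar‖ :=
          mul_le_mul_of_nonneg_right hvM (norm_nonneg _)
        linarith
      have hinner : ⟪deriv x s, x s - xstar⟫
          = -((deriv a s / a s) * ⟪x s - v s, x s - xstar⟫
            + ((deriv a s)^2 / a s) * ⟪gradient Φ (x s), x s - xstar⟫) := by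
        rw [hxeq, inner_neg_left, inner_add_left, real_inner_smul_left, real_inner_smul_left]
      have hpos1 : 0 < deriv a s / a s := div_pos hA0 ha0
      have hpos2 : 0 ≤ (deriv a s)^2 / a s := div_nonneg (sq_nonneg _) ha0.le
      have hXVpos : 0 ≤ ⟪x s - v s, x s - xstar⟫ := by
        nlinarith [hXV, mul_nonneg (norm_nonneg (x s - xstar)) (sub_nonneg.2 hrM.le)]
      have hle0 : 2 * ⟪deriv x s, x s - xstar⟫ ≤ 0 := by
        rw [hinner]
        nlinarith [mul_nonneg hpos1.le hXVpos, mul_nonneg hpos2 hQ]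
      linarith
    exact fun t ht => image_le_of_deriv_right_lt_deriv_boundary
      (f := fun s => ‖x s - xstar‖ ^ 2)
      (f' := fun s => 2 * ⟪deriv x s, x s - xstar⟫)
      (B := fun r => K ^ 2 + ε * (1 + r)) (B' := fun _ => ε)
      hfc
      (fun s hs => (hnormsq x s (hxdiff s (Set.Ico_subset_Icc_self hs))).hasDerivWithinAt)
      hstart hBd hbound ht
  have hxb : ∀ t ∈ Set.Icc (0:ℝ) t0, ‖x t - xstar‖ ≤ K := by
    intro t ht
    have hsq2 : ‖x t - xstar‖ ^ 2 ≤ K ^ 2 := by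
      refine le_of_forall_pos_le_add ?_
      intro ε hε
      have h1t : (0:ℝ) < 1 + t0 := by linarith
      have h := hbarrier (ε / (1 + t0)) (div_pos hε h1t) t ht
      have h2 : (ε / (1 + t0)) * (1 + t) ≤ ε := by
        rw [div_mul_eq_mul_div, div_le_iff₀ h1t]
        nlinarith [ht.2, ht.1]
      linarith
    exact le_of_pow_le_pow_left₀ two_ne_zero hK0 hsq2
  intro t ht
  refine ⟨hvb t ht, ?_⟩
  have hMle : M ≤ 3 * Real.sqrt (E 0) := by
    have h9 : Real.sqrt (9 * E 0) = 3 * Real.sqrt (E 0) := by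
      rw [show (9:ℝ) * E 0 = 3^2 * E 0 by ring, Real.sqrt_mul (by positivity) _,
        Real.sqrt_sq (by norm_num)]
    rw [hM, ← h9]
    exact Real.sqrt_le_sqrt (by linarith)
  have hxK := hxb t ht
  have hKle : K ≤ ‖x0 - xstar‖ + 3 * Real.sqrt (E 0) := by
    apply max_le
    · nlinarith [Real.sqrt_nonneg (E 0)]
    · linarith [norm_nonneg (x0 - xstar)]
  linarith
end

section
/- Suppose (x, v, λ) with a(t) = (1/4)(∫₀ᵗ √(λ(s)) ds + c)² is a global solution of the first-order system (FO) on [0, ∞). Then E(0) > 0 and for every t ≥ 0: a(t) ≥ (c/2 + (θ^{2/(3p+1)} / ((p+1)·E(0)^{(p−1)/(3p+1)}))^{(3p+1)/4} · t^{(3p+1)/4})². -/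
open Set MeasureTheory Real Filter

section Aux

lemma stmt6_primitive_cont {f : ℝ → ℝ} (hf : ContinuousOn f (Ici 0)) :
    ContinuousOn (fun t => ∫ s in (0:ℝ)..t, f s) (Ici 0) := by
  intro t ht
  have ht0 : (0:ℝ) ≤ t := ht
  have h1 : ContinuousOn (fun u => ∫ s in (0:ℝ)..u, f s) (uIcc (0:ℝ) (t+1)) := by
    apply intervalIntegral.continuousOn_primitive_interval
    rw [uIcc_of_le (by linarith : (0:ℝ) ≤ t+1)]
    exact (hf.mono Icc_subset_Ici_self).integrableOn_compact isCompact_Icc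
  have hmem : uIcc (0:ℝ) (t+1) ∈ nhdsWithin t (Ici 0) := by
    rw [uIcc_of_le (by linarith : (0:ℝ) ≤ t+1), ← Ici_inter_Iic]
    exact Filter.inter_mem self_mem_nhdsWithin
      (mem_nhdsWithin_of_mem_nhds (Iic_mem_nhds (by linarith)))
  have h2 := h1 t (by rw [uIcc_of_le (by linarith : (0:ℝ) ≤ t+1)]; exact ⟨ht0, by linarith⟩)
  exact ContinuousWithinAt.mono_of_mem_nhdsWithin h2 hmem

lemma stmt6_primitive_deriv {f : ℝ → ℝ} (hf : ContinuousOn f (Ici 0)) {t : ℝ} (ht : 0 < t) :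
    HasDerivAt (fun u => ∫ s in (0:ℝ)..u, f s) (f t) t := by
  apply intervalIntegral.integral_hasDerivAt_right
  · apply ContinuousOn.intervalIntegrable
    apply hf.mono
    rw [uIcc_of_le ht.le]
    exact Icc_subset_Ici_self
  · exact ⟨Ioi 0, isOpen_Ioi.mem_nhds ht,
      ((hf.mono Ioi_subset_Ici_self).aestronglyMeasurable measurableSet_Ioi)⟩
  · exact hf.continuousAt (Ici_mem_nhds ht)

lemma stmt6_mono_le {f : ℝ → ℝ} (hc : ContinuousOn f (Ici 0))
    (hd : ∀ s : ℝ, 0 < s → ∃ f', HasDerivAt f f' s ∧ 0 ≤ f') {t : ℝ} (ht : 0 ≤ t) :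
    f 0 ≤ f t := by
  have hmono : MonotoneOn f (Ici 0) := by
    apply monotoneOn_of_deriv_nonneg (convex_Ici 0) hc
    · intro s hs
      rw [interior_Ici] at hs
      obtain ⟨f', h, _⟩ := hd s hs
      exact h.differentiableAt.differentiableWithinAt
    · intro s hs
      rw [interior_Ici] at hs
      obtain ⟨f', h, h0⟩ := hd s hs
      rw [h.deriv]; exact h0
  exact hmono self_mem_Ici ht ht

lemma stmt6_mono_ge {f : ℝ → ℝ} (hc : ContinuousOn f (Ici 0))
    (hd : ∀ s : ℝ, 0 < s → ∃ f', HasDerivAt f f' s ∧ f' ≤ 0) {t : ℝ} (ht : 0 ≤ t) :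
    f t ≤ f 0 := by
  have h1 := stmt6_mono_le (f := fun u => -f u) hc.neg ?_ ht
  · have h2 : -f 0 ≤ -f t := h1
    linarith
  · intro s hs
    obtain ⟨f', h, h0⟩ := hd s hs
    exact ⟨-f', h.neg, by linarith⟩

lemma stmt6_add_rpow_le {x y r : ℝ} (hx : 0 ≤ x) (hy : 0 ≤ y) (hr : 1 ≤ r) :
    x ^ r + y ^ r ≤ (x + y) ^ r := by
  lift x to NNReal using hx
  lift y to NNReal using hy
  have := NNReal.add_rpow_le_rpow_add x y hr
  exact_mod_cast this

lemma stmt6_tangent {γ u u₀ : ℝ} (hγ : 0 ≤ γ) (hu : 0 ≤ u) (hu₀ : 0 < u₀)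
    (hcase : γ = 0 ∨ 0 < u) :
    (1+γ) * u₀ ^ (-γ) - γ * u₀ ^ (-γ-1) * u ≤ u ^ (-γ) := by
  rcases eq_or_lt_of_le hγ with h | hγpos
  · simp [← h]
  have hu' : 0 < u := by
    rcases hcase with h | h
    · exact absurd h hγpos.ne'
    · exact h
  set v := u / u₀ with hv
  have hvpos : 0 < v := div_pos hu' hu₀
  have h1γ : (0:ℝ) < 1 + γ := by linarith
  have key : 1 + γ ≤ v ^ (-γ) + γ * v := by
    have h := Real.geom_mean_le_arith_mean2_weighted
      (w₁ := 1/(1+γ)) (w₂ := γ/(1+γ)) (p₁ := (1+γ) * v ^ (-γ)) (p₂ := (1+γ) * v)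
      (by positivity) (by positivity)
      (by positivity) (by positivity) (by field_simp)
    have e1 : ((1+γ) * v ^ (-γ)) ^ (1/(1+γ)) * ((1+γ) * v) ^ (γ/(1+γ)) = 1 + γ := by
      rw [Real.mul_rpow h1γ.le (by positivity),
          Real.mul_rpow h1γ.le hvpos.le,
          ← Real.rpow_mul hvpos.le]
      rw [show (1+γ)^(1/(1+γ)) * v ^ (-γ*(1/(1+γ))) * ((1+γ)^(γ/(1+γ)) * v^(γ/(1+γ))) =
          ((1+γ)^(1/(1+γ)) * (1+γ)^(γ/(1+γ))) * (v ^ (-γ*(1/(1+γ))) * v^(γ/(1+γ))) from by ring,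
          ← Real.rpow_add h1γ, ← Real.rpow_add hvpos]
      rw [show 1/(1+γ) + γ/(1+γ) = 1 from by field_simp,
          show -γ*(1/(1+γ)) + γ/(1+γ) = 0 from by ring]
      simp
    rw [e1] at h
    have e2 : 1/(1+γ) * ((1+γ) * v ^ (-γ)) + γ/(1+γ) * ((1+γ) * v) = v ^ (-γ) + γ * v := by
      field_simp
    linarith [e2 ▸ h]
  have hu₀γ : (0:ℝ) < u₀ ^ (-γ) := Real.rpow_pos_of_pos hu₀ _
  have e4 : v ^ (-γ) * u₀ ^ (-γ) = u ^ (-γ) := by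
    rw [hv, Real.div_rpow hu hu₀.le, div_mul_cancel₀]
    exact hu₀γ.ne'
  have e5 : u₀ ^ (-γ-1) = u₀ ^ (-γ) / u₀ := by
    rw [show -γ-1 = -γ + (-1) from by ring, Real.rpow_add hu₀, Real.rpow_neg_one]
    ring
  have hfin := mul_le_mul_of_nonneg_right key hu₀γ.le
  have e6 : (v^(-γ) + γ*v) * u₀^(-γ) = u^(-γ) + γ * u₀^(-γ-1) * u := by
    calc (v^(-γ)+γ*v)*u₀^(-γ) = v^(-γ)*u₀^(-γ) + γ*(u/u₀)*u₀^(-γ) := by rw [hv]; ring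
    _ = u^(-γ) + γ*(u₀^(-γ)/u₀)*u := by rw [e4]; ring
    _ = u^(-γ) + γ * u₀^(-γ-1) * u := by rw [← e5]
  rw [e6] at hfin
  linarith

lemma stmt6_convex_grad {d : ℕ} {Φ : EuclideanSpace ℝ (Fin d) → ℝ}
    (hconv : ConvexOn ℝ Set.univ Φ) (hsmooth : ContDiff ℝ 2 Φ)
    (y z : EuclideanSpace ℝ (Fin d)) :
    Φ y + @inner ℝ _ _ (gradient Φ y) (z - y) ≤ Φ z := by
  have hdiff : DifferentiableAt ℝ Φ y := (hsmooth.differentiable two_ne_zero).differentiableAt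
  have hgF : HasFDerivAt Φ ((InnerProductSpace.toDual ℝ _) (gradient Φ y)) y :=
    hdiff.hasGradientAt.hasFDerivAt
  set ψ : ℝ → ℝ := Φ ∘ (fun s : ℝ => y + s • (z - y)) with hψ
  have hψconv : ConvexOn ℝ Set.univ ψ := by
    have h := hconv.comp_affineMap (AffineMap.lineMap y z)
    have heq : ψ = Φ ∘ (AffineMap.lineMap y z) := by
      funext s
      simp only [hψ, Function.comp_apply, AffineMap.lineMap_apply_module]
      congr 1
      module
    rw [heq]
    simpa using h
  have hline : HasDerivAt (fun s : ℝ => y + s • (z - y)) (z - y) 0 := by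
    have h := ((hasDerivAt_id (0:ℝ)).smul_const (z - y)).const_add y
    simpa using h
  have hψd : HasDerivAt ψ (@inner ℝ _ _ (gradient Φ y) (z - y)) 0 := by
    have hgF' : HasFDerivAt Φ ((InnerProductSpace.toDual ℝ _) (gradient Φ y))
        ((fun s : ℝ => y + s • (z - y)) 0) := by
      rw [show (fun s : ℝ => y + s • (z - y)) 0 = y from by simp]; exact hgF
    have hcomp := hgF'.comp_hasDerivAt 0 hline
    simpa [InnerProductSpace.toDual_apply_apply] using hcomp
  have key := hψconv.le_slope_of_hasDerivAt (mem_univ (0:ℝ)) (mem_univ (1:ℝ)) one_pos hψd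
  have hs : slope ψ 0 1 = Φ z - Φ y := by
    rw [slope_def_field]
    have h1 : ψ 1 = Φ z := by
      simp only [hψ, Function.comp_apply, one_smul]
      congr 1
      module
    have h0' : ψ 0 = Φ y := by simp [hψ]
    rw [h1, h0']
    ring
  rw [hs] at key
  linarith

end Aux

set_option maxHeartbeats 2000000

theorem stmt_6 (d p : ℕ) (hd : 1 ≤ d) (hp : 1 ≤ p)
    (Φ : EuclideanSpace ℝ (Fin d) → ℝ)
    (hconv : ConvexOn ℝ Set.univ Φ) (hsmooth : ContDiff ℝ 2 Φ)
    (θ c : ℝ) (hθ : θ ∈ Set.Ioo (0:ℝ) 1) (hc : 0 < c)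
    (x0 v0 xstar : EuclideanSpace ℝ (Fin d)) (hx0 : gradient Φ x0 ≠ 0)
    (hstar : ∀ y, Φ xstar ≤ Φ y)
    (x v : ℝ → EuclideanSpace ℝ (Fin d)) (lam : ℝ → ℝ) (a : ℝ → ℝ)
    (hlamcont : ContinuousOn lam (Set.Ici 0))
    (hlampos : ∀ t ∈ Set.Ici (0:ℝ), 0 < lam t)
    (ha : ∀ t, a t = (1/4) * ((∫ s in (0:ℝ)..t, Real.sqrt (lam s)) + c) ^ 2)
    (hxdiff : ∀ t ∈ Set.Ici (0:ℝ), DifferentiableAt ℝ x t)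
    (hvdiff : ∀ t ∈ Set.Ici (0:ℝ), DifferentiableAt ℝ v t)
    (heqv : ∀ t ∈ Set.Ici (0:ℝ), deriv v t + deriv a t • gradient Φ (x t) = 0)
    (heqx : ∀ t ∈ Set.Ici (0:ℝ),
      deriv x t + (deriv a t / a t) • (x t - v t)
        + ((deriv a t) ^ 2 / a t) • gradient Φ (x t) = 0)
    (halg : ∀ t ∈ Set.Ici (0:ℝ), (lam t) ^ p * ‖gradient Φ (x t)‖ ^ (p - 1) = θ)
    (hx0' : x 0 = x0) (hv0' : v 0 = v0)
    (E : ℝ → ℝ)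
    (hE : ∀ t, E t = a t * (Φ (x t) - Φ xstar) + (1/2) * ‖v t - xstar‖ ^ 2) :
    0 < E 0 ∧
    ∀ t ∈ Set.Ici (0:ℝ),
      (c / 2 +
          (θ ^ (2 / (3 * (p:ℝ) + 1)) /
              (((p:ℝ) + 1) * (E 0) ^ (((p:ℝ) - 1) / (3 * (p:ℝ) + 1)))) ^
              ((3 * (p:ℝ) + 1) / 4) *
            t ^ ((3 * (p:ℝ) + 1) / 4)) ^ 2 ≤ a t := by
  obtain ⟨hθ0, hθ1⟩ := hθ
  have hpR : (1:ℝ) ≤ (p:ℝ) := by exact_mod_cast hp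
  have hp1R : (0:ℝ) < (p:ℝ) + 1 := by linarith
  have hΦd : ∀ y, DifferentiableAt ℝ Φ y :=
    fun y => (hsmooth.differentiable two_ne_zero).differentiableAt
  have hgF : ∀ y, HasFDerivAt Φ ((InnerProductSpace.toDual ℝ _) (gradient Φ y)) y :=
    fun y => (hΦd y).hasGradientAt.hasFDerivAt
  have hcvx : ∀ y z, Φ y + @inner ℝ _ _ (gradient Φ y) (z - y) ≤ Φ z :=
    stmt6_convex_grad hconv hsmooth
  have hgradcont : Continuous (fun y => gradient Φ y) := by
    have h1 : Continuous (fderiv ℝ Φ) := hsmooth.continuous_fderiv two_ne_zero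
    have h2 : (fun y => gradient Φ y)
        = fun y => (InnerProductSpace.toDual ℝ _).symm (fderiv ℝ Φ y) := rfl
    rw [h2]
    exact (LinearIsometryEquiv.continuous _).comp h1
  set I : ℝ → ℝ := fun t => ∫ s in (0:ℝ)..t, Real.sqrt (lam s) with hIdef
  set b : ℝ → ℝ := fun t => (I t + c)/2 with hbdef
  have hsqc : ContinuousOn (fun s => Real.sqrt (lam s)) (Ici 0) :=
    Real.continuous_sqrt.comp_continuousOn hlamcont
  have hIcont : ContinuousOn I (Ici 0) := stmt6_primitive_cont hsqc
  have hIderiv : ∀ t : ℝ, 0 < t → HasDerivAt I (Real.sqrt (lam t)) t :=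
    fun t ht => stmt6_primitive_deriv hsqc ht
  have hInn : ∀ t : ℝ, 0 ≤ t → 0 ≤ I t := fun t ht =>
    intervalIntegral.integral_nonneg ht (fun u _ => Real.sqrt_nonneg _)
  have hbpos : ∀ t : ℝ, 0 ≤ t → 0 < b t := by
    intro t ht
    have := hInn t ht
    show 0 < (I t + c)/2
    linarith
  have haB : ∀ t, a t = (b t)^2 := by
    intro t
    rw [ha t]
    show (1/4) * (I t + c)^2 = ((I t + c)/2)^2
    ring
  have hbcont : ContinuousOn b (Ici 0) := (hIcont.add continuousOn_const).div_const 2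
  have hbD : ∀ t : ℝ, 0 < t → HasDerivAt b (Real.sqrt (lam t)/2) t := fun t ht =>
    ((hIderiv t ht).add_const c).div_const 2
  have haD : ∀ t : ℝ, 0 < t → HasDerivAt a (b t * Real.sqrt (lam t)) t := by
    intro t ht
    have h2 := (((hIderiv t ht).add_const c).pow 2).const_mul (1/4 : ℝ)
    have h3 : HasDerivAt a ((1/4) * ((2:ℕ) * (I t + c)^(2-1) * Real.sqrt (lam t))) t :=
      h2.congr_of_eventuallyEq (Filter.Eventually.of_forall (fun u => ha u))
    convert h3 using 1
    show (I t + c)/2 * Real.sqrt (lam t) = (1/4) * ((2:ℕ) * (I t + c)^(2-1) * Real.sqrt (lam t))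
    push_cast
    ring
  have haD' : ∀ t : ℝ, 0 < t → deriv a t = b t * Real.sqrt (lam t) :=
    fun t ht => (haD t ht).deriv
  set g : ℝ → ℝ := fun t => ‖gradient Φ (x t)‖ with hgdef
  set W : ℝ → ℝ := fun t => (b t)^2 * lam t * (g t)^2 with hWdef
  have hgnn : ∀ t : ℝ, 0 ≤ g t := fun t => norm_nonneg _
  have hWnn : ∀ t : ℝ, 0 ≤ t → 0 ≤ W t := by
    intro t ht
    have h1 := (hlampos t ht).le
    have h2 := hgnn t
    show 0 ≤ (b t)^2 * lam t * (g t)^2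
    positivity
  have hxcont : ContinuousOn x (Ici 0) :=
    fun t ht => (hxdiff t ht).continuousAt.continuousWithinAt
  have hvcont : ContinuousOn v (Ici 0) :=
    fun t ht => (hvdiff t ht).continuousAt.continuousWithinAt
  have hgcont : ContinuousOn g (Ici 0) := (hgradcont.comp_continuousOn hxcont).norm
  have hWcont : ContinuousOn W (Ici 0) := ((hbcont.pow 2).mul hlamcont).mul (hgcont.pow 2)
  set SW : ℝ → ℝ := fun t => ∫ s in (0:ℝ)..t, W s with hSWdef
  have hSWcont : ContinuousOn SW (Ici 0) := stmt6_primitive_cont hWcont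
  have hSWD : ∀ t : ℝ, 0 < t → HasDerivAt SW (W t) t :=
    fun t ht => stmt6_primitive_deriv hWcont ht
  have hacont : ContinuousOn a (Ici 0) := by
    have h1 : ContinuousOn (fun t => (1/4 : ℝ)*((I t) + c)^2) (Ici 0) :=
      continuousOn_const.mul ((hIcont.add continuousOn_const).pow 2)
    exact h1.congr (fun t _ => ha t)
  have hEcont : ContinuousOn E (Ici 0) := by
    have h1 : ContinuousOn (fun t => a t * (Φ (x t) - Φ xstar) + (1/2) * ‖v t - xstar‖ ^ 2)
        (Ici 0) := by
      apply ContinuousOn.add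
      · exact hacont.mul ((hsmooth.continuous.comp_continuousOn hxcont).sub continuousOn_const)
      · exact continuousOn_const.mul (((hvcont.sub continuousOn_const).norm).pow 2)
    exact h1.congr (fun t _ => hE t)
  have hEnn : ∀ t : ℝ, 0 ≤ t → 0 ≤ E t := by
    intro t ht
    rw [hE t, haB t]
    have h1 : Φ xstar ≤ Φ (x t) := hstar _
    have h2 : (0:ℝ) ≤ ‖v t - xstar‖^2 := by positivity
    nlinarith [sq_nonneg (b t)]
  -- E 0 > 0
  have hE0pos : 0 < E 0 := by
    have hI0 : I 0 = 0 := intervalIntegral.integral_same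
    have hb0 : b 0 = c/2 := by show (I 0 + c)/2 = c/2; rw [hI0]; ring
    have hΦgt : Φ xstar < Φ x0 := by
      rcases (hstar x0).lt_or_eq with h | h
      · exact h
      · exfalso
        apply hx0
        have hmin : IsLocalMin Φ x0 := Filter.Eventually.of_forall (fun y => h ▸ hstar y)
        have hf0 : fderiv ℝ Φ x0 = 0 := hmin.fderiv_eq_zero
        have h2 : gradient Φ x0 = (InnerProductSpace.toDual ℝ _).symm (fderiv ℝ Φ x0) := rfl
        rw [h2, hf0, map_zero]
    rw [hE 0, hx0', haB 0, hb0]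
    have h3 : 0 < (c/2)^2 * (Φ x0 - Φ xstar) := by
      apply mul_pos (by positivity)
      linarith
    have h4 : (0:ℝ) ≤ ‖v 0 - xstar‖^2 := by positivity
    nlinarith
  -- energy derivative bound
  have hED : ∀ t : ℝ, 0 < t → ∃ E', HasDerivAt E E' t ∧ E' ≤ -(W t) := by
    intro t ht
    have hx' := (hxdiff t ht.le).hasDerivAt
    have hv' := (hvdiff t ht.le).hasDerivAt
    have hΦx : HasDerivAt (fun u => Φ (x u))
        (@inner ℝ _ _ (gradient Φ (x t)) (deriv x t)) t := by
      have hcomp := (hgF (x t)).comp_hasDerivAt t hx'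
      simpa [Function.comp_def, InnerProductSpace.toDual_apply_apply] using hcomp
    have hnrm : HasDerivAt (fun u => ‖v u - xstar‖^2)
        (2 * @inner ℝ _ _ (deriv v t) (v t - xstar)) t := by
      have h1 : HasDerivAt (fun u => v u - xstar) (deriv v t) t := hv'.sub_const xstar
      have h2 := h1.inner ℝ h1
      have heq2 : (fun u => ‖v u - xstar‖^2)
          = fun u => @inner ℝ _ _ (v u - xstar) (v u - xstar) := by
        funext u; rw [real_inner_self_eq_norm_sq]
      rw [heq2]
      refine h2.congr_deriv ?_
      rw [real_inner_comm]; ring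
    have hEd : HasDerivAt E (b t * Real.sqrt (lam t) * (Φ (x t) - Φ xstar)
        + a t * @inner ℝ _ _ (gradient Φ (x t)) (deriv x t)
        + (1/2) * (2 * @inner ℝ _ _ (deriv v t) (v t - xstar))) t := by
      have h := ((haD t ht).mul (hΦx.sub_const (Φ xstar))).add (hnrm.const_mul (1/2:ℝ))
      exact h.congr_of_eventuallyEq (Filter.Eventually.of_forall (fun u => hE u))
    refine ⟨_, hEd, ?_⟩
    have hat : 0 < a t := by rw [haB t]; exact pow_pos (hbpos t ht.le) 2
    have ha' : deriv a t = b t * Real.sqrt (lam t) := haD' t ht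
    have ha'nn : 0 ≤ deriv a t := by
      rw [ha']
      exact mul_nonneg (hbpos t ht.le).le (Real.sqrt_nonneg _)
    have hsq : (deriv a t)^2 = (b t)^2 * lam t := by
      rw [ha', mul_pow, Real.sq_sqrt (hlampos t ht.le).le]
    have hve' : deriv v t = -(deriv a t • gradient Φ (x t)) :=
      eq_neg_of_add_eq_zero_left (heqv t ht.le)
    have hvinner : @inner ℝ _ _ (deriv v t) (v t - xstar)
        = -(deriv a t * @inner ℝ _ _ (gradient Φ (x t)) (v t - xstar)) := by
      rw [hve', inner_neg_left, real_inner_smul_left]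
    have hxe' : deriv x t = -((deriv a t / a t) • (x t - v t)
        + ((deriv a t)^2 / a t) • gradient Φ (x t)) := by
      apply eq_neg_of_add_eq_zero_left
      rw [← add_assoc]
      exact heqx t ht.le
    have hxinner : a t * @inner ℝ _ _ (gradient Φ (x t)) (deriv x t)
        = -(deriv a t * @inner ℝ _ _ (gradient Φ (x t)) (x t - v t))
          - (deriv a t)^2 * (g t)^2 := by
      rw [hxe', inner_neg_right, inner_add_right, real_inner_smul_right, real_inner_smul_right,
        real_inner_self_eq_norm_sq]
      show a t * -(deriv a t / a t * inner ℝ (gradient Φ (x t)) (x t - v t)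
        + deriv a t ^ 2 / a t * ‖gradient Φ (x t)‖ ^ 2)
        = -(deriv a t * inner ℝ (gradient Φ (x t)) (x t - v t))
          - deriv a t ^ 2 * ‖gradient Φ (x t)‖ ^ 2
      field_simp
      ring
    have hconvineq : Φ (x t) - Φ xstar
        ≤ @inner ℝ _ _ (gradient Φ (x t)) (x t - xstar) := by
      have h := hcvx (x t) xstar
      have h2 : @inner ℝ _ _ (gradient Φ (x t)) (xstar - x t)
          = -@inner ℝ _ _ (gradient Φ (x t)) (x t - xstar) := by
        rw [← inner_neg_right]
        congr 1
        abel
      rw [h2] at h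
      linarith
    have hsplit : deriv a t * @inner ℝ _ _ (gradient Φ (x t)) (x t - v t)
        + deriv a t * @inner ℝ _ _ (gradient Φ (x t)) (v t - xstar)
        = deriv a t * @inner ℝ _ _ (gradient Φ (x t)) (x t - xstar) := by
      rw [← mul_add, ← inner_add_right]
      congr 2
      abel
    have hmul := mul_le_mul_of_nonneg_left hconvineq ha'nn
    have hWt : W t = (deriv a t)^2 * (g t)^2 := by
      show (b t)^2 * lam t * (g t)^2 = (deriv a t)^2 * (g t)^2
      rw [hsq]
    rw [← ha', hxinner, hvinner, hWt]
    linarith [hsplit, hmul]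
  -- integral bound
  have hSWle : ∀ t : ℝ, 0 ≤ t → SW t ≤ E 0 := by
    intro t ht
    have hF := stmt6_mono_ge (f := fun u => E u + SW u) (hEcont.add hSWcont)
      (by
        intro s hs
        obtain ⟨E', hE', hle⟩ := hED s hs
        exact ⟨E' + W s, hE'.add (hSWD s hs), by linarith⟩) ht
    have hF' : E t + SW t ≤ E 0 + SW 0 := hF
    have hSW0 : SW 0 = 0 := intervalIntegral.integral_same
    have := hEnn t ht
    rw [hSW0] at hF'
    linarith
  -- constants
  set γ : ℝ := ((p:ℝ)-1)/(2*((p:ℝ)+1)) with hγdef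
  set q : ℝ := 2/((p:ℝ)+1) with hqdef
  set C : ℝ := θ^(1/((p:ℝ)+1))/((p:ℝ)+1) with hCdef
  have hγ0 : 0 ≤ γ := by
    rw [hγdef]
    apply div_nonneg <;> linarith
  have hq0 : 0 < q := by rw [hqdef]; positivity
  have hCpos : 0 < C := by rw [hCdef]; positivity
  have hgpos2 : 2 ≤ p → ∀ t : ℝ, 0 ≤ t → 0 < g t := by
    intro hp2 t ht
    rcases (hgnn t).lt_or_eq with h | h
    · exact h
    · exfalso
      have h1 := halg t ht
      have h2 : ‖gradient Φ (x t)‖ = 0 := h.symm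
      rw [h2, zero_pow (by omega : p - 1 ≠ 0), mul_zero] at h1
      linarith
  have hWcase : ∀ t : ℝ, 0 ≤ t → (γ = 0 ∨ 0 < W t) := by
    intro t ht
    rcases Nat.lt_or_ge p 2 with h2 | h2
    · left
      have hp1 : p = 1 := by omega
      rw [hγdef, hp1]
      norm_num
    · right
      have h3 := hgpos2 h2 t ht
      have h4 := hbpos t ht
      have h5 := hlampos t ht
      show 0 < (b t)^2 * lam t * (g t)^2
      positivity
  -- the key derivative identity
  have hkey : ∀ t : ℝ, 0 < t →
      q * (b t)^(q-1) * (Real.sqrt (lam t)/2) = C * (W t)^(-γ) := by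
    intro t ht
    have hB : 0 < b t := hbpos t ht.le
    have hL : 0 < lam t := hlampos t ht.le
    rcases Nat.lt_or_ge p 2 with hple | hp2
    · -- p = 1
      have hp1 : p = 1 := by omega
      have hpc : (p:ℝ) = 1 := by rw [hp1]; norm_num
      have hγ1 : γ = 0 := by rw [hγdef, hpc]; norm_num
      have hq1 : q = 1 := by rw [hqdef, hpc]; norm_num
      have hC1 : C = θ^((1:ℝ)/2)/2 := by rw [hCdef, hpc]; norm_num
      have hLθ : lam t = θ := by
        have h1 := halg t ht.le
        rw [hp1] at h1
        simpa using h1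
      rw [hγ1, hq1, hC1, neg_zero, Real.rpow_zero, mul_one, sub_self, Real.rpow_zero,
        hLθ, Real.sqrt_eq_rpow]
      ring
    · -- p ≥ 2
      have hG : 0 < g t := hgpos2 hp2 t ht.le
      have hGn : (0:ℝ) ≤ ‖gradient Φ (x t)‖ := norm_nonneg _
      have hp1ne : ((p:ℝ)+1) ≠ 0 := hp1R.ne'
      have hstar1 : (lam t) ^ ((p:ℝ)/((p:ℝ)+1)) * (g t) ^ (((p:ℝ)-1)/((p:ℝ)+1))
          = θ ^ ((1:ℝ)/((p:ℝ)+1)) := by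
        have h1 := halg t ht.le
        have h2 : ((lam t)^p * ‖gradient Φ (x t)‖^(p-1)) ^ ((1:ℝ)/((p:ℝ)+1))
            = θ ^ ((1:ℝ)/((p:ℝ)+1)) := by rw [h1]
        rw [Real.mul_rpow (by positivity) (by positivity),
          ← Real.rpow_natCast (lam t) p, ← Real.rpow_natCast ‖gradient Φ (x t)‖ (p-1),
          ← Real.rpow_mul hL.le, ← Real.rpow_mul hGn] at h2
        rw [show ((p:ℕ):ℝ) * ((1:ℝ)/((p:ℝ)+1)) = (p:ℝ)/((p:ℝ)+1) from by push_cast; ring,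
          show (((p-1:ℕ)):ℝ) * ((1:ℝ)/((p:ℝ)+1)) = ((p:ℝ)-1)/((p:ℝ)+1) from by
            rw [Nat.cast_sub hp]; push_cast; ring] at h2
        exact h2
      have e2 : (W t)^(-γ) = (b t)^(2*(-γ)) * ((lam t)^(-γ) * (g t)^(2*(-γ))) := by
        show ((b t)^2 * lam t * (g t)^2)^(-γ) = _
        rw [Real.mul_rpow (by positivity) (by positivity),
          Real.mul_rpow (by positivity) (by positivity),
          ← Real.rpow_natCast (b t) 2, ← Real.rpow_natCast (g t) 2,
          ← Real.rpow_mul hB.le, ← Real.rpow_mul hG.le]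
        push_cast
        ring
      have hq1γ : q - 1 = 2*(-γ) := by
        rw [hqdef, hγdef]
        field_simp
        ring
      have S : q * (Real.sqrt (lam t)/2) = C * ((lam t)^(-γ) * (g t)^(2*(-γ))) := by
        rw [hCdef, ← hstar1]
        rw [show (lam t) ^ ((p:ℝ)/((p:ℝ)+1)) * (g t) ^ (((p:ℝ)-1)/((p:ℝ)+1)) / ((p:ℝ)+1)
            * ((lam t)^(-γ) * (g t)^(2*(-γ)))
            = (1/((p:ℝ)+1)) * (((lam t) ^ ((p:ℝ)/((p:ℝ)+1)) * (lam t)^(-γ))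
              * ((g t) ^ (((p:ℝ)-1)/((p:ℝ)+1)) * (g t)^(2*(-γ)))) from by ring,
          ← Real.rpow_add hL, ← Real.rpow_add hG]
        rw [show (p:ℝ)/((p:ℝ)+1) + -γ = 1/2 from by rw [hγdef]; field_simp; ring,
          show ((p:ℝ)-1)/((p:ℝ)+1) + 2*(-γ) = 0 from by rw [hγdef]; field_simp; ring]
        rw [Real.rpow_zero, Real.sqrt_eq_rpow, hqdef]
        ring
      calc q * (b t)^(q-1) * (Real.sqrt (lam t)/2)
          = (b t)^(2*(-γ)) * (q * (Real.sqrt (lam t)/2)) := by rw [hq1γ]; ring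
        _ = (b t)^(2*(-γ)) * (C * ((lam t)^(-γ) * (g t)^(2*(-γ)))) := by rw [S]
        _ = C * (W t)^(-γ) := by rw [e2]; ring
  have hGD : ∀ t : ℝ, 0 < t → HasDerivAt (fun u => (b u)^q) (C * (W t)^(-γ)) t := by
    intro t ht
    have h := (hbD t ht).rpow_const (p := q) (Or.inl (hbpos t ht.le).ne')
    rw [← hkey t ht]
    convert h using 1
    ring
  have hGcont : ContinuousOn (fun u => (b u)^q) (Ici 0) :=
    hbcont.rpow_const (fun u hu => Or.inl (hbpos u hu).ne')
  have hE0ne : E 0 ≠ 0 := hE0pos.ne'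
  -- main lower bound for b^q
  have hmain : ∀ T : ℝ, 0 < T → (b 0)^q + C * (E 0)^(-γ) * T^(1+γ) ≤ (b T)^q := by
    intro T hT
    set u₀ : ℝ := E 0 / T with hu₀def
    have hu₀pos : 0 < u₀ := div_pos hE0pos hT
    set K₁ : ℝ := C*(1+γ)*u₀^(-γ) with hK₁
    set K₂ : ℝ := C*γ*u₀^(-γ-1) with hK₂
    have hK₂nn : 0 ≤ K₂ := by
      rw [hK₂]
      have := Real.rpow_nonneg hu₀pos.le (-γ-1)
      positivity
    have hψcont : ContinuousOn (fun s => (b s)^q - K₁*s + K₂ * SW s) (Ici 0) :=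
      (hGcont.sub (continuousOn_const.mul continuousOn_id)).add
        (continuousOn_const.mul hSWcont)
    have hψ := stmt6_mono_le (f := fun s => (b s)^q - K₁*s + K₂ * SW s) hψcont
      (by
        intro s hs
        refine ⟨C*(W s)^(-γ) - K₁ + K₂ * W s, ?_, ?_⟩
        · have hd1 : HasDerivAt (fun u : ℝ => K₁ * u) K₁ s := by
            simpa using (hasDerivAt_id s).const_mul K₁
          exact ((hGD s hs).sub hd1).add ((hSWD s hs).const_mul K₂)
        · have htan := stmt6_tangent hγ0 (hWnn s hs.le) hu₀pos (hWcase s hs.le)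
          have hmul2 := mul_le_mul_of_nonneg_left htan hCpos.le
          rw [hK₁, hK₂]
          nlinarith [hmul2]) hT.le
    have hψ' : (b 0)^q - K₁*0 + K₂*SW 0 ≤ (b T)^q - K₁*T + K₂*SW T := hψ
    have hSW0 : SW 0 = 0 := intervalIntegral.integral_same
    have hSWT := hSWle T hT.le
    have hK₂E := mul_le_mul_of_nonneg_left hSWT hK₂nn
    have step1 : (b 0)^q + (K₁*T - K₂*(E 0)) ≤ (b T)^q := by
      rw [hSW0] at hψ'
      linarith
    have hTne : (T:ℝ) ≠ 0 := hT.ne'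
    have e1 : u₀ ^ (-γ) = (E 0)^(-γ) * T^γ := by
      rw [hu₀def, Real.div_rpow hE0pos.le hT.le, Real.rpow_neg hT.le]
      field_simp
    have e2 : u₀ ^ (-γ-1) = (E 0)^(-γ-1) * T^(γ+1) := by
      rw [hu₀def, Real.div_rpow hE0pos.le hT.le,
        show -γ-1 = -(γ+1) from by ring, Real.rpow_neg hT.le]
      rw [show -(γ+1) = -γ-1 from by ring]
      field_simp
    have e3 : (E 0)^(-γ-1) * (E 0) = (E 0)^(-γ) := by
      rw [← Real.rpow_add_one hE0ne (-γ-1)]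
      norm_num
    have e4 : T^γ * T = T^(γ+1) := by rw [Real.rpow_add_one hTne]
    have e5 : K₁*T - K₂*(E 0) = C*(E 0)^(-γ)*T^(γ+1) := by
      rw [hK₁, hK₂, e1, e2, ← e4, ← e3]
      ring
    rw [show (1:ℝ)+γ = γ+1 from by ring]
    linarith [step1, e5.symm.le, e5.le]
  -- conclusion
  refine ⟨hE0pos, ?_⟩
  intro t ht
  have hb0 : b 0 = c/2 := by
    show (I 0 + c)/2 = c/2
    rw [show I 0 = 0 from intervalIntegral.integral_same]
    ring
  rcases eq_or_lt_of_le (mem_Ici.mp ht) with h0 | hT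
  · rw [← h0, Real.zero_rpow (by positivity : ((3*(p:ℝ)+1)/4) ≠ 0), mul_zero, add_zero,
      haB 0, hb0]
  · set m : ℝ := (3*(p:ℝ)+1)/4 with hm
    set Kst : ℝ := (θ ^ (2 / (3 * (p:ℝ) + 1)) /
        (((p:ℝ) + 1) * (E 0) ^ (((p:ℝ) - 1) / (3 * (p:ℝ) + 1)))) ^ m with hKst
    set D : ℝ := C * (E 0)^(-γ) * t^(1+γ) with hD
    have hDnn : 0 ≤ D := by
      rw [hD]
      exact mul_nonneg (mul_nonneg hCpos.le (Real.rpow_nonneg hE0pos.le _))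
        (Real.rpow_nonneg hT.le _)
    set r : ℝ := ((p:ℝ)+1)/2 with hr
    have hr1 : (1:ℝ) ≤ r := by rw [hr]; linarith
    have hqr : q * r = 1 := by rw [hqdef, hr]; field_simp
    have hbq : ∀ s:ℝ, 0 ≤ s → ((b s)^q)^r = b s := by
      intro s hs
      rw [← Real.rpow_mul (hbpos s hs).le, hqr, Real.rpow_one]
    have h1 : ((b 0)^q + D)^r ≤ ((b t)^q)^r := by
      apply Real.rpow_le_rpow _ (hmain t hT) (by rw [hr]; positivity)
      exact add_nonneg (Real.rpow_nonneg (hbpos 0 le_rfl).le q) hDnn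
    have h2 : ((b 0)^q)^r + D^r ≤ ((b 0)^q + D)^r :=
      stmt6_add_rpow_le (Real.rpow_nonneg (hbpos 0 le_rfl).le q) hDnn hr1
    have hbt : c/2 + D^r ≤ b t := by
      have e6 := hbq 0 le_rfl
      have e7 := hbq t hT.le
      rw [e6] at h2
      rw [e7] at h1
      linarith [hb0.le, hb0.ge]
    have hDr : D^r = C^r * (E 0)^(-(((p:ℝ)-1)/4)) * t^m := by
      rw [hD, Real.mul_rpow (mul_nonneg hCpos.le (Real.rpow_nonneg hE0pos.le _))
          (Real.rpow_nonneg hT.le _),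
        Real.mul_rpow hCpos.le (Real.rpow_nonneg hE0pos.le _),
        ← Real.rpow_mul hE0pos.le, ← Real.rpow_mul hT.le]
      rw [show -γ*r = -(((p:ℝ)-1)/4) from by rw [hγdef, hr]; field_simp; ring,
        show (1+γ)*r = m from by rw [hγdef, hr, hm]; field_simp; ring]
    have hCr : C^r = θ^((1:ℝ)/2) / ((p:ℝ)+1)^r := by
      rw [hCdef, Real.div_rpow (Real.rpow_nonneg hθ0.le _) hp1R.le, ← Real.rpow_mul hθ0.le]
      rw [show (1/((p:ℝ)+1))*r = 1/2 from by rw [hr]; field_simp]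
    have h3p1 : (0:ℝ) < 3*(p:ℝ)+1 := by linarith
    have hKle : Kst ≤ C^r * (E 0)^(-(((p:ℝ)-1)/4)) := by
      rw [hKst, hCr]
      rw [Real.div_rpow (Real.rpow_nonneg hθ0.le _)
        (mul_nonneg hp1R.le (Real.rpow_nonneg hE0pos.le _))]
      rw [← Real.rpow_mul hθ0.le,
        show (2/(3*(p:ℝ)+1))*m = 1/2 from by rw [hm]; field_simp; norm_num,
        Real.mul_rpow hp1R.le (Real.rpow_nonneg hE0pos.le _),
        ← Real.rpow_mul hE0pos.le,
        show (((p:ℝ)-1)/(3*(p:ℝ)+1))*m = ((p:ℝ)-1)/4 from by rw [hm]; field_simp,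
        Real.rpow_neg hE0pos.le]
      rw [show θ^((1:ℝ)/2)/((p:ℝ)+1)^r * ((E 0)^(((p:ℝ)-1)/4))⁻¹
          = θ^((1:ℝ)/2)/(((p:ℝ)+1)^r * (E 0)^(((p:ℝ)-1)/4)) from by ring]
      have hrm : ((p:ℝ)+1)^r ≤ ((p:ℝ)+1)^m := by
        apply Real.rpow_le_rpow_of_exponent_le (by linarith)
        rw [hr, hm]
        linarith
      gcongr
    have hKstnn : (0:ℝ) ≤ Kst := by
      rw [hKst]
      apply Real.rpow_nonneg
      apply div_nonneg (Real.rpow_nonneg hθ0.le _)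
      exact mul_nonneg hp1R.le (Real.rpow_nonneg hE0pos.le _)
    have hfinal : c/2 + Kst * t^m ≤ b t := by
      have h3 : Kst * t^m ≤ C^r * (E 0)^(-(((p:ℝ)-1)/4)) * t^m :=
        mul_le_mul_of_nonneg_right hKle (Real.rpow_nonneg hT.le _)
      rw [← hDr] at h3
      linarith
    have hnn : 0 ≤ c/2 + Kst * t^m :=
      add_nonneg (by linarith) (mul_nonneg hKstnn (Real.rpow_nonneg hT.le _))
    rw [haB t]
    exact pow_le_pow_left₀ hnn hfinal 2
end

section
/- (Continuous Bihari–LaSalle estimate.) Let p ≥ 2 be an integer and C > 0. Suppose y : [0, ∞) → ℝ is differentiable with y(0) = 0, y(t) > 0 for all t > 0, and y′(t) ≥ (y(t)/(2C))^{(p−1)/(p+1)} for all t > 0. Then for every t ≥ 0: y(t)^{2/(p+1)} ≥ (2/(p+1))·(1/(2C))^{(p−1)/(p+1)}·t. -/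
/-- continuous Bihari–LaSalle estimate: if `y` is differentiable on
`[0, ∞)` with `y(0) = 0`, `y(t) > 0` for `t > 0`, and
`y'(t) ≥ (y(t)/(2C))^{(p−1)/(p+1)}` for `t > 0`, then
`y(t)^{2/(p+1)} ≥ (2/(p+1)) (1/(2C))^{(p−1)/(p+1)} t` for all `t ≥ 0`. -/
theorem stmt_8 (p : ℕ) (hp : 2 ≤ p) (C : ℝ) (hC : 0 < C) (y : ℝ → ℝ)
    (hdiff : ∀ t ∈ Set.Ici (0:ℝ), DifferentiableAt ℝ y t)
    (hy0 : y 0 = 0) (hypos : ∀ t : ℝ, 0 < t → 0 < y t)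
    (hineq : ∀ t : ℝ, 0 < t →
      (y t / (2 * C)) ^ (((p:ℝ) - 1) / ((p:ℝ) + 1)) ≤ deriv y t) :
    ∀ t : ℝ, 0 ≤ t →
      (2 / ((p:ℝ) + 1)) * (1 / (2 * C)) ^ (((p:ℝ) - 1) / ((p:ℝ) + 1)) * t ≤
        (y t) ^ (2 / ((p:ℝ) + 1)) := by
  intro t ht
  set α : ℝ := 2 / ((p:ℝ) + 1) with hαdef
  set β : ℝ := ((p:ℝ) - 1) / ((p:ℝ) + 1) with hβdef
  have hp1 : (0:ℝ) < (p:ℝ) + 1 := by positivity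
  have hα0 : 0 < α := by positivity
  have hp2 : (2:ℝ) ≤ (p:ℝ) := by exact_mod_cast hp
  have hβ0 : 0 ≤ β := div_nonneg (by linarith) hp1.le
  have hsum : β + (α - 1) = 0 := by
    rw [hαdef, hβdef]; field_simp; ring
  have h2C : (0:ℝ) < 2 * C := by linarith
  set g : ℝ → ℝ := fun s => y s ^ α with hg
  have hgcont : ContinuousOn g (Set.Ici 0) := by
    apply ContinuousOn.rpow_const
    · exact fun s hs => (hdiff s hs).continuousAt.continuousWithinAt
    · intro s _; exact Or.inr hα0.le
  have hderivg : ∀ s ∈ Set.Ioi (0:ℝ),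
      HasDerivAt g (deriv y s * α * y s ^ (α - 1)) s := fun s hs =>
    ((hdiff s (Set.mem_Ici.mpr (le_of_lt hs))).hasDerivAt).rpow_const (Or.inl (hypos s hs).ne')
  have hint : interior (Set.Ici (0:ℝ)) = Set.Ioi 0 := interior_Ici
  have bound : ∀ s ∈ interior (Set.Ici (0:ℝ)),
      α * (1 / (2 * C)) ^ β ≤ deriv g s := by
    intro s hs
    rw [hint] at hs
    have hys := hypos s hs
    rw [(hderivg s hs).deriv]
    have h1 : (y s / (2 * C)) ^ β * α * y s ^ (α - 1) ≤
        deriv y s * α * y s ^ (α - 1) := by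
      apply mul_le_mul_of_nonneg_right (mul_le_mul_of_nonneg_right (hineq s hs) hα0.le)
      positivity
    refine le_trans (le_of_eq ?_) h1
    have hy1 : y s ^ β * y s ^ (α - 1) = 1 := by
      rw [← Real.rpow_add hys, hsum, Real.rpow_zero]
    calc α * (1 / (2 * C)) ^ β
        = α * (1 / (2 * C) ^ β) := by
          rw [Real.div_rpow (by norm_num) h2C.le, Real.one_rpow]
      _ = α * ((y s ^ β * y s ^ (α - 1)) / (2 * C) ^ β) := by rw [hy1]
      _ = (y s ^ β / (2 * C) ^ β) * α * y s ^ (α - 1) := by ring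
      _ = (y s / (2 * C)) ^ β * α * y s ^ (α - 1) := by
          rw [Real.div_rpow hys.le h2C.le]
  have key := (convex_Ici (0:ℝ)).mul_sub_le_image_sub_of_le_deriv hgcont
    (fun s hs => by
      rw [hint] at hs
      exact ((hderivg s hs).differentiableAt).differentiableWithinAt)
    bound 0 Set.self_mem_Ici t ht ht
  have hg0 : g 0 = 0 := by
    simp [hg, hy0, Real.zero_rpow hα0.ne']
  simpa [hg0] using key
end

section
/- (Discrete Bihari–LaSalle estimate.) Let p ≥ 2 be an integer and C > 0. Suppose (y_k)_{k≥0} is a nondecreasing sequence of real numbers with y_0 = 0, y_k > 0 for all k ≥ 1, and y_k ≤ 2C·(y_k − y_{k−1})^{(p+1)/(p−1)} for all k ≥ 1. Then for every k ≥ 1: y_k^{2/(p+1)} ≥ (2/(p+1))·(1/(2C))^{(p−1)/(p+1)}·k. -/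
/-- Concavity inequality for `t ↦ t^β`, `0 < β ≤ 1`:
`β b^(β-1) (b - a) ≤ b^β - a^β` for `0 ≤ a ≤ b`, `0 < b`. -/
lemma concave_rpow_aux {a b β : ℝ} (ha : 0 ≤ a) (hab : a ≤ b) (hb : 0 < b)
    (hβ0 : 0 ≤ β) (hβ1 : β ≤ 1) :
    β * b ^ (β - 1) * (b - a) ≤ b ^ β - a ^ β := by
  set t : ℝ := a / b with ht
  have hbne : b ≠ 0 := hb.ne'
  have ht0 : 0 ≤ t := div_nonneg ha hb.le
  have key : t ^ β * 1 ^ (1 - β) ≤ β * t + (1 - β) * 1 :=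
    Real.geom_mean_le_arith_mean2_weighted hβ0 (by linarith) ht0 zero_le_one (by ring)
  rw [Real.one_rpow, mul_one, mul_one] at key
  have haeq : a = t * b := by rw [ht, div_mul_cancel₀ a hbne]
  have hapow : a ^ β = t ^ β * b ^ β := by
    rw [haeq, Real.mul_rpow ht0 hb.le]
  have hbpow : 0 ≤ b ^ β := Real.rpow_nonneg hb.le β
  have hmul : t ^ β * b ^ β ≤ (β * t + (1 - β)) * b ^ β :=
    mul_le_mul_of_nonneg_right key hbpow
  have heq : β * b ^ (β - 1) * (b - a) = β * (1 - t) * b ^ β := by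
    rw [Real.rpow_sub hb, Real.rpow_one]
    field_simp [ht]
    rw [haeq]; ring
  have : β * (1 - t) * b ^ β = b ^ β - (β * t + (1 - β)) * b ^ β := by ring
  rw [heq, this, hapow]
  linarith

/-- discrete Bihari–LaSalle estimate: if `(y_k)` is nondecreasing with
`y_0 = 0`, `y_k > 0` for `k ≥ 1`, and `y_k ≤ 2C (y_k − y_{k−1})^{(p+1)/(p−1)}` for
`k ≥ 1`, then `y_k^{2/(p+1)} ≥ (2/(p+1)) (1/(2C))^{(p−1)/(p+1)} k` for all `k ≥ 1`. -/
theorem stmt_10 (p : ℕ) (hp : 2 ≤ p) (C : ℝ) (hC : 0 < C) (y : ℕ → ℝ)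
    (hmono : Monotone y) (hy0 : y 0 = 0)
    (hypos : ∀ k : ℕ, 1 ≤ k → 0 < y k)
    (hineq : ∀ k : ℕ, 1 ≤ k →
      y k ≤ 2 * C * (y k - y (k - 1)) ^ (((p:ℝ) + 1) / ((p:ℝ) - 1))) :
    ∀ k : ℕ, 1 ≤ k →
      (2 / ((p:ℝ) + 1)) * (1 / (2 * C)) ^ (((p:ℝ) - 1) / ((p:ℝ) + 1)) * (k:ℝ) ≤
        (y k) ^ (2 / ((p:ℝ) + 1)) := by
  have hp2 : (2:ℝ) ≤ (p:ℝ) := by exact_mod_cast hp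
  set β : ℝ := 2 / ((p:ℝ) + 1) with hβ
  set γ : ℝ := ((p:ℝ) - 1) / ((p:ℝ) + 1) with hγ
  set α : ℝ := ((p:ℝ) + 1) / ((p:ℝ) - 1) with hα
  set c : ℝ := β * (1 / (2 * C)) ^ γ with hc
  have hp1pos : (0:ℝ) < (p:ℝ) + 1 := by linarith
  have hpm1pos : (0:ℝ) < (p:ℝ) - 1 := by linarith
  have hβ0 : 0 < β := by positivity
  have hβ1 : β ≤ 1 := by
    rw [hβ, div_le_one hp1pos]; linarith
  have hαγ : α * γ = 1 := by
    rw [hα, hγ]; field_simp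
  have hβγ : β - 1 + γ = 0 := by
    rw [hβ, hγ]; field_simp; ring
  have h2C : (0:ℝ) < 2 * C := by linarith
  -- step inequality
  have step : ∀ n : ℕ, c + (y n) ^ β ≤ (y (n + 1)) ^ β := by
    intro n
    have hb : 0 < y (n + 1) := hypos (n + 1) (Nat.le_add_left 1 n)
    have ha : 0 ≤ y n := by rw [← hy0]; exact hmono (Nat.zero_le n)
    have hab : y n ≤ y (n + 1) := hmono (Nat.le_succ n)
    set a := y n
    set b := y (n + 1)
    have hineq' := hineq (n + 1) (Nat.le_add_left 1 n)
    rw [Nat.add_sub_cancel] at hineq'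
    -- b / (2C) ≤ (b-a)^α, hence (b/(2C))^γ ≤ b-a
    have hd : 0 ≤ b - a := by linarith
    have h1 : b / (2 * C) ≤ (b - a) ^ α := by
      rw [div_le_iff₀ h2C]; linarith [hineq']
    have h2 : (b / (2 * C)) ^ γ ≤ b - a := by
      have h := Real.rpow_le_rpow (by positivity) h1 (by positivity : (0:ℝ) ≤ γ)
      rwa [← Real.rpow_mul hd, hαγ, Real.rpow_one] at h
    have hconc : β * b ^ (β - 1) * (b - a) ≤ b ^ β - a ^ β :=
      concave_rpow_aux ha hab hb hβ0.le hβ1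
    have hcb : c ≤ β * b ^ (β - 1) * (b / (2 * C)) ^ γ := by
      have : (b / (2 * C)) ^ γ = b ^ γ * (1 / (2 * C)) ^ γ := by
        rw [div_eq_mul_one_div, Real.mul_rpow hb.le (by positivity)]
      rw [this, hc]
      have : β * b ^ (β - 1) * (b ^ γ * (1 / (2 * C)) ^ γ)
          = β * (1 / (2 * C)) ^ γ * b ^ (β - 1 + γ) := by
        rw [Real.rpow_add hb]; ring
      rw [this, hβγ, Real.rpow_zero, mul_one]
    have hmid : β * b ^ (β - 1) * (b / (2 * C)) ^ γ ≤ β * b ^ (β - 1) * (b - a) := by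
      apply mul_le_mul_of_nonneg_left h2
      positivity
    linarith
  -- induction
  have main : ∀ k : ℕ, c * (k : ℝ) ≤ (y k) ^ β := by
    intro k
    induction k with
    | zero => simp [hy0, Real.zero_rpow hβ0.ne']
    | succ n ih =>
      have := step n
      push_cast
      linarith
  intro k hk
  have := main k
  calc (2 / ((p:ℝ) + 1)) * (1 / (2 * C)) ^ (((p:ℝ) - 1) / ((p:ℝ) + 1)) * (k:ℝ)
      = c * (k:ℝ) := by rw [hc, hβ, hγ]
    _ ≤ (y k) ^ β := main k
end

section
/- Suppose the sequences are generated by Algorithm I, and assume v0 ≠ x* if p ≥ 2. Then for every integer k ≥ 1: A_k ≥ (θ·(1 − σ²)^{(p−1)/2} / ((p+1)^{(3p+1)/2}·‖v0 − x*‖^{p−1}))·k^{(3p+1)/2}. -/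
open scoped RealInnerProductSpace
open Finset

lemma rpow_succ_sub (q : ℝ) (hq : 0 ≤ q) (t : ℝ) (ht : 0 ≤ t) :
    (t+1)^(q+1) - (q+1) * (t+1)^q ≤ t^(q+1) := by
  have hq1 : (0:ℝ) < q + 1 := by linarith
  have hn1 : (0:ℝ) < t + 1 := by linarith
  have hber := one_add_mul_self_le_rpow_one_add
    (s := -(1/(t+1))) (by rw [neg_le, neg_neg]; rw [div_le_one hn1]; linarith)
    (p := q+1) (by linarith)
  have h1s : 1 + -(1/(t+1)) = t/(t+1) := by field_simp; ring
  rw [h1s] at hber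
  have hmul := mul_le_mul_of_nonneg_right hber (le_of_lt (Real.rpow_pos_of_pos hn1 (q+1)))
  rw [Real.div_rpow ht hn1.le, div_mul_cancel₀] at hmul
  · calc (t+1)^(q+1) - (q+1) * (t+1)^q
        = (1 + (q+1) * -(1/(t+1))) * (t+1)^(q+1) := by
          rw [Real.rpow_add_one (ne_of_gt hn1) q]
          field_simp
          ring
      _ ≤ t^(q+1) := hmul
  · positivity

lemma sum_pow_ge (q : ℝ) (hq : 0 ≤ q) (n : ℕ) :
    (n:ℝ)^(q+1)/(q+1) ≤ ∑ j ∈ Finset.range n, ((j:ℝ)+1)^q := by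
  have hq1 : (0:ℝ) < q + 1 := by linarith
  induction n with
  | zero => simp [Real.zero_rpow (by positivity : q + 1 ≠ 0)]
  | succ n ih =>
    rw [Finset.sum_range_succ]
    have hkey := rpow_succ_sub q hq (n:ℝ) (Nat.cast_nonneg n)
    have h2 : ((n:ℝ)+1)^(q+1)/(q+1) - ((n:ℝ))^(q+1)/(q+1) ≤ ((n:ℝ)+1)^q := by
      rw [div_sub_div_same, div_le_iff₀ hq1]; linarith
    push_cast
    linarith

set_option maxHeartbeats 1000000 in

lemma growth_aux (p : ℕ) (hp : 1 ≤ p) (hp2 : 2 ≤ p) (θ R g : ℝ)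
    (hθ : 0 < θ) (hg : 0 < g) (hR : 0 < R)
    (A lam s : ℕ → ℝ)
    (hAnn : ∀ k, 0 ≤ A k) (hA1pos : ∀ k : ℕ, 0 < A (k+1))
    (hlampos : ∀ k : ℕ, 0 < lam (k+1)) (hsnn : ∀ j, 0 ≤ s j)
    (hA1lam : A 1 = lam 1)
    (hmono : ∀ n : ℕ, A 1 ≤ A (n+1))
    (hls : ∀ j : ℕ, θ ≤ lam (j+1) * s j ^ (p-1))
    (hMs : ∀ k, ∑ j ∈ Finset.range k, (A (j+1)/lam (j+1)) * (s j)^2 ≤ R^2/g)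
    (hsqrt : ∀ k, ∑ j ∈ Finset.range k, Real.sqrt (lam (j+1)) ≤ 2 * Real.sqrt (A k)) :
    ∀ k : ℕ, 1 ≤ k →
      θ * g ^ (((p:ℝ) - 1) / 2) /
          (((p:ℝ) + 1) ^ ((3 * (p:ℝ) + 1) / 2) * R ^ ((p:ℝ) - 1)) *
        (k:ℝ) ^ ((3 * (p:ℝ) + 1) / 2) ≤ A k := by
  have hpr2 : (2:ℝ) ≤ (p:ℝ) := by exact_mod_cast hp2
  obtain ⟨pr, hprdef⟩ : ∃ t : ℝ, t = (p:ℝ) := ⟨_, rfl⟩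
  have hprm1 : (0:ℝ) < pr - 1 := by rw [hprdef]; linarith
  have h3p : (0:ℝ) < 3*pr + 1 := by rw [hprdef]; linarith
  have hpp1 : (0:ℝ) < pr + 1 := by rw [hprdef]; linarith
  obtain ⟨q, hqdef⟩ : ∃ t : ℝ, t = (pr - 1)/2 := ⟨_, rfl⟩
  obtain ⟨m, hmdef⟩ : ∃ t : ℝ, t = (3*pr + 1)/2 := ⟨_, rfl⟩
  obtain ⟨al, haldef⟩ : ∃ t : ℝ, t = (pr - 1)/(3*pr + 1) := ⟨_, rfl⟩
  obtain ⟨be, hbedef⟩ : ∃ t : ℝ, t = (pr + 1)/(3*pr + 1) := ⟨_, rfl⟩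
  obtain ⟨ee, heedef⟩ : ∃ t : ℝ, t = 2/(pr - 1) := ⟨_, rfl⟩
  have hq0 : (0:ℝ) < q := by rw [hqdef]; linarith
  have hq1pos : (0:ℝ) < q + 1 := by linarith
  have hal0 : (0:ℝ) < al := by rw [haldef]; exact div_pos hprm1 h3p
  have hbe0 : (0:ℝ) < be := by rw [hbedef]; exact div_pos hpp1 h3p
  have hee0 : (0:ℝ) < ee := by rw [heedef]; exact div_pos (by norm_num) hprm1
  have hm0 : (0:ℝ) < m := by rw [hmdef]; linarith
  have halbe : al < be := by
    rw [haldef, hbedef, div_lt_div_iff₀ h3p h3p]; nlinarith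
  have hbeal2 : be - al = 2/(3*pr+1) := by
    rw [haldef, hbedef, div_sub_div_same]; congr 1; ring
  have hmal : m * al = q := by
    rw [hmdef, haldef, hqdef]; field_simp
  have hmbe : m * be = q + 1 := by
    rw [hmdef, hbedef, hqdef]; field_simp; ring
  have hbe_half : be ≤ 1/2 := by
    rw [hbedef, div_le_div_iff₀ h3p (by norm_num)]; linarith [hprm1]
  have h4be2 : (4:ℝ)^be ≤ 2 := by
    calc (4:ℝ)^be = (2:ℝ)^(2*be) := by
          rw [show (4:ℝ) = 2^((2:ℕ):ℝ) by rw [Real.rpow_natCast]; norm_num,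
            ← Real.rpow_mul (by norm_num)]
          norm_num
      _ ≤ (2:ℝ)^(1:ℝ) := Real.rpow_le_rpow_of_exponent_le (by norm_num) (by linarith)
      _ = 2 := Real.rpow_one 2
  have h4be1 : (1:ℝ) < (4:ℝ)^be := by
    have h := Real.rpow_lt_rpow_of_exponent_lt (by norm_num : (1:ℝ) < 4) hbe0
    simpa using h
  have hθe : (0:ℝ) < θ^ee := Real.rpow_pos_of_pos hθ ee
  have hgq : (0:ℝ) < g^q := Real.rpow_pos_of_pos hg q
  have hRpr : (0:ℝ) < R^(pr-1) := Real.rpow_pos_of_pos hR _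
  obtain ⟨Mp, hMpdef⟩ : ∃ t : ℝ, t = R^2 / (g * θ^ee) := ⟨_, rfl⟩
  have hMp0 : (0:ℝ) < Mp := by
    rw [hMpdef]; exact div_pos (by positivity) (mul_pos hg hθe)
  obtain ⟨c0, hc0def⟩ : ∃ t : ℝ, t = θ * g^q / R^(pr-1) := ⟨_, rfl⟩
  obtain ⟨c, hcdef⟩ : ∃ t : ℝ, t = θ * g^q / ((pr+1)^m * R^(pr-1)) := ⟨_, rfl⟩
  have hc00 : (0:ℝ) < c0 := by
    rw [hc0def]; exact div_pos (mul_pos hθ hgq) hRpr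
  have hpp1m : (0:ℝ) < (pr+1)^m := Real.rpow_pos_of_pos hpp1 m
  have hcpos : (0:ℝ) < c := by
    rw [hcdef]; exact div_pos (mul_pos hθ hgq) (mul_pos hpp1m hRpr)
  obtain ⟨D, hDdef⟩ : ∃ t : ℝ, t = (4:ℝ)^be * Mp^al := ⟨_, rfl⟩
  have hMpal : (0:ℝ) < Mp^al := Real.rpow_pos_of_pos hMp0 al
  have hD0 : (0:ℝ) < D := by
    rw [hDdef]; exact mul_pos (Real.rpow_pos_of_pos (by norm_num) be) hMpal
  -- log identities
  have hMplog : Real.log Mp = 2*Real.log R - Real.log g - ee * Real.log θ := by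
    rw [hMpdef, Real.log_div (by positivity) (mul_pos hg hθe).ne',
      Real.log_mul hg.ne' hθe.ne', Real.log_rpow hθ, Real.log_pow]
    push_cast
    ring
  have hclog : Real.log c = Real.log θ + q*Real.log g
      - (m*Real.log (pr+1) + (pr-1)*Real.log R) := by
    rw [hcdef, Real.log_div (mul_pos hθ hgq).ne' (mul_pos hpp1m hRpr).ne',
      Real.log_mul hθ.ne' hgq.ne', Real.log_mul hpp1m.ne' hRpr.ne',
      Real.log_rpow hg, Real.log_rpow hpp1, Real.log_rpow hR]
    try ring
  have hc0log : Real.log c0 = Real.log θ + q*Real.log g - (pr-1)*Real.log R := by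
    rw [hc0def, Real.log_div (mul_pos hθ hgq).ne' hRpr.ne',
      Real.log_mul hθ.ne' hgq.ne', Real.log_rpow hg, Real.log_rpow hR]
    try ring
  have I1 : Mp^al * c^(2/(3*pr+1)) = 1/(pr+1) := by
    have hL : (0:ℝ) < Mp^al * c^(2/(3*pr+1)) :=
      mul_pos hMpal (Real.rpow_pos_of_pos hcpos _)
    have hRr : (0:ℝ) < 1/(pr+1) := by positivity
    rw [← Real.exp_log hL, ← Real.exp_log hRr]
    congr 1
    rw [Real.log_mul hMpal.ne' (Real.rpow_pos_of_pos hcpos _).ne',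
      Real.log_rpow hMp0, Real.log_rpow hcpos, hMplog, hclog, one_div,
      Real.log_inv]
    rw [haldef, hqdef, hmdef, heedef]
    have := h3p.ne'; have := hprm1.ne'; have := hpp1.ne'
    field_simp
    ring_nf
    have : 1 + pr*3 ≠ 0 := by linarith
    field_simp
    ring
  have I2 : Mp^al * c0^(2/(3*pr+1)) = 1 := by
    have hL : (0:ℝ) < Mp^al * c0^(2/(3*pr+1)) :=
      mul_pos hMpal (Real.rpow_pos_of_pos hc00 _)
    rw [← Real.exp_log hL, show (1:ℝ) = Real.exp 0 from Real.exp_zero.symm]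
    congr 1
    rw [Real.log_mul hMpal.ne' (Real.rpow_pos_of_pos hc00 _).ne',
      Real.log_rpow hMp0, Real.log_rpow hc00, hMplog, hc0log]
    rw [haldef, hqdef, heedef]
    rw [Real.exp_zero] at *
    have := h3p.ne'; have := hprm1.ne'
    field_simp
    ring
  -- positivity of s_j
  have hspos : ∀ j : ℕ, 0 < s j := by
    intro j
    rcases (hsnn j).lt_or_eq with h | h
    · exact h
    · exfalso
      have h2 := hls j
      rw [← h, zero_pow (by omega : p - 1 ≠ 0), mul_zero] at h2
      exact absurd h2 (not_le.2 hθ)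
  have hcast1 : ((p - 1 : ℕ):ℝ) = pr - 1 := by
    rw [hprdef, Nat.cast_sub hp]; norm_num
  -- c0 ≤ A 1
  have hs1 : (s 0)^2 ≤ R^2/g := by
    have h := hMs 1
    rw [Finset.sum_range_one] at h
    have hdd : A (0+1) / lam (0+1) = 1 := by
      have : lam (0+1) ≠ 0 := (hlampos 0).ne'
      rw [show A (0+1) = lam (0+1) from hA1lam]
      field_simp
    rw [hdd, one_mul] at h
    exact h
  have hs1q : (s 0)^(p-1) ≤ (R^2/g)^q := by
    calc (s 0)^(p-1) = ((s 0)^2)^q := by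
          rw [← Real.rpow_natCast (s 0) (p-1), ← Real.rpow_natCast (s 0) 2,
            ← Real.rpow_mul (hsnn 0)]
          rw [hcast1, hqdef]
          congr 1
          push_cast
          ring
      _ ≤ _ := Real.rpow_le_rpow (by positivity) hs1 hq0.le
  have hMq : (R^2/g)^q = R^(pr-1) / g^q := by
    rw [Real.div_rpow (by positivity) hg.le]
    congr 1
    rw [← Real.rpow_natCast R 2, ← Real.rpow_mul hR.le]
    congr 1
    rw [hqdef]; push_cast; ring
  have hlam1 : θ / (R^2/g)^q ≤ lam 1 := by
    rw [div_le_iff₀ (Real.rpow_pos_of_pos (div_pos (by positivity) hg) q)]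
    calc θ ≤ lam (0+1) * (s 0)^(p-1) := hls 0
      _ ≤ lam (0+1) * (R^2/g)^q := mul_le_mul_of_nonneg_left hs1q (hlampos 0).le
      _ = lam 1 * (R^2/g)^q := rfl
  have hc0A1 : c0 ≤ A 1 := by
    rw [hA1lam, hc0def]
    refine le_trans (le_of_eq ?_) hlam1
    rw [hMq, div_div_eq_mul_div]
  have hAc0 : ∀ k : ℕ, 1 ≤ k → c0 ≤ A k := by
    intro k hk
    obtain ⟨n, rfl⟩ := Nat.exists_eq_succ_of_ne_zero (by omega : k ≠ 0)
    exact le_trans hc0A1 (hmono n)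
  -- B and its sum bound
  obtain ⟨B, hBdef⟩ : ∃ t : ℕ → ℝ, t = fun j => A (j+1) * lam (j+1) ^ (-(pr+1)/(pr-1)) :=
    ⟨_, rfl⟩
  have hBj : ∀ j, B j = A (j+1) * lam (j+1) ^ (-(pr+1)/(pr-1)) := fun j => by rw [hBdef]
  have hBnn : ∀ j, 0 ≤ B j := by
    intro j
    rw [hBj]
    exact mul_nonneg (hAnn _) (Real.rpow_nonneg (hlampos j).le _)
  have hperm : ∀ j, θ^ee * B j ≤ (A (j+1)/lam (j+1)) * (s j)^2 := by
    intro j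
    have hl := hlampos j
    have h1 : θ / lam (j+1) ≤ (s j)^(p-1) := by
      rw [div_le_iff₀ hl]
      calc θ ≤ lam (j+1) * (s j)^(p-1) := hls j
        _ = (s j)^(p-1) * lam (j+1) := by ring
    have h2 : (θ / lam (j+1))^ee ≤ ((s j)^(p-1))^ee :=
      Real.rpow_le_rpow (by positivity) h1 hee0.le
    have h3 : ((s j)^(p-1))^ee = (s j)^2 := by
      rw [← Real.rpow_natCast (s j) (p-1), ← Real.rpow_mul (hsnn j)]
      rw [show ((p-1:ℕ):ℝ) * ee = ((2:ℕ):ℝ) from by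
        rw [hcast1, heedef]; field_simp; norm_num]
      rw [Real.rpow_natCast]
    have h4 : (θ/lam (j+1))^ee = θ^ee * (lam (j+1)^ee)⁻¹ := by
      rw [Real.div_rpow hθ.le hl.le, div_eq_mul_inv]
    have h5 : θ^ee * B j = (A (j+1)/lam (j+1)) * (θ/lam (j+1))^ee := by
      rw [hBj, h4]
      rw [show -(pr+1)/(pr-1) = -1 + -ee from by
        rw [heedef]; field_simp <;> try ring]
      rw [Real.rpow_add hl, Real.rpow_neg_one, Real.rpow_neg hl.le]
      ring
    rw [h5]
    exact mul_le_mul_of_nonneg_left (h3 ▸ h2) (div_nonneg (hAnn _) hl.le)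
  have hBsum : ∀ k, ∑ j ∈ Finset.range k, B j ≤ Mp := by
    intro k
    have h1 : θ^ee * ∑ j ∈ Finset.range k, B j ≤ R^2/g := by
      rw [Finset.mul_sum]
      exact le_trans (Finset.sum_le_sum fun j _ => hperm j) (hMs k)
    rw [hMpdef]
    calc ∑ j ∈ Finset.range k, B j ≤ (R^2/g)/θ^ee := by
          rw [le_div_iff₀ hθe]; linarith
      _ = R^2/(g*θ^ee) := by rw [div_div]
  -- Hölder
  have hrr : Real.HolderConjugate ((3*pr+1)/(2*(pr+1))) ((3*pr+1)/(pr-1)) := by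
    rw [Real.holderConjugate_iff]
    constructor
    · rw [lt_div_iff₀ (by linarith)]; linarith
    · rw [inv_div, inv_div, div_add_div _ _ (ne_of_gt h3p) (ne_of_gt h3p)]
      rw [div_eq_one_iff_eq (mul_pos h3p h3p).ne']
      ring
  have hholder : ∀ k, ∑ j ∈ Finset.range k, (A (j+1))^al ≤
      (∑ j ∈ Finset.range k, Real.sqrt (lam (j+1)))^(2*be) *
      (∑ j ∈ Finset.range k, B j)^al := by
    intro k
    have h := Real.inner_le_Lp_mul_Lq_of_nonneg (Finset.range k)
      (f := fun j => lam (j+1) ^ be) (g := fun j => B j ^ al) hrr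
      (fun i _ => (Real.rpow_pos_of_pos (hlampos i) be).le)
      (fun i _ => Real.rpow_nonneg (hBnn i) al)
    have e1 : ∀ j : ℕ, lam (j+1)^be * B j ^ al = (A (j+1))^al := by
      intro j
      have hl := hlampos j
      rw [hBj]
      rw [Real.mul_rpow (hAnn _) (Real.rpow_nonneg hl.le _),
        ← Real.rpow_mul hl.le]
      rw [show -(pr+1)/(pr-1) * al = -be from by
        rw [haldef, hbedef]; field_simp <;> try ring]
      rw [Real.rpow_neg hl.le]
      have hlbe : lam (j+1)^be ≠ 0 := ne_of_gt (Real.rpow_pos_of_pos hl be)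
      field_simp
      try ring
    have e2 : ∀ j : ℕ, (lam (j+1)^be)^((3*pr+1)/(2*(pr+1))) = Real.sqrt (lam (j+1)) := by
      intro j
      rw [← Real.rpow_mul (hlampos j).le]
      rw [show be * ((3*pr+1)/(2*(pr+1))) = 1/2 from by
        rw [hbedef]; field_simp; exact div_self (by linarith)]
      rw [Real.sqrt_eq_rpow]
    have e3 : ∀ j : ℕ, (B j^al)^((3*pr+1)/(pr-1)) = B j := by
      intro j
      rw [← Real.rpow_mul (hBnn j)]
      rw [show al * ((3*pr+1)/(pr-1)) = 1 from by
        rw [haldef]; field_simp; exact div_self (by linarith)]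
      exact Real.rpow_one _
    have e4 : 1/((3*pr+1)/(2*(pr+1))) = 2*be := by
      rw [one_div_div, hbedef]; ring
    have e5 : 1/((3*pr+1)/(pr-1)) = al := by
      rw [one_div_div, haldef]
    calc ∑ j ∈ Finset.range k, (A (j+1))^al
        = ∑ j ∈ Finset.range k, lam (j+1)^be * B j ^ al :=
          Finset.sum_congr rfl fun j _ => (e1 j).symm
      _ ≤ (∑ j ∈ Finset.range k, (lam (j+1)^be)^((3*pr+1)/(2*(pr+1))))^(1/((3*pr+1)/(2*(pr+1)))) *
          (∑ j ∈ Finset.range k, (B j^al)^((3*pr+1)/(pr-1)))^(1/((3*pr+1)/(pr-1))) := h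
      _ = _ := by
          rw [e4, e5]
          congr 2
          · exact Finset.sum_congr rfl fun j _ => e2 j
          · exact Finset.sum_congr rfl fun j _ => e3 j
  have hDA : ∀ k, ∑ j ∈ Finset.range k, (A (j+1))^al ≤ D * (A k)^be := by
    intro k
    have h2 : (∑ j ∈ Finset.range k, Real.sqrt (lam (j+1)))^(2*be) ≤
        (2*Real.sqrt (A k))^(2*be) :=
      Real.rpow_le_rpow (Finset.sum_nonneg fun j _ => Real.sqrt_nonneg _)
        (hsqrt k) (by positivity)
    have h3 : (∑ j ∈ Finset.range k, B j)^al ≤ Mp^al :=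
      Real.rpow_le_rpow (Finset.sum_nonneg fun j _ => hBnn j) (hBsum k) hal0.le
    have h4 : (2*Real.sqrt (A k))^(2*be) = 4^be * (A k)^be := by
      rw [show (2:ℝ)*Real.sqrt (A k) = Real.sqrt (4 * A k) from by
        rw [Real.sqrt_mul (by norm_num) (A k),
          show Real.sqrt 4 = 2 from by
            rw [show (4:ℝ) = 2^2 by norm_num, Real.sqrt_sq (by norm_num)]]]
      rw [Real.sqrt_eq_rpow, ← Real.rpow_mul (mul_nonneg (by norm_num) (hAnn k))]
      rw [show (1/2) * (2*be) = be from by ring]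
      rw [Real.mul_rpow (by norm_num) (hAnn k)]
    calc ∑ j ∈ Finset.range k, (A (j+1))^al
        ≤ (∑ j ∈ Finset.range k, Real.sqrt (lam (j+1)))^(2*be) *
          (∑ j ∈ Finset.range k, B j)^al := hholder k
      _ ≤ (2*Real.sqrt (A k))^(2*be) * Mp^al := by
          apply mul_le_mul h2 h3
            (Real.rpow_nonneg (Finset.sum_nonneg fun j _ => hBnn j) al)
            (Real.rpow_nonneg (by positivity) _)
      _ = D * (A k)^be := by rw [h4, hDdef]; ring
  -- final induction
  have main : ∀ k : ℕ, 1 ≤ k → c * (k:ℝ)^m ≤ A k := by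
    intro k
    induction k using Nat.strong_induction_on with
    | _ k IH =>
      intro hk1
      obtain ⟨n, rfl⟩ := Nat.exists_eq_succ_of_ne_zero (by omega : k ≠ 0)
      by_contra hcon
      push_neg at hcon
      push_cast at hcon
      have hKpos : (0:ℝ) < (n:ℝ) + 1 := by positivity
      have hy0 : (0:ℝ) < A (n+1) := hA1pos n
      have hyc0 : c0 ≤ A (n+1) := hAc0 _ (by omega)
      have hXpos : (0:ℝ) < c * ((n:ℝ)+1)^m :=
        mul_pos hcpos (Real.rpow_pos_of_pos hKpos m)
      have hyX : A (n+1) < c * ((n:ℝ)+1)^m := hcon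
      -- sum lower bound
      have hterm : ∀ j ∈ Finset.range n, c^al * ((j:ℝ)+1)^q ≤ (A (j+1))^al := by
        intro j hj
        have hjn : j < n := Finset.mem_range.1 hj
        have hIH := IH (j+1) (by omega) (by omega)
        push_cast at hIH
        have he7 : c^al * ((j:ℝ)+1)^q = (c * ((j:ℝ)+1)^m)^al := by
          rw [Real.mul_rpow hcpos.le (Real.rpow_nonneg (by positivity) m),
            ← Real.rpow_mul (by positivity), hmal]
        rw [he7]
        exact Real.rpow_le_rpow
          (mul_nonneg hcpos.le (Real.rpow_nonneg (by positivity) m)) hIH hal0.le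
      have hsum_lb : c^al * ((n:ℝ))^(q+1)/(q+1) + (A (n+1))^al ≤
          ∑ j ∈ Finset.range (n+1), (A (j+1))^al := by
        rw [Finset.sum_range_succ]
        have h1 : c^al * (n:ℝ)^(q+1)/(q+1) ≤ ∑ j ∈ Finset.range n, (A (j+1))^al := by
          calc c^al * (n:ℝ)^(q+1)/(q+1) = c^al * ((n:ℝ)^(q+1)/(q+1)) := by ring
            _ ≤ c^al * ∑ j ∈ Finset.range n, ((j:ℝ)+1)^q :=
                mul_le_mul_of_nonneg_left (sum_pow_ge q hq0.le n)
                  (Real.rpow_nonneg hcpos.le al)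
            _ = ∑ j ∈ Finset.range n, c^al * ((j:ℝ)+1)^q := by rw [Finset.mul_sum]
            _ ≤ ∑ j ∈ Finset.range n, (A (j+1))^al := Finset.sum_le_sum hterm
        linarith only [h1, Real.rpow_nonneg (hAnn (n+1)) al]
      have hkey : c^al * ((n:ℝ))^(q+1)/(q+1) + (A (n+1))^al ≤ D * (A (n+1))^be :=
        le_trans hsum_lb (hDA (n+1))
      -- Bernoulli
      have hbern : ((n:ℝ)+1)^(q+1) - (q+1)*((n:ℝ)+1)^q ≤ (n:ℝ)^(q+1) :=
        rpow_succ_sub q hq0.le (n:ℝ) (Nat.cast_nonneg n)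
      -- F(X) bound
      have hX_be : (c * ((n:ℝ)+1)^m)^be = c^be * ((n:ℝ)+1)^(q+1) := by
        rw [Real.mul_rpow hcpos.le (Real.rpow_nonneg hKpos.le m),
          ← Real.rpow_mul hKpos.le, hmbe]
      have hX_al : (c * ((n:ℝ)+1)^m)^al = c^al * ((n:ℝ)+1)^q := by
        rw [Real.mul_rpow hcpos.le (Real.rpow_nonneg hKpos.le m),
          ← Real.rpow_mul hKpos.le, hmal]
      have hDc : D * c^be = (4:ℝ)^be/(pr+1) * c^al := by
        have hsplit : c^be = c^al * c^(2/(3*pr+1)) := by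
          rw [← Real.rpow_add hcpos]
          congr 1
          rw [haldef, hbedef, ← add_div]
          congr 1
          ring
        rw [hDdef, hsplit]
        calc (4:ℝ)^be * Mp^al * (c^al * c^(2/(3*pr+1)))
            = (4:ℝ)^be * c^al * (Mp^al * c^(2/(3*pr+1))) := by ring
          _ = (4:ℝ)^be * c^al * (1/(pr+1)) := by rw [I1]
          _ = (4:ℝ)^be/(pr+1) * c^al := by ring
      have h2' : (4:ℝ)^be/(pr+1) * (q+1) ≤ 1 := by
        have he : (4:ℝ)^be/(pr+1) * (q+1) = (4:ℝ)^be/2 := by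
          rw [hqdef]
          field_simp
          ring
        rw [he]; linarith
      have hFX : D * (c * ((n:ℝ)+1)^m)^be - (c * ((n:ℝ)+1)^m)^al ≤
          c^al * (n:ℝ)^(q+1)/(q+1) := by
        rw [hX_be, hX_al, le_div_iff₀ hq1pos]
        have e6 : D * (c^be * ((n:ℝ)+1)^(q+1)) =
            ((4:ℝ)^be/(pr+1) * c^al) * ((n:ℝ)+1)^(q+1) := by
          rw [← mul_assoc, hDc]
        rw [e6]
        have hcal : (0:ℝ) ≤ c^al := Real.rpow_nonneg hcpos.le al
        have hK1 : (0:ℝ) ≤ ((n:ℝ)+1)^(q+1) := Real.rpow_nonneg hKpos.le _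
        have hm1 := mul_le_mul_of_nonneg_right h2' (mul_nonneg hcal hK1)
        have hm2 := mul_le_mul_of_nonneg_left hbern hcal
        linarith only [hm1, hm2]
      have hcontr1 : D * (c * ((n:ℝ)+1)^m)^be - (c * ((n:ℝ)+1)^m)^al ≤
          D * (A (n+1))^be - (A (n+1))^al := by
        linarith only [hkey, hFX]
      -- strict monotonicity contradiction
      have hg1 : (c * ((n:ℝ)+1)^m)^al * (A (n+1))^be ≤
          (c * ((n:ℝ)+1)^m)^be * (A (n+1))^al := by
        have hXy1 : 1 ≤ (c * ((n:ℝ)+1)^m) / A (n+1) := (one_le_div hy0).2 hyX.le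
        have h := Real.rpow_le_rpow_of_exponent_le hXy1 halbe.le
        rw [Real.div_rpow hXpos.le hy0.le, Real.div_rpow hXpos.le hy0.le] at h
        rw [div_le_div_iff₀ (Real.rpow_pos_of_pos hy0 al)
          (Real.rpow_pos_of_pos hy0 be)] at h
        linarith only [h]
      have hg2 : (A (n+1))^al < D * (A (n+1))^be := by
        have haux : c0^(be-al) ≤ (A (n+1))^(be-al) :=
          Real.rpow_le_rpow hc00.le hyc0 (by linarith)
        have hc0e : (A (n+1))^al * (c0^(be-al) * Mp^al) = (A (n+1))^al := by
          rw [hbeal2, mul_comm (c0 ^ (2/(3*pr+1))) (Mp^al), I2, mul_one]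
        have h5 : (A (n+1))^al ≤ Mp^al * (A (n+1))^be := by
          calc (A (n+1))^al = (A (n+1))^al * (c0^(be-al) * Mp^al) := hc0e.symm
            _ ≤ (A (n+1))^al * ((A (n+1))^(be-al) * Mp^al) := by
                apply mul_le_mul_of_nonneg_left
                  (mul_le_mul_of_nonneg_right haux hMpal.le)
                  (Real.rpow_nonneg hy0.le al)
            _ = Mp^al * ((A (n+1))^al * (A (n+1))^(be-al)) := by ring
            _ = Mp^al * (A (n+1))^be := by
                rw [← Real.rpow_add hy0, show al + (be-al) = be from by ring]
        have h7 : Mp^al < D := by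
          rw [hDdef]
          exact (lt_mul_iff_one_lt_left hMpal).2 h4be1
        calc (A (n+1))^al ≤ Mp^al * (A (n+1))^be := h5
          _ < D * (A (n+1))^be :=
              mul_lt_mul_of_pos_right h7 (Real.rpow_pos_of_pos hy0 be)
      have hg3 : (A (n+1))^be < (c * ((n:ℝ)+1)^m)^be :=
        Real.rpow_lt_rpow hy0.le hyX hbe0
      have hybe : (0:ℝ) < (A (n+1))^be := Real.rpow_pos_of_pos hy0 be
      have hfin : ((c * ((n:ℝ)+1)^m)^al - (A (n+1))^al) * (A (n+1))^be <
          D*((c * ((n:ℝ)+1)^m)^be - (A (n+1))^be) * (A (n+1))^be := by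
        calc ((c * ((n:ℝ)+1)^m)^al - (A (n+1))^al) * (A (n+1))^be
            = (c * ((n:ℝ)+1)^m)^al * (A (n+1))^be - (A (n+1))^al * (A (n+1))^be := by
              ring
          _ ≤ (c * ((n:ℝ)+1)^m)^be * (A (n+1))^al - (A (n+1))^al*(A (n+1))^be := by
              linarith only [hg1]
          _ = ((c * ((n:ℝ)+1)^m)^be - (A (n+1))^be) * (A (n+1))^al := by ring
          _ < ((c * ((n:ℝ)+1)^m)^be - (A (n+1))^be) * (D * (A (n+1))^be) := by
              apply mul_lt_mul_of_pos_left hg2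
              linarith only [hg3]
          _ = D*((c * ((n:ℝ)+1)^m)^be - (A (n+1))^be) * (A (n+1))^be := by ring
      have hfin2 : (c * ((n:ℝ)+1)^m)^al - (A (n+1))^al <
          D*((c * ((n:ℝ)+1)^m)^be - (A (n+1))^be) :=
        lt_of_mul_lt_mul_right hfin hybe.le
      linarith only [hcontr1, hfin2]
  -- conclude
  intro k hk
  rw [← hprdef, ← hqdef, ← hmdef, ← hcdef]
  exact main k hk

set_option maxHeartbeats 1000000 in
/-- for sequences generated by Algorithm I (with `v0 ≠ x*` when `p ≥ 2`),
`A_k ≥ (θ(1−σ²)^{(p−1)/2}/((p+1)^{(3p+1)/2}‖v0−x*‖^{p−1})) k^{(3p+1)/2}` for `k ≥ 1`. -/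
theorem stmt_11 (d p : ℕ) (hd : 1 ≤ d) (hp : 1 ≤ p)
    (Φ : EuclideanSpace ℝ (Fin d) → ℝ)
    (hconv : ConvexOn ℝ Set.univ Φ) (hsmooth : ContDiff ℝ 2 Φ)
    (σ θ : ℝ) (hσ : σ ∈ Set.Ioo (0:ℝ) 1) (hθ : 0 < θ)
    (xstar : EuclideanSpace ℝ (Fin d)) (hstar : ∀ y, Φ xstar ≤ Φ y)
    (x v w vt : ℕ → EuclideanSpace ℝ (Fin d)) (A eps lam a : ℕ → ℝ)
    -- x* is the projection of v0 onto the set of minimizers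
    (hproj : ∀ z : EuclideanSpace ℝ (Fin d), (∀ y, Φ z ≤ Φ y) → ‖v 0 - xstar‖ ≤ ‖v 0 - z‖)
    -- Algorithm I
    (hA0 : A 0 = 0)
    (hapos : ∀ k : ℕ, 0 < a (k+1)) (hlampos : ∀ k : ℕ, 0 < lam (k+1))
    (hepsnn : ∀ k : ℕ, 0 ≤ eps (k+1))
    (haA : ∀ k : ℕ, (a (k+1)) ^ 2 = lam (k+1) * (A k + a (k+1)))
    (hA : ∀ k : ℕ, A (k+1) = A k + a (k+1))
    (hvt : ∀ k : ℕ, vt k = (A k / A (k+1)) • x k + (a (k+1) / A (k+1)) • v k)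
    (hw : ∀ k : ℕ, ∀ y : EuclideanSpace ℝ (Fin d),
      Φ (x (k+1)) + ⟪y - x (k+1), w (k+1)⟫ - eps (k+1) ≤ Φ y)
    (herr : ∀ k : ℕ,
      ‖lam (k+1) • w (k+1) + x (k+1) - vt k‖ ^ 2 + 2 * lam (k+1) * eps (k+1) ≤
        σ ^ 2 * ‖x (k+1) - vt k‖ ^ 2)
    (hls : ∀ k : ℕ, θ ≤ lam (k+1) * ‖x (k+1) - vt k‖ ^ (p - 1))
    (hv : ∀ k : ℕ, v (k+1) = v k - a (k+1) • w (k+1))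
    -- extra assumption for p ≥ 2
    (hne : 2 ≤ p → v 0 ≠ xstar) :
    ∀ k : ℕ, 1 ≤ k →
      (θ * (1 - σ ^ 2) ^ (((p:ℝ) - 1) / 2) /
          (((p:ℝ) + 1) ^ ((3 * (p:ℝ) + 1) / 2) * ‖v 0 - xstar‖ ^ (p - 1))) *
        (k:ℝ) ^ ((3 * (p:ℝ) + 1) / 2) ≤ A k := by
  have hAnn : ∀ k : ℕ, 0 ≤ A k := by
    intro k
    induction k with
    | zero => rw [hA0]
    | succ n ih => rw [hA n]; have := hapos n; linarith
  have hA1pos : ∀ k : ℕ, 0 < A (k+1) := by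
    intro k; rw [hA k]; have := hapos k; have := hAnn k; linarith
  have h1σ : 0 < 1 - σ^2 := by nlinarith [hσ.1, hσ.2]
  set E : ℕ → ℝ := fun k => A k * (Φ (x k) - Φ xstar) + ‖v k - xstar‖^2/2 with hE
  set T : ℕ → ℝ := fun j =>
    (1 - σ^2) * (A (j+1) / (2 * lam (j+1))) * ‖x (j+1) - vt j‖^2 with hT
  have step : ∀ k : ℕ, E (k+1) + T k ≤ E k := by
    intro k
    rw [hT]
    have hl1 := hlampos k
    have ha1 := hapos k
    have hA1 := hA1pos k
    set P := ⟪x k - x (k+1), w (k+1)⟫ with hP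
    set Q := ⟪xstar - x (k+1), w (k+1)⟫ with hQ
    set Tv := ⟪v k - xstar, w (k+1)⟫ with hTv
    set G := ⟪vt k - x (k+1), w (k+1)⟫ with hG
    set W := ‖w (k+1)‖^2 with hW
    have hsmul : A (k+1) • vt k = A k • x k + a (k+1) • v k := by
      rw [hvt k, smul_add, smul_smul, smul_smul,
        mul_div_cancel₀ _ (ne_of_gt hA1), mul_div_cancel₀ _ (ne_of_gt hA1)]
    have hvec : A k • (x k - x (k+1)) + a (k+1) • (xstar - x (k+1)) =
        A (k+1) • (vt k - x (k+1)) - a (k+1) • (v k - xstar) := by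
      rw [smul_sub, smul_sub, smul_sub, smul_sub, hsmul]
      rw [hA k, add_smul]
      abel
    have hPQ : A k * P + a (k+1) * Q = A (k+1) * G - a (k+1) * Tv := by
      have h := congrArg (fun z => ⟪z, w (k+1)⟫) hvec
      simp only [inner_add_left, inner_sub_left, real_inner_smul_left] at h
      rw [hP, hQ, hG, hTv]
      simp only [inner_sub_left]
      exact h
    have h4 : ‖v (k+1) - xstar‖^2 = ‖v k - xstar‖^2 - 2 * a (k+1) * Tv
        + lam (k+1) * A (k+1) * W := by
      have haA' : a (k+1) ^ 2 = lam (k+1) * A (k+1) := by rw [haA k, ← hA k]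
      rw [hv k, sub_right_comm, norm_sub_sq_real, real_inner_smul_right, norm_smul]
      simp only [Real.norm_eq_abs, mul_pow, sq_abs]
      rw [haA', hTv]; ring
    have h3 : ‖x (k+1) - vt k‖^2 + 2 * lam (k+1) * (-G) + lam (k+1)^2 * W
        + 2 * lam (k+1) * eps (k+1) ≤ σ^2 * ‖x (k+1) - vt k‖^2 := by
      have h := herr k
      rw [add_sub_assoc, add_comm, norm_add_sq_real, real_inner_smul_left,
        norm_smul] at h
      simp only [Real.norm_eq_abs, mul_pow, sq_abs] at h
      have hxg : ⟪w (k+1), x (k+1) - vt k⟫ = -G := by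
        rw [real_inner_comm, hG, ← inner_neg_left, neg_sub]
      rw [hxg, ← hW] at h
      linarith
    have hw1 := hw k (x k)
    have hw2 := hw k xstar
    -- multiply hw1 by A k ≥ 0, hw2 by a (k+1) > 0
    have F1 : A k * (Φ (x (k+1)) + P - eps (k+1)) ≤ A k * Φ (x k) :=
      mul_le_mul_of_nonneg_left (hw k (x k)) (hAnn k)
    have F2 : a (k+1) * (Φ (x (k+1)) + Q - eps (k+1)) ≤ a (k+1) * Φ xstar :=
      mul_le_mul_of_nonneg_left (hw k xstar) (le_of_lt ha1)
    have hcan : A (k+1) / (2 * lam (k+1)) * (2 * lam (k+1) * G - lam (k+1)^2 * W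
        - 2 * lam (k+1) * eps (k+1))
        = A (k+1) * G - lam (k+1) * A (k+1) * W / 2 - A (k+1) * eps (k+1) := by
      field_simp
    have F5 : (1 - σ^2) * (A (k+1) / (2 * lam (k+1))) * ‖x (k+1) - vt k‖^2 ≤
        A (k+1) * G - lam (k+1) * A (k+1) * W / 2 - A (k+1) * eps (k+1) := by
      rw [← hcan]
      have h3' : (1 - σ^2) * ‖x (k+1) - vt k‖^2 ≤
          2 * lam (k+1) * G - lam (k+1)^2 * W - 2 * lam (k+1) * eps (k+1) := by
        linarith
      calc (1 - σ^2) * (A (k+1) / (2 * lam (k+1))) * ‖x (k+1) - vt k‖^2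
          = A (k+1) / (2 * lam (k+1)) * ((1 - σ^2) * ‖x (k+1) - vt k‖^2) := by ring
        _ ≤ _ := mul_le_mul_of_nonneg_left h3' (by positivity)
    have e1 : A (k+1) * Φ (x (k+1)) = A k * Φ (x (k+1)) + a (k+1) * Φ (x (k+1)) := by
      rw [hA k]; ring
    have e2 : A (k+1) * Φ xstar = A k * Φ xstar + a (k+1) * Φ xstar := by
      rw [hA k]; ring
    have e3 : A (k+1) * eps (k+1) = A k * eps (k+1) + a (k+1) * eps (k+1) := by
      rw [hA k]; ring
    show A (k+1) * (Φ (x (k+1)) - Φ xstar) + ‖v (k+1) - xstar‖^2/2 + _ ≤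
      A k * (Φ (x k) - Φ xstar) + ‖v k - xstar‖^2/2
    linarith [F1, F2, hPQ, h4, F5, e1, e2, e3]
  have hEnn : ∀ k, 0 ≤ E k := by
    intro k
    have h1 : 0 ≤ A k * (Φ (x k) - Φ xstar) :=
      mul_nonneg (hAnn k) (by linarith [hstar (x k)])
    have h2 : 0 ≤ ‖v k - xstar‖^2/2 := by positivity
    rw [hE]; exact add_nonneg h1 h2
  have hE0 : E 0 = ‖v 0 - xstar‖^2/2 := by rw [hE]; simp [hA0]
  have hsum : ∀ k, E k + ∑ j ∈ Finset.range k, T j ≤ E 0 := by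
    intro k
    induction k with
    | zero => simp
    | succ n ih =>
      rw [Finset.sum_range_succ]
      have := step n
      linarith
  have hMs : ∀ k, ∑ j ∈ Finset.range k, (A (j+1)/lam (j+1)) * ‖x (j+1) - vt j‖^2 ≤
      ‖v 0 - xstar‖^2/(1-σ^2) := by
    intro k
    have hs := hsum k
    rw [hE0] at hs
    have hEk := hEnn k
    have key : ∑ j ∈ Finset.range k, (A (j+1)/lam (j+1)) * ‖x (j+1) - vt j‖^2 =
        (2/(1-σ^2)) * ∑ j ∈ Finset.range k, T j := by
      rw [Finset.mul_sum]
      apply Finset.sum_congr rfl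
      intro j _
      rw [hT]
      have := hlampos j
      field_simp
    rw [key]
    calc (2/(1-σ^2)) * ∑ j ∈ Finset.range k, T j
        ≤ (2/(1-σ^2)) * (‖v 0 - xstar‖^2/2) := by
          exact mul_le_mul_of_nonneg_left
            (le_trans (le_add_of_nonneg_left hEk) hs) (by positivity)
      _ = ‖v 0 - xstar‖^2/(1-σ^2) := by field_simp
  have hsqrt : ∀ k, ∑ j ∈ Finset.range k, Real.sqrt (lam (j+1)) ≤ 2 * Real.sqrt (A k) := by
    intro k
    induction k with
    | zero => simp
    | succ n ih =>
      rw [Finset.sum_range_succ]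
      have hA1 := hA1pos n
      have haA' : a (n+1)^2 = lam (n+1) * A (n+1) := by rw [haA n, ← hA n]
      have ha1 : a (n+1) = Real.sqrt (lam (n+1)) * Real.sqrt (A (n+1)) := by
        rw [← Real.sqrt_mul (le_of_lt (hlampos n)), ← haA',
          Real.sqrt_sq (le_of_lt (hapos n))]
      have hsq1 : Real.sqrt (A (n+1))^2 = A (n+1) := Real.sq_sqrt (le_of_lt hA1)
      have hsq0 : Real.sqrt (A n)^2 = A n := Real.sq_sqrt (hAnn n)
      have hle : Real.sqrt (A n) ≤ Real.sqrt (A (n+1)) :=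
        Real.sqrt_le_sqrt (by rw [hA n]; linarith [hapos n])
      have hpos : 0 < Real.sqrt (A (n+1)) := Real.sqrt_pos.2 hA1
      have hdiff : Real.sqrt (A (n+1))^2 - Real.sqrt (A n)^2 =
          Real.sqrt (lam (n+1)) * Real.sqrt (A (n+1)) := by
        rw [hsq1, hsq0, ← ha1]
        rw [hA n]; ring
      have h1 : Real.sqrt (A n) + Real.sqrt (lam (n+1)) / 2 ≤ Real.sqrt (A (n+1)) := by
        nlinarith [sq_nonneg (Real.sqrt (A (n+1)) - Real.sqrt (A n)), hpos,
          Real.sqrt_nonneg (A n)]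
      linarith
  -- ### case split on p
  by_cases hp2 : 2 ≤ p
  · -- ### p ≥ 2: apply growth_aux
    have hR : (0:ℝ) < ‖v 0 - xstar‖ := by
      rw [norm_pos_iff, sub_ne_zero]; exact hne hp2
    have hA1lam : A 1 = lam 1 := by
      have h0 := haA 0
      rw [hA0] at h0
      simp only [zero_add] at h0
      have h1 : a 1 * a 1 = lam 1 * a 1 := by rw [← sq]; exact h0
      have h2 := mul_right_cancel₀ (ne_of_gt (hapos 0)) h1
      have h3 := hA 0
      rw [hA0] at h3
      simp only [zero_add] at h3
      rw [h3, h2]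
    have hmono : ∀ n : ℕ, A 1 ≤ A (n+1) := by
      intro n
      induction n with
      | zero => exact le_refl _
      | succ n ih =>
        rw [hA (n+1)]
        have := hapos (n+1)
        linarith
    have hmain := growth_aux p hp hp2 θ ‖v 0 - xstar‖ (1 - σ^2) hθ h1σ hR
      A lam (fun j => ‖x (j+1) - vt j‖) hAnn hA1pos hlampos
      (fun j => norm_nonneg _) hA1lam hmono (fun j => hls j) hMs hsqrt
    intro k hk
    have h := hmain k hk
    have hcast1 : ((p - 1 : ℕ):ℝ) = (p:ℝ) - 1 := by
      rw [Nat.cast_sub hp]; norm_num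
    have hRp : ‖v 0 - xstar‖ ^ (p-1) = ‖v 0 - xstar‖ ^ ((p:ℝ) - 1) := by
      rw [← Real.rpow_natCast ‖v 0 - xstar‖ (p-1), hcast1]
    rw [hRp]
    exact h
  · -- p = 1
    have hp1 : p = 1 := by omega
    subst hp1
    intro k hk
    have hlθ : ∀ j : ℕ, Real.sqrt θ ≤ Real.sqrt (lam (j+1)) := by
      intro j
      apply Real.sqrt_le_sqrt
      have := hls j
      simpa using this
    have h1 : (k:ℝ) * Real.sqrt θ ≤ ∑ j ∈ Finset.range k, Real.sqrt (lam (j+1)) := by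
      calc (k:ℝ) * Real.sqrt θ = ∑ _j ∈ Finset.range k, Real.sqrt θ := by
            rw [Finset.sum_const, Finset.card_range, nsmul_eq_mul]
        _ ≤ _ := Finset.sum_le_sum fun j _ => hlθ j
    have h2 : (k:ℝ) * Real.sqrt θ ≤ 2 * Real.sqrt (A k) := h1.trans (hsqrt k)
    have h3 : ((k:ℝ) * Real.sqrt θ)^2 ≤ (2 * Real.sqrt (A k))^2 := by
      apply pow_le_pow_left₀ (by positivity) h2
    rw [mul_pow, mul_pow, Real.sq_sqrt hθ.le, Real.sq_sqrt (hAnn k)] at h3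
    have e1 : (3 * ((1:ℕ):ℝ) + 1)/2 = 2 := by norm_num
    have e2 : ((((1:ℕ):ℝ)) - 1)/2 = 0 := by norm_num
    rw [e1, e2, Real.rpow_zero]
    have ecast : (2:ℝ) = ((2:ℕ):ℝ) := by norm_num
    have e4 : (((1:ℕ):ℝ) + 1)^(2:ℝ) = 4 := by
      rw [ecast, Real.rpow_natCast]; norm_num
    have e5 : (k:ℝ)^(2:ℝ) = (k:ℝ)^(2:ℕ) := by
      rw [ecast, Real.rpow_natCast]
    rw [e4, e5]
    norm_num
    nlinarith [h3]
end

section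
/- Suppose the sequences are generated by Algorithm II. Then for every integer k ≥ 1: ((1 − σ²)/2)·Σ_{i=1}^k (1/(λ_i γ_i))‖x_i − ṽ_{i−1}‖² ≤ E_0 − E_k. In particular, Φ(x_k) − Φ(x*) ≤ γ_k·E_0, ‖v_k − x*‖ ≤ √(2E_0), and Σ_{i=1}^k (1/(λ_i γ_i))‖x_i − ṽ_{i−1}‖² ≤ 2E_0/(1 − σ²). -/
open scoped RealInnerProductSpace

set_option maxHeartbeats 1000000

/-- for sequences generated by Algorithm II, for every `k ≥ 1`,
`((1−σ²)/2) Σ_{i=1}^k (1/(λ_i γ_i))‖x_i − ṽ_{i−1}‖² ≤ E_0 − E_k`; in particular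
`Φ(x_k) − Φ(x*) ≤ γ_k E_0`, `‖v_k − x*‖ ≤ √(2E_0)` and the sum is `≤ 2E_0/(1−σ²)`. -/
theorem stmt_13 (d p : ℕ) (hd : 1 ≤ d) (hp : 1 ≤ p)
    (Φ : EuclideanSpace ℝ (Fin d) → ℝ)
    (hconv : ConvexOn ℝ Set.univ Φ) (hsmooth : ContDiff ℝ 2 Φ)
    (σ θ : ℝ) (hσ : σ ∈ Set.Ioo (0:ℝ) 1) (hθ : 0 < θ)
    (xstar : EuclideanSpace ℝ (Fin d)) (hstar : ∀ y, Φ xstar ≤ Φ y)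
    (x v w vt : ℕ → EuclideanSpace ℝ (Fin d)) (γ eps lam α E : ℕ → ℝ)
    (hproj : ∀ z : EuclideanSpace ℝ (Fin d), (∀ y, Φ z ≤ Φ y) → ‖v 0 - xstar‖ ≤ ‖v 0 - z‖)
    -- Algorithm II
    (hγ0 : γ 0 = 1) (hγpos : ∀ k : ℕ, 0 < γ k)
    (hlampos : ∀ k : ℕ, 0 < lam (k+1)) (hepsnn : ∀ k : ℕ, 0 ≤ eps (k+1))
    (hα : ∀ k : ℕ, α (k+1) ∈ Set.Ioo (0:ℝ) 1)
    (hαeq : ∀ k : ℕ, (α (k+1)) ^ 2 = lam (k+1) * ((1 - α (k+1)) * γ k))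
    (hγ : ∀ k : ℕ, γ (k+1) = (1 - α (k+1)) * γ k)
    (hvt : ∀ k : ℕ, vt k = (1 - α (k+1)) • x k + α (k+1) • v k)
    (hw : ∀ k : ℕ, ∀ y : EuclideanSpace ℝ (Fin d),
      Φ (x (k+1)) + ⟪y - x (k+1), w (k+1)⟫ - eps (k+1) ≤ Φ y)
    (herr : ∀ k : ℕ,
      ‖lam (k+1) • w (k+1) + x (k+1) - vt k‖ ^ 2 + 2 * lam (k+1) * eps (k+1) ≤
        σ ^ 2 * ‖x (k+1) - vt k‖ ^ 2)
    (hls : ∀ k : ℕ, θ ≤ lam (k+1) * ‖x (k+1) - vt k‖ ^ (p - 1))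
    (hv : ∀ k : ℕ, v (k+1) = v k - (α (k+1) / γ (k+1)) • w (k+1))
    -- discrete Lyapunov function
    (hE : ∀ k : ℕ, E k = (1 / γ k) * (Φ (x k) - Φ xstar) + (1/2) * ‖v k - xstar‖ ^ 2) :
    ∀ k : ℕ, 1 ≤ k →
      ((1 - σ ^ 2) / 2) *
          (∑ i ∈ Finset.Icc 1 k, (1 / (lam i * γ i)) * ‖x i - vt (i - 1)‖ ^ 2) ≤
        E 0 - E k ∧
      Φ (x k) - Φ xstar ≤ γ k * E 0 ∧
      ‖v k - xstar‖ ≤ Real.sqrt (2 * E 0) ∧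
      (∑ i ∈ Finset.Icc 1 k, (1 / (lam i * γ i)) * ‖x i - vt (i - 1)‖ ^ 2) ≤
        2 * E 0 / (1 - σ ^ 2) := by
  obtain ⟨hσ0, hσ1⟩ := hσ
  -- one-step Lyapunov decrease
  have key : ∀ k : ℕ,
      E (k+1) + ((1 - σ^2)/2) * ((1/(lam (k+1) * γ (k+1))) * ‖x (k+1) - vt k‖^2) ≤ E k := by
    intro k
    obtain ⟨ha0, ha1⟩ := hα k
    have hg : 0 < γ k := hγpos k
    have hg' : 0 < γ (k+1) := hγpos (k+1)
    have hl : 0 < lam (k+1) := hlampos k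
    have he : 0 ≤ eps (k+1) := hepsnn k
    have hge : γ (k+1) = (1 - α (k+1)) * γ k := hγ k
    have ha2 : α (k+1)^2 = lam (k+1) * γ (k+1) := by rw [hαeq k, hγ k]
    have hgne : γ k ≠ 0 := ne_of_gt hg
    have hg'ne : γ (k+1) ≠ 0 := ne_of_gt hg'
    have hlne : lam (k+1) ≠ 0 := ne_of_gt hl
    have h1ane : (1:ℝ) - α (k+1) ≠ 0 := ne_of_gt (by linarith)
    have hβpos : 0 < α (k+1) / γ (k+1) := div_pos ha0 hg'
    -- v-step norm expansion
    have hvstep : v (k+1) - xstar = (v k - xstar) - (α (k+1) / γ (k+1)) • w (k+1) := by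
      rw [hv k]; abel
    have hnv : ‖v (k+1) - xstar‖^2
        = ‖v k - xstar‖^2 - 2*((α (k+1) / γ (k+1)) * ⟪v k - xstar, w (k+1)⟫)
          + (α (k+1) / γ (k+1))^2 * ‖w (k+1)‖^2 := by
      rw [hvstep, norm_sub_sq_real, real_inner_smul_right, norm_smul, mul_pow,
        Real.norm_eq_abs, sq_abs]
    -- subgradient inequalities
    have hi1 : ⟪x k - x (k+1), w (k+1)⟫ = -⟪x (k+1) - x k, w (k+1)⟫ := by
      rw [← inner_neg_left]; congr 1; abel
    have hsub1 : Φ (x (k+1)) - Φ (x k) ≤ ⟪x (k+1) - x k, w (k+1)⟫ + eps (k+1) := by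
      have h := hw k (x k); rw [hi1] at h; linarith
    have hi2 : ⟪xstar - x (k+1), w (k+1)⟫ = -⟪x (k+1) - xstar, w (k+1)⟫ := by
      rw [← inner_neg_left]; congr 1; abel
    have hsub2 : Φ (x (k+1)) - Φ xstar ≤ ⟪x (k+1) - xstar, w (k+1)⟫ + eps (k+1) := by
      have h := hw k xstar; rw [hi2] at h; linarith
    -- inner product identities
    have hTid : x (k+1) - vt k
        = (1 - α (k+1)) • (x (k+1) - x k) + α (k+1) • (x (k+1) - v k) := by
      rw [hvt k]; module
    have hs4 : ⟪x (k+1) - vt k, w (k+1)⟫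
        = (1 - α (k+1)) * ⟪x (k+1) - x k, w (k+1)⟫
          + α (k+1) * ⟪x (k+1) - v k, w (k+1)⟫ := by
      rw [hTid, inner_add_left, real_inner_smul_left, real_inner_smul_left]
    have hsXV : ⟪x (k+1) - v k, w (k+1)⟫
        = ⟪x (k+1) - xstar, w (k+1)⟫ - ⟪v k - xstar, w (k+1)⟫ := by
      rw [← inner_sub_left]; congr 1; abel
    -- error bound expansion
    have hT : lam (k+1) • w (k+1) + x (k+1) - vt k
        = lam (k+1) • w (k+1) + (x (k+1) - vt k) := by abel
    have hexp : ‖lam (k+1) • w (k+1) + x (k+1) - vt k‖^2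
        = (lam (k+1))^2 * ‖w (k+1)‖^2
          + 2*(lam (k+1) * ⟪x (k+1) - vt k, w (k+1)⟫) + ‖x (k+1) - vt k‖^2 := by
      rw [hT, norm_add_sq_real, real_inner_smul_left,
        real_inner_comm (w (k+1)) (x (k+1) - vt k), norm_smul, mul_pow,
        Real.norm_eq_abs, sq_abs]
    have herr' := herr k
    rw [hexp] at herr'
    have hkey4 : 2*(lam (k+1)) * ⟪x (k+1) - vt k, w (k+1)⟫
        + (lam (k+1))^2 * ‖w (k+1)‖^2 + 2*(lam (k+1)) * eps (k+1)
        ≤ -(1 - σ^2) * ‖x (k+1) - vt k‖^2 := by linarith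
    -- scalar facts
    have hinv : (1:ℝ)/γ (k+1) = 1/γ k + α (k+1) / γ (k+1) := by
      rw [hge]; field_simp; ring
    have hβ2 : (α (k+1) / γ (k+1))^2 = lam (k+1) / γ (k+1) := by
      rw [div_pow, ha2]; field_simp
    -- main chain
    have hd1 : (1/γ (k+1))*(Φ (x (k+1)) - Φ xstar)
        ≤ (1/γ k)*(Φ (x k) - Φ xstar)
          + (1/γ k)*(⟪x (k+1) - x k, w (k+1)⟫ + eps (k+1))
          + (α (k+1)/γ (k+1))*(⟪x (k+1) - xstar, w (k+1)⟫ + eps (k+1)) := by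
      have e1 : (1/γ k)*(Φ (x (k+1)) - Φ (x k))
          ≤ (1/γ k)*(⟪x (k+1) - x k, w (k+1)⟫ + eps (k+1)) :=
        mul_le_mul_of_nonneg_left hsub1 (by positivity)
      have e2 : (α (k+1)/γ (k+1))*(Φ (x (k+1)) - Φ xstar)
          ≤ (α (k+1)/γ (k+1))*(⟪x (k+1) - xstar, w (k+1)⟫ + eps (k+1)) :=
        mul_le_mul_of_nonneg_left hsub2 hβpos.le
      calc (1/γ (k+1))*(Φ (x (k+1)) - Φ xstar)
          = (1/γ k)*(Φ (x k) - Φ xstar) + (1/γ k)*(Φ (x (k+1)) - Φ (x k))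
            + (α (k+1)/γ (k+1))*(Φ (x (k+1)) - Φ xstar) := by rw [hinv]; ring
        _ ≤ _ := by linarith
    have hcomb : (1/γ (k+1))*⟪x (k+1) - vt k, w (k+1)⟫
        = (1/γ k)*⟪x (k+1) - x k, w (k+1)⟫
          + (α (k+1)/γ (k+1))*(⟪x (k+1) - xstar, w (k+1)⟫ - ⟪v k - xstar, w (k+1)⟫) := by
      rw [hs4, hsXV, hge]; field_simp
    have hinve : (1/γ k)*eps (k+1) + (α (k+1)/γ (k+1))*eps (k+1)
        = (1/γ (k+1))*eps (k+1) := by rw [hinv]; ring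
    have hβ2n : (1/2)*((α (k+1)/γ (k+1))^2 * ‖w (k+1)‖^2)
        = (lam (k+1)/(2*γ (k+1)))*‖w (k+1)‖^2 := by rw [hβ2]; ring
    have hmul := mul_le_mul_of_nonneg_left hkey4
      (le_of_lt (show (0:ℝ) < 1/(2*lam (k+1)*γ (k+1)) by positivity))
    have hq1 : (1/(2*lam (k+1)*γ (k+1))) * (2*(lam (k+1)) * ⟪x (k+1) - vt k, w (k+1)⟫
          + (lam (k+1))^2 * ‖w (k+1)‖^2 + 2*(lam (k+1)) * eps (k+1))
        = (1/γ (k+1))*⟪x (k+1) - vt k, w (k+1)⟫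
          + (lam (k+1)/(2*γ (k+1)))*‖w (k+1)‖^2 + (1/γ (k+1))*eps (k+1) := by
      field_simp
    have hq2 : (1/(2*lam (k+1)*γ (k+1))) * (-(1 - σ^2) * ‖x (k+1) - vt k‖^2)
        = -(((1 - σ^2)/2) * ((1/(lam (k+1) * γ (k+1))) * ‖x (k+1) - vt k‖^2)) := by
      field_simp
    rw [hq1, hq2] at hmul
    rw [hE (k+1), hE k, hnv]
    linarith
  -- telescoping
  have tele : ∀ k : ℕ,
      ((1 - σ^2)/2) * (∑ i ∈ Finset.Icc 1 k, (1/(lam i * γ i)) * ‖x i - vt (i-1)‖^2)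
        ≤ E 0 - E k := by
    intro k
    induction k with
    | zero => simp
    | succ n ih =>
      rw [Finset.sum_Icc_succ_top (by omega : 1 ≤ n + 1)]
      have hk := key n
      have hnn : (n + 1 : ℕ) - 1 = n := by omega
      rw [hnn]
      linarith
  have hEnn : ∀ k : ℕ, 0 ≤ E k := by
    intro k
    rw [hE k]
    have h1 : 0 ≤ Φ (x k) - Φ xstar := by linarith [hstar (x k)]
    have h2 := hγpos k
    have : 0 ≤ (1/γ k) * (Φ (x k) - Φ xstar) := mul_nonneg (by positivity) h1
    nlinarith [sq_nonneg ‖v k - xstar‖]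
  have hsumnn : ∀ k : ℕ,
      0 ≤ ∑ i ∈ Finset.Icc 1 k, (1/(lam i * γ i)) * ‖x i - vt (i-1)‖^2 := by
    intro k
    apply Finset.sum_nonneg
    intro i hi
    have hi1 : 1 ≤ i := (Finset.mem_Icc.mp hi).1
    have hli : 0 < lam i := by
      have := hlampos (i-1); rwa [Nat.sub_add_cancel hi1] at this
    have hgi := hγpos i
    positivity
  have hσ2 : 0 < 1 - σ^2 := by nlinarith
  intro k hk
  have htk := tele k
  have hEk := hEnn k
  have hSk := hsumnn k
  have hEkE0 : E k ≤ E 0 := by nlinarith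
  have hhalf : (1/2)*‖v k - xstar‖^2 ≤ E k := by
    rw [hE k]
    have h1 : 0 ≤ Φ (x k) - Φ xstar := by linarith [hstar (x k)]
    have hg := hγpos k
    have : 0 ≤ (1/γ k) * (Φ (x k) - Φ xstar) := mul_nonneg (by positivity) h1
    linarith
  refine ⟨htk, ?_, ?_, ?_⟩
  · have h1 : (1/γ k) * (Φ (x k) - Φ xstar) ≤ E k := by
      rw [hE k]
      have hnn : 0 ≤ (1/2) * ‖v k - xstar‖^2 := by positivity
      linarith
    have h2 : (1/γ k) * (Φ (x k) - Φ xstar) ≤ E 0 := le_trans h1 hEkE0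
    have hg := hγpos k
    calc Φ (x k) - Φ xstar = γ k * ((1/γ k) * (Φ (x k) - Φ xstar)) := by
          field_simp
      _ ≤ γ k * E 0 := mul_le_mul_of_nonneg_left h2 hg.le
  · have h1 : ‖v k - xstar‖^2 ≤ 2 * E 0 := by linarith
    calc ‖v k - xstar‖ = Real.sqrt (‖v k - xstar‖^2) := by
          rw [Real.sqrt_sq (norm_nonneg _)]
      _ ≤ Real.sqrt (2 * E 0) := Real.sqrt_le_sqrt h1
  · rw [le_div_iff₀ hσ2]
    linarith
end

section
/- Let (γ_k)_{k≥0}, (λ_k)_{k≥1}, (α_k)_{k≥1} be sequences of reals with γ_0 = 1, γ_k > 0, λ_k > 0, α_k ∈ (0,1), satisfying γ_{k+1} = (1 − α_{k+1})γ_k and α_{k+1}² = λ_{k+1}γ_{k+1} for every k ≥ 0. Then for every k ≥ 0: 1/√(γ_{k+1}) ≥ 1/√(γ_k) + (1/2)√(λ_{k+1}); consequently, for every k ≥ 0: γ_k ≤ (1 + (1/2)Σ_{j=1}^k √(λ_j))^{−2}. -/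
/-- if `γ_0 = 1`, `γ_k > 0`, `λ_k > 0`, `α_k ∈ (0,1)`,
`γ_{k+1} = (1 − α_{k+1})γ_k` and `α_{k+1}² = λ_{k+1}γ_{k+1}`, then
`1/√γ_{k+1} ≥ 1/√γ_k + (1/2)√λ_{k+1}` for all `k ≥ 0`; consequently
`γ_k ≤ (1 + (1/2)Σ_{j=1}^k √λ_j)^{−2}` for all `k ≥ 0`. -/
theorem stmt_14 (γ lam α : ℕ → ℝ)
    (hγ0 : γ 0 = 1) (hγpos : ∀ k : ℕ, 0 < γ k)
    (hlampos : ∀ k : ℕ, 0 < lam (k+1))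
    (hα : ∀ k : ℕ, α (k+1) ∈ Set.Ioo (0:ℝ) 1)
    (hγ : ∀ k : ℕ, γ (k+1) = (1 - α (k+1)) * γ k)
    (hαeq : ∀ k : ℕ, (α (k+1)) ^ 2 = lam (k+1) * γ (k+1)) :
    (∀ k : ℕ, 1 / Real.sqrt (γ k) + (1/2) * Real.sqrt (lam (k+1)) ≤
      1 / Real.sqrt (γ (k+1))) ∧
    ∀ k : ℕ, γ k ≤ ((1 + (1/2) * ∑ j ∈ Finset.Icc 1 k, Real.sqrt (lam j)) ^ 2)⁻¹ := by
  have key : ∀ k : ℕ, 1 / Real.sqrt (γ k) + (1/2) * Real.sqrt (lam (k+1)) ≤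
      1 / Real.sqrt (γ (k+1)) := by
    intro k
    set a := Real.sqrt (γ k) with ha
    set b := Real.sqrt (γ (k+1)) with hb
    set s := Real.sqrt (lam (k+1)) with hs
    have hapos : 0 < a := Real.sqrt_pos.mpr (hγpos k)
    have hbpos : 0 < b := Real.sqrt_pos.mpr (hγpos (k+1))
    have hspos : 0 < s := Real.sqrt_pos.mpr (hlampos k)
    have ha2 : a ^ 2 = γ k := Real.sq_sqrt (hγpos k).le
    have hb2 : b ^ 2 = γ (k+1) := Real.sq_sqrt (hγpos (k+1)).le
    have hs2 : s ^ 2 = lam (k+1) := Real.sq_sqrt (hlampos k).le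
    -- α (k+1) = s * b
    have hαsb : α (k+1) = s * b := by
      have h1 : (α (k+1)) ^ 2 = (s * b) ^ 2 := by
        rw [hαeq k, mul_pow, hs2, hb2]
      have h2 : 0 < α (k+1) := (hα k).1
      nlinarith [mul_pos hspos hbpos]
    have hrec : b ^ 2 = (1 - s * b) * a ^ 2 := by
      rw [ha2, hb2, hγ k, hαsb]
    have hba : b ≤ a := by
      nlinarith [(hα k).2, mul_pos hspos hbpos]
    rw [div_add' _ _ _ (ne_of_gt hapos), div_le_div_iff₀ hapos hbpos]
    nlinarith [mul_pos hapos hbpos, mul_pos hspos (mul_pos hapos hbpos),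
      mul_pos (mul_pos hspos hbpos) (mul_pos hapos hbpos)]
  refine ⟨key, ?_⟩
  have lower : ∀ k : ℕ, 1 + (1/2) * ∑ j ∈ Finset.Icc 1 k, Real.sqrt (lam j) ≤
      1 / Real.sqrt (γ k) := by
    intro k
    induction k with
    | zero => simp [hγ0]
    | succ n ih =>
      have hsum : ∑ j ∈ Finset.Icc 1 (n+1), Real.sqrt (lam j) =
          (∑ j ∈ Finset.Icc 1 n, Real.sqrt (lam j)) + Real.sqrt (lam (n+1)) := by
        rw [Finset.sum_Icc_succ_top (by omega : 1 ≤ n + 1)]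
      rw [hsum]
      have := key n
      linarith
  intro k
  have hpos : 0 < 1 + (1/2) * ∑ j ∈ Finset.Icc 1 k, Real.sqrt (lam j) := by
    have : 0 ≤ ∑ j ∈ Finset.Icc 1 k, Real.sqrt (lam j) :=
      Finset.sum_nonneg fun j _ => Real.sqrt_nonneg _
    linarith
  have hsq : (1 + (1/2) * ∑ j ∈ Finset.Icc 1 k, Real.sqrt (lam j)) ^ 2 ≤
      (1 / Real.sqrt (γ k)) ^ 2 := by
    apply pow_le_pow_left₀ hpos.le (lower k)
  have hγk : (1 / Real.sqrt (γ k)) ^ 2 = (γ k)⁻¹ := by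
    rw [div_pow, one_pow, Real.sq_sqrt (hγpos k).le, one_div]
  rw [hγk] at hsq
  have h2 : 0 < (1 + (1/2) * ∑ j ∈ Finset.Icc 1 k, Real.sqrt (lam j)) ^ 2 := by positivity
  rw [← inv_inv (γ k)]
  exact inv_anti₀ h2 hsq
end
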